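/- arXiv:1910.12289 — 12 statements merged into one kernel-verified Lean document; each statement's English description precedes it below -/
import Mathlib

section
/- Let λ > 1 be a real number, N ≥ 1 an integer, β_0 < β_1 < ⋯ < β_N real numbers, and c_0, …, c_N ∈ ℂ. If φ : ℝ → ℂ is integrable, compactly supported, not almost everywhere zero, and satisfies φ(x) = Σ_{k=0}^N c_k φ(λx − β_k) for almost every x ∈ ℝ, then |c_0| < λ and |c_N| < λ. -/
open MeasureTheory Filter

private lemma ae_comp_affine {P : ℝ → Prop} {a : ℝ} (ha : a ≠ 0) (b : ℝ)
    (h : ∀ᵐ y : ℝ, P y) : ∀ᵐ x : ℝ, P (a * x + b) := by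
  rw [Filter.eventually_iff, mem_ae_iff] at h ⊢
  have hs : {x : ℝ | P (a * x + b)}ᶜ
      = (a * ·) ⁻¹' ((fun y : ℝ => y + b) ⁻¹' {y | P y}ᶜ) := rfl
  rw [hs, Real.volume_preimage_mul_left ha, measure_preimage_add_right, h, mul_zero]

private lemma left_coeff_lt (lam : ℝ) (hlam : 1 < lam) (N : ℕ) (hN : 1 ≤ N)
    (β : Fin (N + 1) → ℝ) (hβ : StrictMono β) (c : Fin (N + 1) → ℂ)
    (φ : ℝ → ℂ) (hint : Integrable φ)
    (hsupp : ∃ R : ℝ, ∀ᵐ x : ℝ, R < |x| → φ x = 0)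
    (hne : ¬ φ =ᵐ[volume] 0)
    (heq : ∀ᵐ x : ℝ, φ x = ∑ k : Fin (N + 1), c k * φ (lam * x - β k)) :
    ‖c 0‖ < lam := by
  have hlam0 : (0:ℝ) < lam := lt_trans one_pos hlam
  have hlamne : lam ≠ 0 := ne_of_gt hlam0
  by_cases hc0 : c 0 = 0
  · simpa [hc0] using hlam0
  obtain ⟨R, hR⟩ := hsupp
  set S : Set ℝ := {t | ∀ᵐ x : ℝ, x < t → φ x = 0} with hSdef
  have hSne : S.Nonempty := by
    refine ⟨-(|R| + 1), ?_⟩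
    filter_upwards [hR] with x hx h
    refine hx ?_
    have h1 := le_abs_self R
    have h2 := neg_le_abs x
    linarith
  have hSbdd : BddAbove S := by
    refine ⟨|R| + 1, fun t ht => ?_⟩
    by_contra hlt
    push_neg at hlt
    apply hne
    filter_upwards [ht, hR] with x h1 h2
    rcases lt_or_ge x t with h | h
    · exact h1 h
    · refine h2 ?_
      have h3 := le_abs_self R
      have h4 := le_abs_self x
      linarith
  set L : ℝ := sSup S with hL
  have hP2 : ∀ t ∈ S, t ≤ L := fun t ht => le_csSup hSbdd ht
  have hP1 : ∀ᵐ x : ℝ, x < L → φ x = 0 := by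
    have hq : ∀ q : ℚ, ∀ᵐ x : ℝ, (q : ℝ) < L → x < q → φ x = 0 := by
      intro q
      by_cases hqL : (q : ℝ) < L
      · obtain ⟨t, htS, hqt⟩ := exists_lt_of_lt_csSup hSne hqL
        filter_upwards [htS] with x hx _ hxq
        exact hx (hxq.trans hqt)
      · filter_upwards with x hx
        exact absurd hx hqL
    filter_upwards [ae_all_iff.mpr hq] with x hx hxL
    obtain ⟨q, hq1, hq2⟩ := exists_rat_btwn hxL
    exact hx q hq2 hq1
  -- pull back hP1 through the affine maps x ↦ lam * x - β k
  have hpull : ∀ k : Fin (N + 1), ∀ᵐ x : ℝ,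
      lam * x - β k < L → φ (lam * x - β k) = 0 := by
    intro k
    have := ae_comp_affine (P := fun y => y < L → φ y = 0) hlamne (-(β k)) hP1
    simpa [sub_eq_add_neg] using this
  -- Step 1 : L ≥ β 0 / (lam - 1)
  have hstep1 : (L + β 0) / lam ≤ L := by
    apply hP2
    filter_upwards [heq, ae_all_iff.mpr hpull] with x hx hall hxlt
    rw [hx]
    apply Finset.sum_eq_zero
    intro k _
    have hβk : β 0 ≤ β k := hβ.monotone (Fin.zero_le k)
    have h2 : x * lam < L + β 0 := (lt_div_iff₀ hlam0).mp hxlt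
    rw [hall k (by linarith), mul_zero]
  have hstep1' : L + β 0 ≤ L * lam := (div_le_iff₀ hlam0).mp hstep1
  set k1 : Fin (N + 1) := ⟨1, by omega⟩ with hk1
  have hβ01 : β 0 < β k1 := hβ (by simp [hk1, Fin.lt_def])
  -- the reduced relation near the left edge
  have hrel : ∀ᵐ x : ℝ, x < (L + β k1) / lam → φ x = c 0 * φ (lam * x - β 0) := by
    filter_upwards [heq, ae_all_iff.mpr hpull] with x hx hall hxs
    rw [hx, Fin.sum_univ_succ]
    have hz : ∀ k : Fin N, c k.succ * φ (lam * x - β k.succ) = 0 := by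
      intro k
      have h1 : β k1 ≤ β k.succ := hβ.monotone (by simp [hk1, Fin.le_def])
      have h2 : x * lam < L + β k1 := (lt_div_iff₀ hlam0).mp hxs
      rw [hall k.succ (by linarith), mul_zero]
    rw [Finset.sum_eq_zero (fun k _ => hz k), add_zero]
  -- Step 3 : L ≤ β 0 / (lam - 1), hence lam * L - β 0 = L
  have hstep3 : lam * L - β 0 ≤ L := by
    by_contra hcon
    push_neg at hcon
    set m : ℝ := min L ((L + β k1) / lam) with hm
    have hml : lam * m - β 0 ≤ L := by
      apply hP2
      have base : ∀ᵐ x : ℝ, x < m → φ (lam * x - β 0) = 0 := by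
        filter_upwards [hrel, hP1] with x h1 h2 hxm
        have hz : φ x = 0 := h2 (lt_of_lt_of_le hxm (min_le_left _ _))
        have h3 := h1 (lt_of_lt_of_le hxm (min_le_right _ _))
        rw [hz] at h3
        exact (mul_eq_zero.mp h3.symm).resolve_left hc0
      have hpb := ae_comp_affine (P := fun x => x < m → φ (lam * x - β 0) = 0)
        (a := lam⁻¹) (inv_ne_zero hlamne) (β 0 / lam) base
      filter_upwards [hpb] with y hy hylt
      have harg : lam * (lam⁻¹ * y + β 0 / lam) - β 0 = y := by field_simp; ring
      have hcond : lam⁻¹ * y + β 0 / lam < m := by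
        have : y < lam * m - β 0 := hylt
        rw [inv_mul_eq_div, ← add_div, div_lt_iff₀ hlam0]
        linarith
      have := hy hcond
      rwa [harg] at this
    have hlt : (L + β 0) / lam < m := by
      rw [hm, lt_min_iff]
      constructor
      · rw [div_lt_iff₀ hlam0]; linarith
      · rw [div_lt_div_iff₀ hlam0 hlam0]; nlinarith
    rw [div_lt_iff₀ hlam0] at hlt
    linarith
  have heqL : lam * L - β 0 = L := le_antisymm hstep3 (by linarith)
  -- Step 4 : the scaling identity for the mass near the left edge
  set δ : ℝ := (β k1 - β 0) / lam with hδ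
  have hδpos : 0 < δ := div_pos (by linarith) hlam0
  have hs_eq : (L + β k1) / lam = L + δ := by
    rw [hδ, eq_div_iff hlamne] at *
    field_simp
    linarith
  set F : ℝ → ℝ := fun t => ∫ x in Set.Ioo L (L + t), ‖φ x‖ with hF
  have hFnonneg : ∀ t, 0 ≤ F t := fun t =>
    integral_nonneg fun x => norm_nonneg _
  have key : ∀ t, 0 < t → t ≤ δ → F t = ‖c 0‖ * (lam⁻¹ * F (lam * t)) := by
    intro t ht htδ
    have hle : L ≤ L + t := by linarith
    have h1 : F t = ∫ x in Set.Ioo L (L + t), ‖c 0‖ * ‖φ (lam * x - β 0)‖ := by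
      apply setIntegral_congr_ae measurableSet_Ioo
      filter_upwards [hrel] with x hx hxmem
      rw [hx (by rw [hs_eq]; exact lt_of_lt_of_le hxmem.2 (by linarith)), norm_mul]
    rw [h1, integral_const_mul]
    congr 1
    have e2 : lam * (L + t) - β 0 = L + lam * t := by
      have : lam * (L + t) = lam * L + lam * t := by ring
      linarith [heqL]
    calc (∫ x in Set.Ioo L (L + t), ‖φ (lam * x - β 0)‖)
        = ∫ x in L..(L + t), ‖φ (lam * x - β 0)‖ := by
          rw [intervalIntegral.integral_of_le hle, integral_Ioc_eq_integral_Ioo]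
      _ = lam⁻¹ • ∫ y in (lam * L - β 0)..(lam * (L + t) - β 0), ‖φ y‖ :=
          intervalIntegral.integral_comp_mul_sub (fun y => ‖φ y‖) hlamne (β 0)
      _ = lam⁻¹ * F (lam * t) := by
          rw [heqL, e2, smul_eq_mul]
          congr 1
          rw [intervalIntegral.integral_of_le (by nlinarith), integral_Ioc_eq_integral_Ioo]
  -- positivity of the mass just to the right of the edge
  have hFδpos : 0 < F δ := by
    rcases (hFnonneg δ).lt_or_eq with h | h
    · exact h
    exfalso
    have hi : Integrable (fun x => ‖φ x‖) (volume.restrict (Set.Ioo L (L + δ))) :=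
      hint.norm.integrableOn
    have hz : (fun x => ‖φ x‖) =ᵐ[volume.restrict (Set.Ioo L (L + δ))] 0 :=
      (integral_eq_zero_iff_of_nonneg_ae
        (Eventually.of_forall fun x => norm_nonneg _) hi).mp h.symm
    have hz' : ∀ᵐ x : ℝ, x ∈ Set.Ioo L (L + δ) → φ x = 0 := by
      rw [← ae_restrict_iff' measurableSet_Ioo]
      filter_upwards [hz] with x hx
      simpa using hx
    have hneL : ∀ᵐ x : ℝ, x ≠ L := by
      rw [Filter.eventually_iff, mem_ae_iff]
      have : {x : ℝ | x ≠ L}ᶜ = {L} := by ext x; simp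
      rw [this, Real.volume_singleton]
    have hmem : L + δ ∈ S := by
      filter_upwards [hP1, hz', hneL] with x h1 h2 h3 hxlt
      rcases lt_or_ge x L with h | h
      · exact h1 h
      · exact h2 ⟨lt_of_le_of_ne h (Ne.symm h3), hxlt⟩
    have := hP2 _ hmem
    linarith
  -- conclude
  by_contra hcontra
  push_neg at hcontra
  have hone : (1:ℝ) ≤ ‖c 0‖ / lam := (one_le_div hlam0).mpr hcontra
  have hmono : ∀ n : ℕ, F δ ≤ F (δ / lam ^ n) := by
    intro n
    induction n with
    | zero => simp
    | succ n ih =>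
      have hp : (0:ℝ) < lam ^ (n + 1) := by positivity
      have htpos : 0 < δ / lam ^ (n + 1) := div_pos hδpos hp
      have htle : δ / lam ^ (n + 1) ≤ δ :=
        div_le_self hδpos.le (one_le_pow₀ hlam.le)
      have hk := key _ htpos htle
      have hlamt : lam * (δ / lam ^ (n + 1)) = δ / lam ^ n := by
        field_simp
        ring
      rw [hlamt] at hk
      have h2 : F (δ / lam ^ n) ≤ ‖c 0‖ * (lam⁻¹ * F (δ / lam ^ n)) := by
        have h3 : 0 ≤ F (δ / lam ^ n) := hFnonneg _
        have h4 : F (δ / lam ^ n) = 1 * F (δ / lam ^ n) := (one_mul _).symm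
        calc F (δ / lam ^ n) = 1 * F (δ / lam ^ n) := (one_mul _).symm
          _ ≤ (‖c 0‖ / lam) * F (δ / lam ^ n) := by
              apply mul_le_mul_of_nonneg_right hone h3
          _ = ‖c 0‖ * (lam⁻¹ * F (δ / lam ^ n)) := by ring
      calc F δ ≤ F (δ / lam ^ n) := ih
        _ ≤ ‖c 0‖ * (lam⁻¹ * F (δ / lam ^ n)) := h2
        _ = F (δ / lam ^ (n + 1)) := hk.symm
  have hanti : Antitone fun n : ℕ => Set.Ioo L (L + δ / lam ^ n) := by
    intro a b hab
    apply Set.Ioo_subset_Ioo le_rfl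
    have h1 : lam ^ a ≤ lam ^ b := pow_le_pow_right₀ hlam.le hab
    have h2 : (0:ℝ) < lam ^ a := by positivity
    have : δ / lam ^ b ≤ δ / lam ^ a := by
      apply div_le_div_of_nonneg_left hδpos.le h2 h1
    linarith
  have htend := tendsto_setIntegral_of_antitone (μ := volume)
    (f := fun x => ‖φ x‖) (fun n : ℕ => measurableSet_Ioo) hanti
    ⟨0, hint.norm.integrableOn⟩
  have hiInter : ⋂ n : ℕ, Set.Ioo L (L + δ / lam ^ n) = ∅ := by
    ext x
    simp only [Set.mem_iInter, Set.mem_Ioo, Set.mem_empty_iff_false, iff_false, not_forall]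
    by_contra hcc
    push_neg at hcc
    obtain ⟨n, hn⟩ := pow_unbounded_of_one_lt (δ / (x - L)) hlam
    have hxL : L < x := (hcc 0).1
    have h2 := (hcc n).2
    have hp : (0:ℝ) < lam ^ n := by positivity
    rw [div_lt_iff₀ (by linarith : (0:ℝ) < x - L)] at hn
    have h5 : x - L < δ / lam ^ n := by linarith
    rw [lt_div_iff₀ hp] at h5
    linarith
  rw [hiInter] at htend
  simp only [Measure.restrict_empty, integral_zero_measure] at htend
  have hle0 : F δ ≤ 0 := ge_of_tendsto htend (Eventually.of_forall hmono)
  linarith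

/-- If `φ` is an integrable, compactly supported (a.e.), not a.e.-zero solution of the
two-scale difference equation `φ(x) = ∑ k, c k * φ(λx - β k)` with `λ > 1` and strictly
increasing translates `β`, then `|c 0| < λ` and `|c N| < λ`. -/
theorem two_scale_extreme_coeffs_lt (lam : ℝ) (hlam : 1 < lam) (N : ℕ) (hN : 1 ≤ N)
    (β : Fin (N + 1) → ℝ) (hβ : StrictMono β) (c : Fin (N + 1) → ℂ)
    (φ : ℝ → ℂ) (hint : Integrable φ)
    (hsupp : ∃ R : ℝ, ∀ᵐ x : ℝ, R < |x| → φ x = 0)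
    (hne : ¬ φ =ᵐ[volume] 0)
    (heq : ∀ᵐ x : ℝ, φ x = ∑ k : Fin (N + 1), c k * φ (lam * x - β k)) :
    ‖c 0‖ < lam ∧ ‖c (Fin.last N)‖ < lam := by
  constructor
  · have := left_coeff_lt lam hlam N hN β hβ c φ hint hsupp hne heq
    exact this
  · -- reflect everything
    set ψ : ℝ → ℂ := fun x => φ (-x) with hψ
    set β' : Fin (N + 1) → ℝ := fun k => -β k.rev with hβ'def
    set c' : Fin (N + 1) → ℂ := fun k => c k.rev with hc'def
    have hβ' : StrictMono β' := by
      intro a b hab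
      have : b.rev < a.rev := Fin.rev_lt_rev.mpr hab
      have := hβ this
      simp only [hβ'def]
      linarith
    have hint' : Integrable ψ := hint.comp_neg
    have hsupp' : ∃ R : ℝ, ∀ᵐ x : ℝ, R < |x| → ψ x = 0 := by
      obtain ⟨R, hR⟩ := hsupp
      refine ⟨R, ?_⟩
      have := ae_comp_affine (P := fun y => R < |y| → φ y = 0) (a := (-1:ℝ))
        (by norm_num) 0 hR
      filter_upwards [this] with x hx hRx
      have : φ (-1 * x + 0) = 0 := hx (by simpa [abs_neg] using hRx)
      simpa using this
    have hne' : ¬ ψ =ᵐ[volume] 0 := by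
      intro h
      apply hne
      have := ae_comp_affine (P := fun y => ψ y = 0) (a := (-1:ℝ)) (by norm_num) 0 h
      filter_upwards [this] with x hx
      simpa [hψ] using hx
    have heq' : ∀ᵐ x : ℝ, ψ x = ∑ k : Fin (N + 1), c' k * ψ (lam * x - β' k) := by
      have hpb := ae_comp_affine
        (P := fun y => φ y = ∑ k : Fin (N + 1), c k * φ (lam * y - β k))
        (a := (-1:ℝ)) (by norm_num) 0 heq
      filter_upwards [hpb] with x hx
      have hx' : φ (-x) = ∑ k : Fin (N + 1), c k * φ (-(lam * x) - β k) := by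
        have h1 : (-1 : ℝ) * x + 0 = -x := by ring
        rw [h1] at hx
        convert hx using 2 with k
        ring_nf
      rw [hψ]
      simp only
      rw [hx']
      rw [← Fintype.sum_equiv (Fin.revPerm (n := N + 1))
        (fun k => c' k * ψ (lam * x - β' k))
        (fun k => c k * φ (-(lam * x) - β k))]
      intro k
      simp only [hc'def, hβ'def, hψ, Fin.revPerm_apply]
      congr 2
      ring
    have := left_coeff_lt lam hlam N hN β' hβ' c' ψ hint' hsupp' hne' heq'
    have h0 : c' 0 = c (Fin.last N) := by simp [hc'def, Fin.rev_zero]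
    rwa [← h0]
end

section
/- Let λ > 1 be a real number, N ≥ 1 an integer, β_0 < β_1 < ⋯ < β_N real numbers, and c_0, …, c_N ∈ ℂ, and let φ : ℝ → ℂ be a compactly supported L¹ solution of the two-scale difference equation that is not almost everywhere zero. Let μ ≥ 0 and set a = β_0/(λ−1). If there exist δ > 0 and M > 0 such that |φ(x)| ≤ M·|x − a|^μ for almost every x ∈ (a − δ, a + δ), then |c_0| ≤ λ^{−μ}. -/
open MeasureTheory Filter

lemma ae_affine {P : ℝ → Prop} (k b : ℝ) (hk : k ≠ 0) (h : ∀ᵐ y : ℝ, P y) :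
    ∀ᵐ x : ℝ, P (k * x + b) := by
  rw [ae_iff] at h ⊢
  have hs : {x : ℝ | ¬ P (k * x + b)}
      = (fun x : ℝ => k * x)⁻¹' ((fun y : ℝ => y + b)⁻¹' {y | ¬ P y}) := rfl
  rw [hs, Real.volume_preimage_mul_left hk]
  rw [show ((fun y : ℝ => y + b)⁻¹' {y | ¬ P y}) = (· + b)⁻¹' {y | ¬ P y} from rfl]
  rw [measure_preimage_add_right volume b _, h, mul_zero]


/-- If `φ` is a compactly supported `L¹` solution, not a.e. zero, of the two-scale
difference equation, `μ ≥ 0`, `a = β 0 / (λ - 1)`, and `|φ(x)| ≤ M |x - a|^μ` a.e. near `a`,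
then `|c 0| ≤ λ^(-μ)`. -/
theorem two_scale_first_coeff_le (lam : ℝ) (hlam : 1 < lam) (N : ℕ) (hN : 1 ≤ N)
    (β : Fin (N + 1) → ℝ) (hβ : StrictMono β) (c : Fin (N + 1) → ℂ)
    (φ : ℝ → ℂ) (hint : Integrable φ)
    (hsupp : ∃ R : ℝ, ∀ᵐ x : ℝ, R < |x| → φ x = 0)
    (hne : ¬ φ =ᵐ[volume] 0)
    (heq : ∀ᵐ x : ℝ, φ x = ∑ k : Fin (N + 1), c k * φ (lam * x - β k))
    (μ : ℝ) (hμ : 0 ≤ μ) (a : ℝ) (ha : a = β 0 / (lam - 1))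
    (hbound : ∃ δ > (0 : ℝ), ∃ M > (0 : ℝ),
      ∀ᵐ x : ℝ, x ∈ Set.Ioo (a - δ) (a + δ) → ‖φ x‖ ≤ M * |x - a| ^ μ) :
    ‖c 0‖ ≤ lam ^ (-μ) := by
  classical
  by_contra hcon
  push_neg at hcon
  have hlam0 : (0:ℝ) < lam := lt_trans one_pos hlam
  have hlam1 : (0:ℝ) < lam - 1 := by linarith
  have hc0pos : 0 < ‖c 0‖ :=
    lt_of_le_of_lt (Real.rpow_nonneg hlam0.le _) hcon
  have hc0 : c 0 ≠ 0 := by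
    intro h; rw [h] at hc0pos; simp at hc0pos
  have hfix : lam * a - β 0 = a := by
    rw [ha]; field_simp; ring
  have hb0 : lam * a = a + β 0 := by linarith
  obtain ⟨R, hR⟩ := hsupp
  obtain ⟨δ, hδ, M, hM, hb⟩ := hbound
  have h01 : (0 : Fin (N+1)) < 1 := by
    rw [Fin.lt_def, Fin.val_zero, Fin.val_one', Nat.mod_eq_of_lt (by omega)]; omega
  have hβ10 : β 0 < β 1 := hβ h01
  have hβsucc : ∀ k : Fin N, β 1 ≤ β k.succ := by
    intro k
    refine hβ.monotone ?_
    rw [Fin.le_def, Fin.val_one', Nat.mod_eq_of_lt (by omega)]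
    have : (0 : Fin (N+1)) < k.succ := Fin.pos_iff_ne_zero.mpr (Fin.succ_ne_zero k)
    omega
  -- Z t : φ vanishes a.e. below t
  set Z : ℝ → Prop := fun t => ∀ᵐ x : ℝ, x < t → φ x = 0 with hZdef
  -- Step: propagate vanishing below t to below (t + β 0)/lam
  have hstep1 : ∀ t : ℝ, Z t → Z ((t + β 0)/lam) := by
    intro t hZt
    have h1 : ∀ᵐ x : ℝ, ∀ k : Fin (N+1),
        lam * x + -(β k) < t → φ (lam * x + -(β k)) = 0 := by
      rw [ae_all_iff]; intro k
      exact ae_affine lam (-(β k)) hlam0.ne' hZt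
    filter_upwards [heq, h1] with x hx h1x hxlt
    rw [hx]
    apply Finset.sum_eq_zero
    intro k _
    have hk0 : β 0 ≤ β k := hβ.monotone (Fin.zero_le k)
    have hxl : lam * x < t + β 0 := by
      have := (lt_div_iff₀ hlam0).mp hxlt
      linarith
    have : lam * x + -(β k) < t := by linarith
    rw [show lam * x - β k = lam * x + -(β k) by ring, h1x k this, mul_zero]
  -- φ vanishes a.e. below a
  set t0 : ℝ := min (-R) a with ht0def
  have ht0a : t0 ≤ a := min_le_right _ _
  have hZt0 : Z t0 := by
    filter_upwards [hR] with x hx hxlt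
    apply hx
    have hxR : x < -R := lt_of_lt_of_le hxlt (min_le_left _ _)
    rw [lt_abs]; right; linarith
  have hseq : ∀ n : ℕ, Z (a + (t0 - a)/lam^n) := by
    intro n
    induction n with
    | zero => simpa using hZt0
    | succ n ih =>
      have := hstep1 _ ih
      have hb0' : β 0 = lam * a - a := by linarith
      have e : (a + (t0 - a)/lam^n + β 0)/lam = a + (t0 - a)/lam^(n+1) := by
        rw [hb0', pow_succ]
        field_simp
        ring
      rwa [e] at this
  have hZa : Z a := by
    have hall : ∀ᵐ x : ℝ, ∀ n : ℕ, x < a + (t0 - a)/lam^n → φ x = 0 :=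
      ae_all_iff.mpr hseq
    filter_upwards [hall] with x hx hxa
    obtain ⟨n, hn⟩ := pow_unbounded_of_one_lt ((a - t0)/(a - x)) hlam
    refine hx n ?_
    have hax : 0 < a - x := by linarith
    have h1 : a - t0 < (a - x) * lam ^ n := by
      have := (div_lt_iff₀ hax).mp hn; linarith
    have hpow : (0:ℝ) < lam ^ n := pow_pos hlam0 n
    have : x - a < (t0 - a)/lam^n := by
      rw [lt_div_iff₀ hpow]
      nlinarith
    linarith
  -- the small interval
  set ε : ℝ := min δ ((β 1 - β 0)/lam) with hεdef
  have hε : 0 < ε := lt_min hδ (div_pos (by linarith) hlam0)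
  have hεδ : ε ≤ δ := min_le_left _ _
  have hεl : lam * ε ≤ β 1 - β 0 := by
    have := min_le_right δ ((β 1 - β 0)/lam)
    calc lam * ε ≤ lam * ((β 1 - β 0)/lam) := by
          exact mul_le_mul_of_nonneg_left this hlam0.le
      _ = β 1 - β 0 := by field_simp
  -- local self-similarity relation near a
  have hrel : ∀ᵐ x : ℝ, x ∈ Set.Ioo a (a+ε) → φ x = c 0 * φ (a + lam*(x-a)) := by
    have h1 : ∀ᵐ x : ℝ, ∀ k : Fin (N+1),
        lam * x + -(β k) < a → φ (lam * x + -(β k)) = 0 := by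
      rw [ae_all_iff]; intro k
      exact ae_affine lam (-(β k)) hlam0.ne' hZa
    filter_upwards [heq, h1] with x hx h1x hmem
    obtain ⟨hxl, hxr⟩ := hmem
    rw [hx, Fin.sum_univ_succ]
    have e0 : lam * x - β 0 = a + lam * (x - a) := by
      have : lam * x - β 0 = lam * (x - a) + (lam * a - β 0) := by ring
      rw [this, hfix]; ring
    rw [e0]
    have hrest : ∀ k : Fin N, φ (lam * x - β k.succ) = 0 := by
      intro k
      have h1 : lam * (x - a) < lam * ε :=
        mul_lt_mul_of_pos_left (by linarith) hlam0
      have h2 : β 1 ≤ β k.succ := hβsucc k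
      have : lam * x + -(β k.succ) < a := by
        have : lam * x - β k.succ = lam * (x - a) + (lam * a - β 0) - (β k.succ - β 0) := by
          ring
        have h3 : lam * x - β k.succ < a := by
          rw [this, hfix]; linarith
        linarith [h3]
      have := h1x k.succ this
      rwa [show lam * x + -(β k.succ) = lam * x - β k.succ by ring] at this
    have : ∑ k : Fin N, c k.succ * φ (lam * x - β k.succ) = 0 := by
      apply Finset.sum_eq_zero; intro k _; rw [hrest k, mul_zero]
    rw [this, add_zero]
  -- iterate the relation
  have hiter : ∀ n : ℕ, ∀ᵐ x : ℝ, x ∈ Set.Ioo a (a+ε) →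
      (c 0)^n * φ x = φ (a + (x - a)/lam^n) := by
    intro n
    induction n with
    | zero =>
      filter_upwards with x _
      simp
    | succ n ih =>
      have hkne : (1/lam^(n+1) : ℝ) ≠ 0 := by positivity
      have hpull := ae_affine (1/lam^(n+1)) (a - a/lam^(n+1)) hkne hrel
      filter_upwards [ih, hpull] with x hix hp hmem
      obtain ⟨hxl, hxr⟩ := hmem
      have hpowpos : (0:ℝ) < lam ^ (n+1) := pow_pos hlam0 _
      have hpow1 : (1:ℝ) ≤ lam ^ (n+1) := one_le_pow₀ hlam.le
      have e1 : 1/lam^(n+1) * x + (a - a/lam^(n+1)) = a + (x - a)/lam^(n+1) := by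
        field_simp; ring
      rw [e1] at hp
      have hmem' : a + (x - a)/lam^(n+1) ∈ Set.Ioo a (a+ε) := by
        constructor
        · have : 0 < (x - a)/lam^(n+1) := div_pos (by linarith) hpowpos
          linarith
        · have : (x - a)/lam^(n+1) ≤ x - a := by
            apply div_le_self (by linarith) hpow1
          linarith
      have hp' := hp hmem'
      have e2 : a + lam * ((a + (x - a)/lam^(n+1)) - a) = a + (x - a)/lam^n := by
        rw [pow_succ]
        field_simp
        ring
      rw [e2] at hp'
      calc (c 0)^(n+1) * φ x = c 0 * ((c 0)^n * φ x) := by ring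
        _ = c 0 * φ (a + (x - a)/lam^n) := by rw [hix ⟨hxl, hxr⟩]
        _ = φ (a + (x - a)/lam^(n+1)) := hp'.symm
  -- pull back the Hölder bound
  have hba : ∀ᵐ x : ℝ, ∀ n : ℕ,
      (1/lam^n * x + (a - a/lam^n)) ∈ Set.Ioo (a-δ) (a+δ) →
      ‖φ (1/lam^n * x + (a - a/lam^n))‖
        ≤ M * |1/lam^n * x + (a - a/lam^n) - a| ^ μ := by
    rw [ae_all_iff]; intro n
    exact ae_affine (1/lam^n) (a - a/lam^n) (by positivity) hb
  have hitall : ∀ᵐ x : ℝ, ∀ n : ℕ, x ∈ Set.Ioo a (a+ε) →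
      (c 0)^n * φ x = φ (a + (x - a)/lam^n) := ae_all_iff.mpr hiter
  have epow : ∀ n : ℕ, ((lam^n : ℝ))^μ = (lam^μ)^n := by
    intro n
    rw [← Real.rpow_natCast lam n, ← Real.rpow_mul hlam0.le, mul_comm,
      Real.rpow_mul hlam0.le, Real.rpow_natCast]
  have hr1 : 1 < ‖c 0‖ * lam ^ μ := by
    have hmp : (0:ℝ) < lam ^ μ := Real.rpow_pos_of_pos hlam0 _
    have := mul_lt_mul_of_pos_right hcon hmp
    rwa [← Real.rpow_add hlam0, neg_add_cancel, Real.rpow_zero] at this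
  -- vanishing on (a, a+ε)
  have hzero : ∀ᵐ x : ℝ, x ∈ Set.Ioo a (a+ε) → φ x = 0 := by
    filter_upwards [hba, hitall] with x hbx hitx hmem
    obtain ⟨hxl, hxr⟩ := hmem
    have hxa : 0 < x - a := by linarith
    have key : ∀ n : ℕ, (‖c 0‖ * lam ^ μ)^n * ‖φ x‖
        ≤ M * (x - a) ^ μ := by
      intro n
      have hpowpos : (0:ℝ) < lam ^ n := pow_pos hlam0 _
      have hpow1 : (1:ℝ) ≤ lam ^ n := one_le_pow₀ hlam.le
      have e1 : 1/lam^n * x + (a - a/lam^n) = a + (x - a)/lam^n := by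
        field_simp; ring
      have hdiv : 0 < (x - a)/lam^n := div_pos hxa hpowpos
      have hdle : (x - a)/lam^n ≤ x - a := div_le_self hxa.le hpow1
      have hmem2 : a + (x - a)/lam^n ∈ Set.Ioo (a-δ) (a+δ) := by
        constructor <;> [linarith; linarith]
      have h1 := hbx n
      rw [e1] at h1
      have h2 := h1 hmem2
      rw [show a + (x - a)/lam^n - a = (x - a)/lam^n by ring,
        abs_of_pos hdiv] at h2
      have h3 := hitx n ⟨hxl, hxr⟩
      have h4 : ‖c 0‖^n * ‖φ x‖
          = ‖φ (a + (x - a)/lam^n)‖ := by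
        rw [← h3, norm_mul, norm_pow]
      have h5 : ((x - a)/lam^n) ^ μ = (x - a)^μ / (lam^μ)^n := by
        rw [Real.div_rpow hxa.le hpowpos.le, epow n]
      have hmppos : (0:ℝ) < (lam^μ)^n := pow_pos (Real.rpow_pos_of_pos hlam0 _) _
      have h6 : ‖c 0‖^n * ‖φ x‖
          ≤ M * ((x - a)^μ / (lam^μ)^n) := by
        rw [h4, ← h5]; exact h2
      calc (‖c 0‖ * lam ^ μ)^n * ‖φ x‖
          = (lam^μ)^n * (‖c 0‖^n * ‖φ x‖) := by ring
        _ ≤ (lam^μ)^n * (M * ((x - a)^μ / (lam^μ)^n)) := by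
            exact mul_le_mul_of_nonneg_left h6 hmppos.le
        _ = M * (x - a)^μ := by field_simp
    by_contra hne0
    have hφpos : 0 < ‖φ x‖ := by
      simpa [norm_pos_iff] using hne0
    obtain ⟨n, hn⟩ := pow_unbounded_of_one_lt
      ((M * (x - a)^μ) / ‖φ x‖) hr1
    have := key n
    rw [div_lt_iff₀ hφpos] at hn
    linarith
  -- extend vanishing past a + ε
  have haept : ∀ᵐ x : ℝ, x ≠ a := by
    rw [ae_iff]
    have : {x : ℝ | ¬ x ≠ a} = {a} := by ext x; simp
    rw [this, Real.volume_singleton]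
  have hZaε : Z (a + ε) := by
    filter_upwards [hZa, hzero, haept] with x h1 h2 h3 hlt
    rcases lt_trichotomy x a with h | h | h
    · exact h1 h
    · exact absurd h h3
    · exact h2 ⟨h, hlt⟩
  set d : ℝ := min ((lam-1)*ε) (β 1 - β 0) with hddef
  have hd : 0 < d := lt_min (mul_pos hlam1 hε) (by linarith)
  have hstep2 : ∀ t : ℝ, ε ≤ t → Z (a + t) → Z (a + t + d) := by
    intro t ht hZt
    have hkne : (1/lam : ℝ) ≠ 0 := by positivity
    have hpe := ae_affine (1/lam) (β 0/lam) hkne heq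
    have hz1 := ae_affine (1/lam) (β 0/lam) hkne hZt
    have hz2 : ∀ᵐ y : ℝ, ∀ k : Fin (N+1),
        (1*y + (β 0 - β k)) < a + t → φ (1*y + (β 0 - β k)) = 0 :=
      ae_all_iff.mpr fun k => ae_affine 1 (β 0 - β k) one_ne_zero hZt
    filter_upwards [hpe, hz1, hz2] with y h1 h2 h3 hylt
    have harg : ∀ k : Fin (N+1), lam * (1/lam * y + β 0/lam) - β k
        = 1*y + (β 0 - β k) := by
      intro k; field_simp; ring
    simp only [harg] at h1
    have hylam : y < a + lam * t := by
      have hd1 : d ≤ (lam-1)*ε := min_le_left _ _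
      have hd2 : (lam-1)*ε ≤ (lam-1)*t := mul_le_mul_of_nonneg_left ht hlam1.le
      have : (lam-1)*t = lam*t - t := by ring
      linarith
    have hx2 : 1/lam * y + β 0/lam < a + t := by
      rw [show 1/lam * y + β 0/lam = (y + β 0)/lam by ring, div_lt_iff₀ hlam0]
      calc y + β 0 < a + lam*t + β 0 := by linarith
        _ = (a + t) * lam := by rw [mul_comm]; nlinarith [hb0]
    have hLHS := h2 hx2
    rw [hLHS, Fin.sum_univ_succ] at h1
    have hrest : ∀ k : Fin N, φ (1*y + (β 0 - β k.succ)) = 0 := by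
      intro k
      apply h3 k.succ
      have h2k : β 1 ≤ β k.succ := hβsucc k
      have hd2 : d ≤ β 1 - β 0 := min_le_right _ _
      linarith
    have hsum0 : ∑ k : Fin N, c k.succ * φ (1*y + (β 0 - β k.succ)) = 0 := by
      apply Finset.sum_eq_zero; intro k _; rw [hrest k, mul_zero]
    rw [hsum0, add_zero] at h1
    have : φ (1*y + (β 0 - β 0)) = 0 := by
      rcases mul_eq_zero.mp h1.symm with h | h
      · exact absurd h hc0
      · exact h
    simpa using this
  have hZn : ∀ n : ℕ, Z (a + (ε + n*d)) := by
    intro n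
    induction n with
    | zero => simpa using hZaε
    | succ n ih =>
      have hεt : ε ≤ ε + n*d := by
        have : (0:ℝ) ≤ n*d := by positivity
        linarith
      have := hstep2 (ε + n*d) hεt (by simpa [add_assoc] using ih)
      have e : a + (ε + n*d) + d = a + (ε + (n+1 : ℕ)*d) := by push_cast; ring
      rwa [e] at this
  apply hne
  have hall := ae_all_iff.mpr hZn
  filter_upwards [hall] with x hx
  obtain ⟨n, hn⟩ := exists_nat_gt ((x - a - ε)/d)
  have : x - a - ε < n * d := by
    have := (div_lt_iff₀ hd).mp hn; linarith
  exact hx n (by linarith)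
end

section
/- Let λ > 1 be a real number, N ≥ 1 an integer, β_0 < β_1 < ⋯ < β_N real numbers, and c_0, …, c_N ∈ ℂ, and let φ : ℝ → ℂ be a compactly supported L¹ solution of the two-scale difference equation that is not almost everywhere zero. Let μ ≥ 0 and set a = β_N/(λ−1). If there exist δ > 0 and M > 0 such that |φ(x)| ≤ M·|x − a|^μ for almost every x ∈ (a − δ, a + δ), then |c_N| ≤ λ^{−μ}. -/
set_option maxHeartbeats 1000000
open MeasureTheory Filter

lemma ae_comp_affine_s2 {p : ℝ → Prop} (h : ∀ᵐ y : ℝ, p y) {l : ℝ} (hl : l ≠ 0) (b : ℝ) :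
    ∀ᵐ x : ℝ, p (l * x - b) := by
  rw [ae_iff] at h ⊢
  have hset : {x : ℝ | ¬ p (l * x - b)} = (l * ·) ⁻¹' ((· - b) ⁻¹' {y | ¬ p y}) := rfl
  have h2 : volume ((· - b) ⁻¹' {y | ¬ p y}) = 0 := by
    simpa [sub_eq_add_neg] using
      (measure_preimage_add_right volume (-b) {y | ¬ p y}).trans h
  rw [hset, Real.volume_preimage_mul_left hl, h2, mul_zero]

/-- If `φ` is a compactly supported `L¹` solution, not a.e. zero, of the two-scale
difference equation, `μ ≥ 0`, `a = β N / (lam - 1)`, and `|φ(x)| ≤ M |x - a|^μ` a.e. near `a`,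
then `|c N| ≤ lam^(-μ)`. -/
theorem two_scale_last_coeff_le (lam : ℝ) (hlam : 1 < lam) (N : ℕ) (hN : 1 ≤ N)
    (β : Fin (N + 1) → ℝ) (hβ : StrictMono β) (c : Fin (N + 1) → ℂ)
    (φ : ℝ → ℂ) (hint : Integrable φ)
    (hsupp : ∃ R : ℝ, ∀ᵐ x : ℝ, R < |x| → φ x = 0)
    (hne : ¬ φ =ᵐ[volume] 0)
    (heq : ∀ᵐ x : ℝ, φ x = ∑ k : Fin (N + 1), c k * φ (lam * x - β k))
    (μ : ℝ) (hμ : 0 ≤ μ) (a : ℝ) (ha : a = β (Fin.last N) / (lam - 1))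
    (hbound : ∃ δ > (0 : ℝ), ∃ M > (0 : ℝ),
      ∀ᵐ x : ℝ, x ∈ Set.Ioo (a - δ) (a + δ) → ‖φ x‖ ≤ M * |x - a| ^ μ) :
    ‖c (Fin.last N)‖ ≤ lam ^ (-μ) := by
  obtain ⟨δ, hδ, M, hM, hbd⟩ := hbound
  by_contra hcontra
  push_neg at hcontra
  have hcon : lam ^ (-μ) < ‖c (Fin.last N)‖ := hcontra
  have hcN0 : c (Fin.last N) ≠ 0 := by
    intro h0
    rw [h0] at hcon
    simp only [norm_zero] at hcon
    have := Real.rpow_pos_of_pos (lt_trans zero_lt_one hlam) (-μ)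
    linarith
  have hlam0 : (0:ℝ) < lam := lt_trans zero_lt_one hlam
  have hlamne : lam ≠ 0 := ne_of_gt hlam0
  have hl1 : (0:ℝ) < lam - 1 := by linarith
  set cN := c (Fin.last N) with hcNdef
  set i1 : Fin (N+1) := ⟨N-1, by omega⟩ with hi1
  set βN := β (Fin.last N) with hβN
  set β1 := β i1 with hβ1
  have hβlt : β1 < βN := by
    apply hβ
    simp only [Fin.lt_def, hi1, Fin.last]
    omega
  have hβle : ∀ k : Fin (N+1), k ≠ Fin.last N → β k ≤ β1 := by
    intro k hk
    apply hβ.monotone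
    have hkne : ¬((k : ℕ) = N) := fun h => hk (Fin.ext (by simpa [Fin.last] using h))
    have hkN : (k : ℕ) < N + 1 := k.isLt
    rw [Fin.le_def]
    show (k : ℕ) ≤ N - 1
    omega
  have hβNa : βN = (lam - 1) * a := by rw [ha]; field_simp
  have hβklelast : ∀ k : Fin (N+1), β k ≤ βN := fun k => hβ.monotone (Fin.le_last k)
  -- the "vanишing beyond r" set
  set Z : Set ℝ := {r | ∀ᵐ x : ℝ, r < x → φ x = 0} with hZdef
  have hZup : ∀ r ∈ Z, ∀ s, r ≤ s → s ∈ Z := by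
    intro r hr s hrs
    show ∀ᵐ x : ℝ, s < x → φ x = 0
    filter_upwards [hr] with x hx hsx
    exact hx (lt_of_le_of_lt hrs hsx)
  have hZne : Z.Nonempty := by
    obtain ⟨R, hR⟩ := hsupp
    refine ⟨|R|, ?_⟩
    show ∀ᵐ x : ℝ, |R| < x → φ x = 0
    filter_upwards [hR] with x hx hRx
    exact hx (lt_of_le_of_lt (le_abs_self R) (lt_of_lt_of_le hRx (le_abs_self x)))
  -- pulled-back vanishing
  have hpull : ∀ r ∈ Z, ∀ᵐ x : ℝ, ∀ k : Fin (N+1), r < lam * x - β k → φ (lam * x - β k) = 0 := by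
    intro r hr
    rw [ae_all_iff]
    intro k
    exact ae_comp_affine_s2 hr hlamne (β k)
  -- step A
  have hA : ∀ r ∈ Z, (r + βN) / lam ∈ Z := by
    intro r hr
    show ∀ᵐ x : ℝ, (r + βN) / lam < x → φ x = 0
    filter_upwards [heq, hpull r hr] with x hx hp hrx
    rw [hx]
    apply Finset.sum_eq_zero
    intro k _
    have h1 : r < lam * x - β k := by
      have := hβklelast k
      have : (r + βN) / lam * lam < x * lam := by
        exact mul_lt_mul_of_pos_right hrx hlam0
      rw [div_mul_cancel₀ _ hlamne] at this
      linarith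
    rw [hp k h1, mul_zero]
  -- step B
  have hB : ∀ r ∈ Z, ∀ s, lam * r - βN ≤ s → r - βN + β1 ≤ s → s ∈ Z := by
    intro r hr s hs1 hs2
    have hkey : ∀ᵐ x : ℝ, (s + βN) / lam < x → φ (lam * x - βN) = 0 := by
      filter_upwards [heq, hpull r hr, hr] with x hx hp hx0 hrx
      have hlx : s + βN < lam * x := by
        have := mul_lt_mul_of_pos_right hrx hlam0
        rw [div_mul_cancel₀ _ hlamne] at this
        linarith
      have hxr : r < x := by
        have : lam * r ≤ s + βN := by linarith
        nlinarith
      have hzero : ∀ k : Fin (N+1), k ≠ Fin.last N → c k * φ (lam * x - β k) = 0 := by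
        intro k hk
        have : r < lam * x - β k := by
          have := hβle k hk
          linarith
        rw [hp k this, mul_zero]
      have hsum : φ x = cN * φ (lam * x - βN) := by
        rw [hx, Fin.sum_univ_castSucc]
        rw [Finset.sum_eq_zero (fun k _ => hzero k.castSucc (by
          simp [Fin.ext_iff, Fin.castSucc]; omega))]
        simp [hβN, hcNdef]
      rw [hx0 hxr] at hsum
      exact (mul_eq_zero.mp hsum.symm).resolve_left hcN0
    -- push forward through y ↦ (y + βN)/lam
    have hpush := ae_comp_affine_s2 hkey (l := lam⁻¹) (by positivity) (-(βN * lam⁻¹))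
    show ∀ᵐ y : ℝ, s < y → φ y = 0
    filter_upwards [hpush] with y hy hsy
    have harg : lam * (lam⁻¹ * y - -(βN * lam⁻¹)) - βN = y := by field_simp; ring
    have hcond : (s + βN) / lam < lam⁻¹ * y - -(βN * lam⁻¹) := by
      rw [div_lt_iff₀ hlam0]
      field_simp
      linarith
    have := hy hcond
    rwa [harg] at this
  -- bounded below
  have hbdd : BddBelow Z := by
    by_contra hbd
    apply hne
    have hex : ∀ n : ℕ, ∃ r ∈ Z, r < -(n:ℝ) := by
      intro n
      rcases not_bddBelow_iff.mp hbd (-(n:ℝ)) with ⟨r, hrZ, hrn⟩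
      exact ⟨r, hrZ, hrn⟩
    choose r hrZ hrn using hex
    have : ∀ᵐ x : ℝ, ∀ n : ℕ, r n < x → φ x = 0 := ae_all_iff.mpr fun n => hrZ n
    filter_upwards [this] with x hx
    obtain ⟨n, hn⟩ := exists_nat_gt (-x)
    exact hx n (lt_trans (hrn n) (by linarith))
  set b : ℝ := sInf Z with hbdef
  have hba : b ≤ a := by
    have hlb : ∀ r ∈ Z, lam * b - βN ≤ r := by
      intro r hr
      have h1 : b ≤ (r + βN) / lam := csInf_le hbdd (hA r hr)
      have := mul_le_mul_of_nonneg_right h1 (le_of_lt hlam0)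
      rw [div_mul_cancel₀ _ hlamne] at this
      linarith [mul_comm b lam]
    have h2 : lam * b - βN ≤ b := le_csInf hZne hlb
    nlinarith [hβNa]
  have hab : a ≤ b := by
    by_contra hcon2
    push_neg at hcon2
    have hmin : b < min ((b + βN) / lam) (b + (βN - β1)) := by
      apply lt_min
      · rw [lt_div_iff₀ hlam0]
        nlinarith [hβNa]
      · linarith
    obtain ⟨r, hrZ, hrlt⟩ := exists_lt_of_csInf_lt hZne hmin
    have hrb : b ≤ r := csInf_le hbdd hrZ
    have hr1 : r < (b + βN) / lam := lt_of_lt_of_le hrlt (min_le_left _ _)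
    have hr2 : r < b + (βN - β1) := lt_of_lt_of_le hrlt (min_le_right _ _)
    set s := max (lam * r - βN) (r - βN + β1) with hsdef
    have hsZ : s ∈ Z := hB r hrZ s (le_max_left _ _) (le_max_right _ _)
    have hsb : s < b := by
      apply max_lt
      · have := mul_lt_mul_of_pos_right hr1 hlam0
        rw [div_mul_cancel₀ _ hlamne] at this
        nlinarith
      · linarith
    exact absurd (csInf_le hbdd hsZ) (not_le.mpr hsb)
  have hbeq : b = a := le_antisymm hba hab
  -- φ vanishes a.e. beyond a
  have hupper : ∀ᵐ x : ℝ, a < x → φ x = 0 := by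
    have hex : ∀ n : ℕ, ∃ r ∈ Z, r < a + 1/(n+1) := by
      intro n
      apply exists_lt_of_csInf_lt hZne
      rw [← hbdef, hbeq]
      have : (0:ℝ) < 1/((n:ℝ)+1) := by positivity
      linarith
    choose r hrZ hrn using hex
    have hall : ∀ᵐ x : ℝ, ∀ n : ℕ, r n < x → φ x = 0 := ae_all_iff.mpr fun n => hrZ n
    filter_upwards [hall] with x hx hax
    obtain ⟨n, hn⟩ := exists_nat_one_div_lt (show (0:ℝ) < x - a by linarith)
    refine hx n ?_
    have h1 := hrn n
    rw [one_div] at hn h1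
    linarith
  -- φ does not vanish a.e. on any left interval of a
  have hleft : ∀ ε : ℝ, 0 < ε → ¬ (∀ᵐ x : ℝ, x ∈ Set.Ioc (a - ε) a → φ x = 0) := by
    intro ε hε hvan
    have : a - ε ∈ Z := by
      show ∀ᵐ x : ℝ, a - ε < x → φ x = 0
      filter_upwards [hvan, hupper] with x h1 h2 hax
      rcases le_or_gt x a with hxa | hxa
      · exact h1 ⟨hax, hxa⟩
      · exact h2 hxa
    have := csInf_le hbdd this
    rw [← hbdef, hbeq] at this
    linarith
  -- analytic part
  have hane : ∀ᵐ x : ℝ, x ≠ a := by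
    rw [ae_iff]
    have : {x : ℝ | ¬ x ≠ a} = {a} := by ext x; simp
    rw [this]
    exact measure_singleton a
  set ε0 : ℝ := min δ ((βN - β1)/lam) with hε0def
  have hε0pos : 0 < ε0 := lt_min hδ (by apply div_pos; linarith; exact hlam0)
  have hε0δ : ε0 ≤ δ := min_le_left _ _
  have hε0g : lam * ε0 ≤ βN - β1 := by
    have h1 := min_le_right δ ((βN - β1)/lam)
    have h2 := mul_le_mul_of_nonneg_left h1 (le_of_lt hlam0)
    rwa [mul_div_cancel₀ _ hlamne] at h2
  have hlama : lam * a = a + βN := by rw [hβNa]; ring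
  -- key identity near a
  have hkey : ∀ᵐ x : ℝ, x ∈ Set.Ioo (a - ε0) a → φ x = cN * φ (lam * x - βN) := by
    have hp : ∀ᵐ x : ℝ, ∀ k : Fin (N+1), a < lam * x - β k → φ (lam * x - β k) = 0 := by
      rw [ae_all_iff]
      intro k
      exact ae_comp_affine_s2 hupper hlamne (β k)
    filter_upwards [heq, hp] with x hx hpx hmem
    obtain ⟨hx1, hx2⟩ := hmem
    have hlx : lam * (a - ε0) < lam * x := mul_lt_mul_of_pos_left hx1 hlam0
    rw [hx, Fin.sum_univ_castSucc]
    have hz : ∀ k : Fin N, c k.castSucc * φ (lam * x - β k.castSucc) = 0 := by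
      intro k
      have hklast : (k.castSucc : Fin (N+1)) ≠ Fin.last N := (Fin.castSucc_lt_last k).ne
      have hkle : β k.castSucc ≤ β1 := hβle k.castSucc hklast
      have : a < lam * x - β k.castSucc := by nlinarith
      rw [hpx _ this, mul_zero]
    rw [Finset.sum_eq_zero (fun k _ => hz k), zero_add]
  -- the integral function
  set Φ : ℝ → ℝ := fun ε => ∫ x in (a - ε)..a, ‖φ x‖ with hΦdef
  have hintabs : Integrable (fun x : ℝ => ‖φ x‖) := by
    simpa using hint.norm
  -- positivity of Φ ε0
  have hΦε0pos : 0 < Φ ε0 := by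
    have hnonneg : 0 ≤ Φ ε0 :=
      intervalIntegral.integral_nonneg (by linarith) (fun u _ => norm_nonneg _)
    rcases lt_or_eq_of_le hnonneg with h | h
    · exact h
    exfalso
    apply hleft ε0 hε0pos
    have hiff := intervalIntegral.integral_eq_zero_iff_of_nonneg_ae
      (μ := volume) (a := a - ε0) (b := a) (f := fun x => ‖φ x‖)
      (Eventually.of_forall (fun x => norm_nonneg _))
      (hintabs.intervalIntegrable)
    have h0 := hiff.mp h.symm
    have hIoc : Set.Ioc (a - ε0) a ∪ Set.Ioc a (a - ε0) = Set.Ioc (a - ε0) a := by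
      rw [Set.Ioc_eq_empty_of_le (show a - ε0 ≤ a by linarith), Set.union_empty]
    rw [hIoc] at h0
    have := (ae_restrict_iff' measurableSet_Ioc).mp h0
    filter_upwards [this] with x hx hmem
    have := hx hmem
    simpa using this
  -- the recursion step
  have hstep : ∀ ε : ℝ, 0 < ε → ε ≤ ε0 → Φ (ε / lam) = (‖cN‖ / lam) * Φ ε := by
    intro ε hε hεle
    have hεlam : ε / lam < ε := by
      rw [div_lt_iff₀ hlam0]; nlinarith
    have h1 : Φ (ε / lam) = ∫ x in (a - ε/lam)..a, ‖cN‖ * ‖φ (lam * x - βN)‖ := by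
      apply intervalIntegral.integral_congr_ae
      filter_upwards [hkey, hane] with x hx hxa hmem
      rw [Set.uIoc_of_le (by linarith [div_pos hε hlam0])] at hmem
      have hxIoo : x ∈ Set.Ioo (a - ε0) a := by
        constructor
        · have : a - ε0 ≤ a - ε/lam := by linarith
          linarith [hmem.1]
        · exact lt_of_le_of_ne hmem.2 hxa
      rw [hx hxIoo, norm_mul]
    have h2 : ∫ x in (a - ε/lam)..a, ‖φ (lam * x - βN)‖
        = lam⁻¹ * ∫ y in (a - ε)..a, ‖φ y‖ := by
      have e1 : lam * (a - ε/lam) - βN = a - ε := by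
        field_simp
        linarith [hlama]
      have e2 : lam * a - βN = a := by linarith [hlama]
      rw [intervalIntegral.integral_comp_mul_sub (fun y => ‖φ y‖) hlamne βN, e1, e2,
        smul_eq_mul]
    rw [h1, intervalIntegral.integral_const_mul, h2]
    ring
  -- iterate
  have hpow : ∀ n : ℕ, (0:ℝ) < lam ^ n := fun n => pow_pos hlam0 n
  have hεn : ∀ n : ℕ, 0 < ε0 / lam ^ n := fun n => div_pos hε0pos (hpow n)
  have hεnle : ∀ n : ℕ, ε0 / lam ^ n ≤ ε0 := fun n =>
    div_le_self (le_of_lt hε0pos) (one_le_pow₀ (le_of_lt hlam))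
  have hΦn : ∀ n : ℕ, Φ (ε0 / lam ^ n) = (‖cN‖ / lam) ^ n * Φ ε0 := by
    intro n
    induction n with
    | zero => simp
    | succ n ih =>
      have hds : ε0 / lam ^ (n+1) = (ε0 / lam ^ n) / lam := by rw [div_div, pow_succ]
      rw [hds, hstep _ (hεn n) (hεnle n), ih, pow_succ]
      ring
  -- upper bound
  have hub : ∀ n : ℕ, Φ (ε0 / lam ^ n) ≤ (M * (ε0 / lam ^ n) ^ μ) * (ε0 / lam ^ n) := by
    intro n
    set εn := ε0 / lam ^ n with hεndef
    have hεnpos := hεn n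
    have hC : ∀ᵐ x : ℝ, x ∈ Set.uIoc (a - εn) a → ‖‖φ x‖‖ ≤ M * εn ^ μ := by
      filter_upwards [hbd] with x hx hmem
      rw [Set.uIoc_of_le (by linarith)] at hmem
      have h1 : x ∈ Set.Ioo (a - δ) (a + δ) :=
        ⟨by linarith [hmem.1, hεnle n, hε0δ], by linarith [hmem.2, hδ]⟩
      have h2 := hx h1
      have h3 : |x - a| ≤ εn := by
        rw [abs_sub_comm, abs_of_nonneg (by linarith [hmem.2])]
        linarith [hmem.1]
      have h4 : |x - a| ^ μ ≤ εn ^ μ := Real.rpow_le_rpow (abs_nonneg _) h3 hμ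
      rw [Real.norm_eq_abs, abs_of_nonneg (norm_nonneg _)]
      calc ‖φ x‖ ≤ M * |x - a| ^ μ := h2
        _ ≤ M * εn ^ μ := mul_le_mul_of_nonneg_left h4 (le_of_lt hM)
    have hbnd := intervalIntegral.norm_integral_le_of_norm_le_const_ae hC
    have habs : |a - (a - εn)| = εn := by
      rw [show a - (a - εn) = εn by ring, abs_of_pos hεnpos]
    rw [habs] at hbnd
    calc Φ εn ≤ ‖Φ εn‖ := le_abs_self _
      _ = ‖∫ x in (a - εn)..a, ‖φ x‖‖ := rfl
      _ ≤ M * εn ^ μ * εn := hbnd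
  -- final contradiction
  set q := ‖cN‖ * lam ^ μ with hqdef
  have hlamμpos : 0 < lam ^ μ := Real.rpow_pos_of_pos hlam0 μ
  have hq1 : 1 < q := by
    have := mul_lt_mul_of_pos_right hcon hlamμpos
    rwa [Real.rpow_neg (le_of_lt hlam0), inv_mul_cancel₀ (ne_of_gt hlamμpos)] at this
  have hqn : ∀ n : ℕ, q ^ n * Φ ε0 ≤ M * ε0 ^ μ * ε0 := by
    intro n
    have h1 := hub n
    rw [hΦn n] at h1
    set L := lam ^ n with hL
    have hLpos : 0 < L := hpow n
    have hLμpos : 0 < L ^ μ := Real.rpow_pos_of_pos hLpos μ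
    have hdiv : (ε0 / L) ^ μ = ε0 ^ μ / L ^ μ := Real.div_rpow (le_of_lt hε0pos) (le_of_lt hLpos) μ
    rw [hdiv] at h1
    have hLμ : (lam ^ μ) ^ n = L ^ μ := by
      rw [hL, ← Real.rpow_natCast (lam ^ μ) n, ← Real.rpow_natCast lam n,
        ← Real.rpow_mul (le_of_lt hlam0), ← Real.rpow_mul (le_of_lt hlam0), mul_comm]
    have hcc : (‖cN‖ / lam) ^ n * L = ‖cN‖ ^ n := by
      rw [div_pow, hL, div_mul_cancel₀]
      exact ne_of_gt (hpow n)
    have hexp : q ^ n = (‖cN‖ / lam) ^ n * L * L ^ μ := by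
      rw [hqdef, mul_pow, hLμ, hcc]
    calc q ^ n * Φ ε0 = ((‖cN‖ / lam) ^ n * Φ ε0) * (L * L ^ μ) := by
          rw [hexp]; ring
      _ ≤ (M * (ε0 ^ μ / L ^ μ) * (ε0 / L)) * (L * L ^ μ) := by
          apply mul_le_mul_of_nonneg_right h1 (by positivity)
      _ = M * ε0 ^ μ * ε0 := by field_simp
  obtain ⟨n, hn⟩ := pow_unbounded_of_one_lt (M * ε0 ^ μ * ε0 / Φ ε0) hq1
  have h5 := hqn n
  have h6 := (div_lt_iff₀ hΦε0pos).mp hn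
  linarith
end

section
/- Let λ > 1 be a real number, N ≥ 1 an integer, β_0 < β_1 < ⋯ < β_N real numbers, and c_0, …, c_N ∈ ℂ, and let φ : ℝ → ℂ be a continuous, compactly supported, not identically zero solution of the two-scale difference equation. If φ is Hölder continuous with exponent μ > 0, then λ^μ·|c_0| ≤ 1 and λ^μ·|c_N| ≤ 1 (equivalently, μ ≤ min(−ln|c_0|, −ln|c_N|)/ln λ when c_0 and c_N are nonzero). -/
open MeasureTheory Filter

lemma two_scale_left_edge_bound (lam : ℝ) (hlam : 1 < lam) (N : ℕ) (hN : 1 ≤ N)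
    (β : Fin (N + 1) → ℝ) (hβ : StrictMono β) (c : Fin (N + 1) → ℂ)
    (φ : ℝ → ℂ) (hcont : Continuous φ) (hsupp : HasCompactSupport φ)
    (hne : φ ≠ 0)
    (heq : ∀ x : ℝ, φ x = ∑ k : Fin (N + 1), c k * φ (lam * x - β k))
    (μ : ℝ) (hμ : 0 < μ) (M : ℝ) (hM : 0 < M)
    (hH : ∀ x y : ℝ, ‖φ x - φ y‖ ≤ M * |x - y| ^ μ) :
    lam ^ μ * ‖c 0‖ ≤ 1 := by
  by_contra hq
  push_neg at hq
  have hlam0 : (0:ℝ) < lam := by linarith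
  have hc0 : ‖c 0‖ ≠ 0 := by
    intro h; rw [h, mul_zero] at hq; linarith
  have hc0ne : c 0 ≠ 0 := by simpa using hc0
  set S := tsupport φ with hS
  have hSne : S.Nonempty := by
    obtain ⟨x, hx⟩ := Function.ne_iff.mp hne
    exact ⟨x, subset_closure (by simpa using hx)⟩
  have hScl : IsClosed S := isClosed_closure
  have hSbdd : BddBelow S := hsupp.isCompact.bddBelow
  set a := sInf S with ha
  have haS : a ∈ S := hScl.csInf_mem hSne hSbdd
  have hlow : ∀ x, x < a → φ x = 0 := by
    intro x hx
    by_contra h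
    exact absurd (csInf_le hSbdd (subset_closure (by simpa using h))) (not_le.mpr hx)
  have h0 : ∀ x, x ≤ a → φ x = 0 := by
    have h1 : Set.EqOn φ 0 (Set.Iio a) := fun x hx => hlow x hx
    have h2 := h1.closure hcont continuous_const
    rw [closure_Iio] at h2
    exact fun x hx => h2 hx
  have hvan : ∀ b, a < b → (∀ x, x ≤ b → φ x = 0) → False := by
    intro b hb hzero
    have hsub : S ⊆ Set.Ici b := by
      have h1 : Function.support φ ⊆ Set.Ioi b := by
        intro x hx
        simp only [Set.mem_Ioi]
        by_contra h
        exact hx (hzero x (not_lt.mp h))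
      calc S = closure (Function.support φ) := rfl
        _ ⊆ closure (Set.Ioi b) := closure_mono h1
        _ = Set.Ici b := closure_Ioi b
    exact absurd (hsub haS) (not_le.mpr hb)
  have h01 : (0 : Fin (N+1)) < 1 := by
    rw [Fin.lt_def]
    simp only [Fin.val_zero, Fin.val_one']
    rw [Nat.mod_eq_of_lt (by omega)]
    omega
  have hβ01 : β 0 < β 1 := hβ h01
  have hone_le_succ : ∀ k : Fin N, (1 : Fin (N+1)) ≤ k.succ := by
    intro k
    rw [Fin.le_def]
    simp only [Fin.val_one', Fin.val_succ]
    rw [Nat.mod_eq_of_lt (by omega)]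
    omega
  -- Step 1 : a ≤ lam * a - β 0
  have hstep1 : a ≤ lam * a - β 0 := by
    by_contra h
    push_neg at h
    apply hvan ((a + β 0) / lam) ?_ ?_
    · rw [lt_div_iff₀ hlam0]; linarith
    · intro x hx
      rw [heq x]
      apply Finset.sum_eq_zero
      intro k _
      have h1 : β 0 ≤ β k := hβ.monotone (Fin.zero_le k)
      have h2 : lam * x ≤ a + β 0 := by
        have := mul_le_mul_of_nonneg_left hx hlam0.le
        rwa [mul_div_cancel₀ _ hlam0.ne'] at this
      rw [h0 (lam * x - β k) (by linarith), mul_zero]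
  -- Step 2 : lam * a - β 0 ≤ a
  have hstep2 : lam * a - β 0 ≤ a := by
    by_contra h
    push_neg at h
    set ε := min (β 1 - β 0) (lam * a - β 0 - a) with hε
    have hε1 : ε ≤ β 1 - β 0 := min_le_left _ _
    have hε2 : ε ≤ lam * a - β 0 - a := min_le_right _ _
    have hε0 : 0 < ε := lt_min (by linarith) (by linarith)
    apply hvan (a + ε) (by linarith) ?_
    intro y hy
    rcases le_or_gt y a with h' | h'
    · exact h0 y h'
    · have hx0 : φ ((y + β 0) / lam) = 0 := by
        apply h0
        rw [div_le_iff₀ hlam0]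
        linarith
      have hthis := heq ((y + β 0) / lam)
      rw [hx0] at hthis
      have harg : ∀ k : Fin (N+1), lam * ((y + β 0) / lam) - β k = y + β 0 - β k := by
        intro k
        rw [mul_div_cancel₀ _ hlam0.ne']
      simp only [harg] at hthis
      rw [Fin.sum_univ_succ] at hthis
      have hz : ∀ k : Fin N, k ∈ Finset.univ → c k.succ * φ (y + β 0 - β k.succ) = 0 := by
        intro k _
        have h1 : β 1 ≤ β k.succ := hβ.monotone (hone_le_succ k)
        rw [h0 (y + β 0 - β k.succ) (by linarith), mul_zero]
      rw [Finset.sum_eq_zero hz, add_zero] at hthis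
      have hyy : y + β 0 - β 0 = y := by ring
      rw [hyy] at hthis
      rcases mul_eq_zero.mp hthis.symm with h'' | h''
      · exact absurd h'' hc0ne
      · exact h''
  have haeq : lam * a - β 0 = a := le_antisymm hstep2 hstep1
  set T := (β 1 - β 0) / lam with hT
  have hT0 : 0 < T := div_pos (by linarith) hlam0
  -- recursion near the left edge
  have hrec : ∀ t : ℝ, 0 ≤ t → t < T → φ (a + t) = c 0 * φ (a + lam * t) := by
    intro t ht htT
    have hthis := heq (a + t)
    rw [Fin.sum_univ_succ] at hthis
    have h00 : lam * (a + t) - β 0 = a + lam * t := by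
      rw [mul_add]; linarith
    have hlt : lam * t < β 1 - β 0 := by
      have := (mul_lt_mul_iff_right₀ hlam0).mpr htT
      rwa [mul_div_cancel₀ _ hlam0.ne'] at this
    have hz : ∀ k : Fin N, k ∈ Finset.univ → c k.succ * φ (lam * (a + t) - β k.succ) = 0 := by
      intro k _
      have h1 : β 1 ≤ β k.succ := hβ.monotone (hone_le_succ k)
      have h2 : lam * (a + t) - β k.succ ≤ a := by
        rw [mul_add]; linarith
      rw [h0 _ h2, mul_zero]
    rw [Finset.sum_eq_zero hz, add_zero, h00] at hthis
    exact hthis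
  -- iterate
  have hiter : ∀ n : ℕ, ∀ t : ℝ, 0 ≤ t → t < T →
      φ (a + t / lam ^ n) = c 0 ^ n * φ (a + t) := by
    intro n
    induction n with
    | zero => intro t ht htT; simp
    | succ n ih =>
      intro t ht htT
      have h1 : t / lam ^ (n+1) = (t / lam) / lam ^ n := by
        rw [div_div, pow_succ, mul_comm]
      have ht' : 0 ≤ t / lam := div_nonneg ht hlam0.le
      have htT' : t / lam < T := lt_of_le_of_lt (div_le_self ht hlam.le) htT
      rw [h1, ih (t / lam) ht' htT', hrec (t / lam) ht' htT',
        mul_div_cancel₀ _ hlam0.ne', pow_succ]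
      ring
  -- Hölder kills everything near the edge
  have hzero : ∀ t : ℝ, 0 ≤ t → t < T → φ (a + t) = 0 := by
    intro t ht htT
    by_contra hφt
    have hr : 0 < ‖φ (a + t)‖ := by
      simpa [AbsoluteValue.pos_iff] using hφt
    have hbound : ∀ n : ℕ,
        (lam ^ μ * ‖c 0‖) ^ n ≤ M * t ^ μ / ‖φ (a + t)‖ := by
      intro n
      have h1 := hH (a + t / lam ^ n) a
      rw [hiter n t ht htT, h0 a le_rfl, sub_zero, norm_mul, norm_pow] at h1
      have h2 : |a + t / lam ^ n - a| = t / lam ^ n := by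
        rw [add_sub_cancel_left, abs_of_nonneg (div_nonneg ht (by positivity))]
      rw [h2] at h1
      have h3 : (t / lam ^ n) ^ μ = t ^ μ / (lam ^ μ) ^ n := by
        rw [Real.div_rpow ht (by positivity), ← Real.rpow_natCast (lam ^ μ) n,
          ← Real.rpow_natCast lam n, ← Real.rpow_mul hlam0.le, ← Real.rpow_mul hlam0.le,
          mul_comm]
      rw [h3] at h1
      rw [le_div_iff₀ hr]
      have hlp : (0:ℝ) < (lam ^ μ) ^ n := by positivity
      calc (lam ^ μ * ‖c 0‖) ^ n * ‖φ (a + t)‖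
          = (lam ^ μ) ^ n * (‖c 0‖ ^ n * ‖φ (a + t)‖) := by
            rw [mul_pow]; ring
        _ ≤ (lam ^ μ) ^ n * (M * (t ^ μ / (lam ^ μ) ^ n)) :=
            mul_le_mul_of_nonneg_left h1 hlp.le
        _ = M * t ^ μ := by field_simp
    obtain ⟨n, hn⟩ := pow_unbounded_of_one_lt
      (M * t ^ μ / ‖φ (a + t)‖) hq
    exact absurd (hbound n) (not_le.mpr hn)
  exact hvan (a + T / 2) (by linarith) (fun x hx => by
    rcases le_or_gt x a with h | h
    · exact h0 x h
    · have hxa : x = a + (x - a) := by ring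
      rw [hxa]
      exact hzero (x - a) (by linarith) (by linarith))

/-- If `φ` is a continuous, compactly supported, not identically zero solution of the
two-scale difference equation which is Hölder continuous with exponent `μ > 0`, then
`λ^μ * |c 0| ≤ 1` and `λ^μ * |c N| ≤ 1`. -/
theorem two_scale_holder_regularity_bound (lam : ℝ) (hlam : 1 < lam) (N : ℕ) (hN : 1 ≤ N)
    (β : Fin (N + 1) → ℝ) (hβ : StrictMono β) (c : Fin (N + 1) → ℂ)
    (φ : ℝ → ℂ) (hcont : Continuous φ) (hsupp : HasCompactSupport φ)
    (hne : φ ≠ 0)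
    (heq : ∀ᵐ x : ℝ, φ x = ∑ k : Fin (N + 1), c k * φ (lam * x - β k))
    (μ : ℝ) (hμ : 0 < μ)
    (hHolder : ∃ M > (0 : ℝ), ∀ x y : ℝ, ‖φ x - φ y‖ ≤ M * |x - y| ^ μ) :
    lam ^ μ * ‖c 0‖ ≤ 1 ∧ lam ^ μ * ‖c (Fin.last N)‖ ≤ 1 := by
  obtain ⟨M, hM, hH⟩ := hHolder
  have hcontR : Continuous fun x : ℝ => ∑ k : Fin (N + 1), c k * φ (lam * x - β k) := by
    apply continuous_finset_sum
    intro k _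
    exact continuous_const.mul (hcont.comp (by continuity))
  have heq' : ∀ x : ℝ, φ x = ∑ k : Fin (N + 1), c k * φ (lam * x - β k) := by
    have h := (Continuous.ae_eq_iff_eq (volume : Measure ℝ) hcont hcontR).mp heq
    exact fun x => congrFun h x
  constructor
  · exact two_scale_left_edge_bound lam hlam N hN β hβ c φ hcont hsupp hne heq' μ hμ M hM hH
  · -- reflect
    set ψ : ℝ → ℂ := fun x => φ (-x) with hψ
    have hψcont : Continuous ψ := hcont.comp continuous_neg
    have hψsupp : HasCompactSupport ψ :=
      hsupp.comp_isClosedEmbedding (Homeomorph.neg ℝ).isClosedEmbedding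
    have hψne : ψ ≠ 0 := by
      intro h
      apply hne
      funext x
      have := congrFun h (-x)
      simpa [hψ] using this
    have hβ' : StrictMono fun k : Fin (N + 1) => -β (Fin.rev k) := by
      intro k l hkl
      simp only [neg_lt_neg_iff]
      exact hβ (Fin.rev_lt_rev.mpr hkl)
    have hψeq : ∀ x : ℝ, ψ x = ∑ k : Fin (N + 1),
        c (Fin.rev k) * ψ (lam * x - -β (Fin.rev k)) := by
      intro x
      have key : ∀ k : Fin (N + 1), c (Fin.rev k) * ψ (lam * x - -β (Fin.rev k))
          = (fun j => c j * φ (lam * (-x) - β j)) (Fin.revPerm k) := by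
        intro k
        simp only [Fin.revPerm_apply, hψ]
        congr 2
        ring
      calc ψ x = ∑ j : Fin (N + 1), c j * φ (lam * (-x) - β j) := heq' (-x)
        _ = ∑ k : Fin (N + 1), (fun j => c j * φ (lam * (-x) - β j)) (Fin.revPerm k) :=
            (Equiv.sum_comp Fin.revPerm _).symm
        _ = ∑ k : Fin (N + 1), c (Fin.rev k) * ψ (lam * x - -β (Fin.rev k)) := by
            exact Finset.sum_congr rfl (fun k _ => (key k).symm)
    have hψH : ∀ x y : ℝ, ‖ψ x - ψ y‖ ≤ M * |x - y| ^ μ := by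
      intro x y
      have := hH (-x) (-y)
      rwa [show (-x : ℝ) - (-y) = -(x - y) by ring, abs_neg] at this
    have h := two_scale_left_edge_bound lam hlam N hN (fun k => -β (Fin.rev k)) hβ'
      (fun k => c (Fin.rev k)) ψ hψcont hψsupp hψne hψeq μ hμ M hM hψH
    simpa [Fin.rev_zero] using h
end

section
/- Let λ > 2 be a real number, β_0 < β_1 real numbers, and c_0, c_1 ∈ ℂ. If φ : ℝ → ℂ is integrable, compactly supported, essentially bounded, and satisfies φ(x) = c_0 φ(λx − β_0) + c_1 φ(λx − β_1) for almost every x ∈ ℝ, then φ is almost everywhere zero. That is, for λ > 2 the two-term two-scale difference equation has no nonzero bounded compactly supported L¹ solution. -/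
open MeasureTheory Filter

lemma volume_preimage_affine (a b : ℝ) (ha : 0 < a) (s : Set ℝ) :
    volume ((fun x => a * x - b) ⁻¹' s) = ENNReal.ofReal a⁻¹ * volume s := by
  have h1 : (fun x : ℝ => a * x - b) ⁻¹' s = (a * ·) ⁻¹' ((fun y => (-b) + y) ⁻¹' s) := by
    ext x; simp [sub_eq_add_neg, add_comm]
  rw [h1, Real.volume_preimage_mul_left ha.ne', measure_preimage_add]
  congr 1
  rw [abs_of_pos (inv_pos.mpr ha)]

/-- For `λ > 2`, the two-term two-scale difference equation has no nonzero bounded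
compactly supported `L¹` solution. -/
theorem two_term_two_scale_unbounded_of_lam_gt_two (lam : ℝ) (hlam : 2 < lam)
    (β₀ β₁ : ℝ) (hβ : β₀ < β₁) (c₀ c₁ : ℂ)
    (φ : ℝ → ℂ) (hint : Integrable φ)
    (hsupp : ∃ R : ℝ, ∀ᵐ x : ℝ, R < |x| → φ x = 0)
    (hbdd : MemLp φ ⊤ volume)
    (heq : ∀ᵐ x : ℝ, φ x = c₀ * φ (lam * x - β₀) + c₁ * φ (lam * x - β₁)) :
    φ =ᵐ[volume] 0 := by
  have hlam0 : (0 : ℝ) < lam := by linarith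
  obtain ⟨g, hg, hφg⟩ := hint.aestronglyMeasurable
  -- the null set where φ ≠ g
  set N : Set ℝ := {x | ¬ φ x = g x} with hN
  have hNnull : volume N = 0 := hφg
  -- pullback of a null set under affine maps is null
  have pull : ∀ β : ℝ, volume ((fun x => lam * x - β) ⁻¹' N) = 0 := by
    intro β
    rw [volume_preimage_affine lam β hlam0 N, hNnull, mul_zero]
  -- the a.e. equation for g
  have heqg : ∀ᵐ x : ℝ, g x = c₀ * g (lam * x - β₀) + c₁ * g (lam * x - β₁) := by
    have h0 : ∀ᵐ x : ℝ, φ (lam * x - β₀) = g (lam * x - β₀) :=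
      (measure_mono_null (fun x hx => hx) (pull β₀))
    have h1 : ∀ᵐ x : ℝ, φ (lam * x - β₁) = g (lam * x - β₁) :=
      (measure_mono_null (fun x hx => hx) (pull β₁))
    filter_upwards [heq, hφg, h0, h1] with x hx h2 h3 h4
    rw [← h2, ← h3, ← h4, hx]
  set S : Set ℝ := {x | g x ≠ 0} with hS
  -- S is essentially bounded
  obtain ⟨R, hR⟩ := hsupp
  have hRg : ∀ᵐ x : ℝ, R < |x| → g x = 0 := by
    filter_upwards [hR, hφg] with x h1 h2 h3
    rw [← h2]; exact h1 h3
  have hSfin : volume S ≠ ⊤ := by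
    have hsub : ∀ᵐ x : ℝ, x ∈ S → x ∈ Set.Icc (-R) R := by
      filter_upwards [hRg] with x h1 h2
      by_contra h3
      have : R < |x| := by
        simp only [Set.mem_Icc, not_and_or, not_le] at h3
        rw [lt_abs]
        rcases h3 with h3 | h3
        · right; linarith
        · left; exact h3
      exact h2 (h1 this)
    have : volume S ≤ volume (Set.Icc (-R) R) + volume {x | x ∈ S ∧ x ∉ Set.Icc (-R) R} := by
      refine le_trans (measure_mono ?_) (measure_union_le _ _)
      intro x hx
      by_cases h : x ∈ Set.Icc (-R) R
      · exact Or.inl h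
      · exact Or.inr ⟨hx, h⟩
    have hz : volume {x | x ∈ S ∧ x ∉ Set.Icc (-R) R} = 0 := by
      refine measure_mono_null (fun x hx => ?_) hsub
      simp only [Set.mem_setOf_eq] at hx ⊢
      exact fun h => hx.2 (h hx.1)
    rw [hz, add_zero] at this
    exact ne_top_of_le_ne_top (by simp [Real.volume_Icc]) this
  -- S is a.e. contained in the union of its two affine preimages
  have hcover : volume S ≤ ENNReal.ofReal lam⁻¹ * volume S + ENNReal.ofReal lam⁻¹ * volume S := by
    have hsub : ∀ᵐ x : ℝ, x ∈ S →
        x ∈ (fun x => lam * x - β₀) ⁻¹' S ∪ (fun x => lam * x - β₁) ⁻¹' S := by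
      filter_upwards [heqg] with x h1 h2
      by_contra h3
      simp only [Set.mem_union, Set.mem_preimage, hS, Set.mem_setOf_eq, not_or, not_not] at h3
      apply h2
      rw [h1, h3.1, h3.2, mul_zero, mul_zero, add_zero]
    have key : volume S ≤ volume ((fun x => lam * x - β₀) ⁻¹' S)
        + volume ((fun x => lam * x - β₁) ⁻¹' S) := by
      have hz : volume {x | x ∈ S ∧
          x ∉ ((fun x => lam * x - β₀) ⁻¹' S ∪ (fun x => lam * x - β₁) ⁻¹' S)} = 0 := by
        refine measure_mono_null (fun x hx => ?_) hsub
        simp only [Set.mem_setOf_eq] at hx ⊢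
        exact fun h => hx.2 (h hx.1)
      calc volume S ≤ volume ((fun x => lam * x - β₀) ⁻¹' S ∪ (fun x => lam * x - β₁) ⁻¹' S)
            + volume {x | x ∈ S ∧
              x ∉ ((fun x => lam * x - β₀) ⁻¹' S ∪ (fun x => lam * x - β₁) ⁻¹' S)} := by
              refine le_trans (measure_mono ?_) (measure_union_le _ _)
              intro x hx
              by_cases h : x ∈ (fun x => lam * x - β₀) ⁻¹' S ∪ (fun x => lam * x - β₁) ⁻¹' S
              · exact Or.inl h
              · exact Or.inr ⟨hx, h⟩
        _ = volume ((fun x => lam * x - β₀) ⁻¹' S ∪ (fun x => lam * x - β₁) ⁻¹' S) := by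
              rw [hz, add_zero]
        _ ≤ _ := measure_union_le _ _
    calc volume S ≤ _ := key
      _ = ENNReal.ofReal lam⁻¹ * volume S + ENNReal.ofReal lam⁻¹ * volume S := by
          rw [volume_preimage_affine lam β₀ hlam0 S, volume_preimage_affine lam β₁ hlam0 S]
  -- conclude volume S = 0
  have hS0 : volume S = 0 := by
    by_contra h
    have hpos : 0 < volume S := pos_iff_ne_zero.mpr h
    have hc : ENNReal.ofReal lam⁻¹ * volume S + ENNReal.ofReal lam⁻¹ * volume S
        = ENNReal.ofReal (2 * lam⁻¹) * volume S := by
      rw [← add_mul, ← ENNReal.ofReal_add (by positivity) (by positivity)]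
      ring_nf
    rw [hc] at hcover
    have hlt : ENNReal.ofReal (2 * lam⁻¹) * volume S < 1 * volume S := by
      refine ENNReal.mul_lt_mul_left h hSfin ?_
      rw [← ENNReal.ofReal_one]
      exact ENNReal.ofReal_lt_ofReal_iff_of_nonneg (by positivity) |>.mpr
        (by rw [mul_inv_lt_iff₀ hlam0]; linarith)
    rw [one_mul] at hlt
    exact absurd hcover (not_le.mpr hlt)
  -- finish
  have hg0 : g =ᵐ[volume] 0 := by
    rw [EventuallyEq, ae_iff]
    exact measure_mono_null (fun x hx => hx) hS0
  exact hφg.trans hg0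
end

section
/- Let β_0 < β_1 be real numbers and c_0, c_1 ∈ ℂ. If φ : ℝ → ℂ is integrable, compactly supported, essentially bounded, not almost everywhere zero, and satisfies φ(x) = c_0 φ(2x − β_0) + c_1 φ(2x − β_1) for almost every x ∈ ℝ, then c_0 = 1 and c_1 = 1. -/
open MeasureTheory Filter Set


namespace TwoScaleAux

lemma qmp (β : ℝ) :
    Measure.QuasiMeasurePreserving (fun x : ℝ => 2 * x - β) volume volume := by
  refine ⟨by fun_prop, ?_⟩
  have h : (fun x : ℝ => 2 * x - β) = (fun y : ℝ => y - β) ∘ (fun x : ℝ => 2 * x) := rfl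
  rw [h, ← Measure.map_map (by fun_prop) (by fun_prop),
    Real.map_volume_mul_left (two_ne_zero), Measure.map_smul,
    map_sub_right_eq_self volume β]
  exact Measure.absolutelyContinuous_of_le_smul le_rfl

lemma cov (φ : ℝ → ℂ) (β x : ℝ) :
    ∫ t in Iic x, φ (2 * t - β) = (2 : ℂ)⁻¹ * ∫ u in Iic (2 * x - β), φ u := by
  have key : ∀ t : ℝ, (Iic x).indicator (fun t => φ (2 * t - β)) t
      = (Iic (2 * x - β)).indicator φ (2 * t - β) := by
    intro t
    by_cases ht : t ≤ x
    · rw [indicator_of_mem (mem_Iic.2 ht), indicator_of_mem (mem_Iic.2 (by linarith))]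
    · rw [indicator_of_notMem (fun h => ht (mem_Iic.1 h)),
        indicator_of_notMem (fun h => ht (by have := mem_Iic.1 h; linarith))]
  calc ∫ t in Iic x, φ (2 * t - β)
      = ∫ t : ℝ, (Iic x).indicator (fun t => φ (2 * t - β)) t := by
        rw [integral_indicator measurableSet_Iic]
    _ = ∫ t : ℝ, (Iic (2 * x - β)).indicator φ (2 * t - β) := by
        exact integral_congr_ae (Eventually.of_forall key)
    _ = |(2 : ℝ)⁻¹| • ∫ u : ℝ, (Iic (2 * x - β)).indicator φ (u - β) :=
        Measure.integral_comp_mul_left (fun u => (Iic (2 * x - β)).indicator φ (u - β)) 2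
    _ = (2 : ℂ)⁻¹ * ∫ u in Iic (2 * x - β), φ u := by
        rw [integral_sub_right_eq_self (fun u => (Iic (2 * x - β)).indicator φ u) β,
          integral_indicator measurableSet_Iic, Complex.real_smul]
        norm_num

lemma eq_zero_of_forall_pow_mul_le (z : ℂ) (L r : ℝ) (hr : 1 < r)
    (h : ∀ n : ℕ, r ^ n * ‖z‖ ≤ L) : z = 0 := by
  by_contra hz
  have hpos : 0 < ‖z‖ := norm_pos_iff.2 hz
  obtain ⟨n, hn⟩ := pow_unbounded_of_one_lt (L / ‖z‖) hr
  have : L < r ^ n * ‖z‖ := by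
    rw [div_lt_iff₀ hpos] at hn; linarith
  exact absurd (h n) (not_le.2 this)

lemma contract (f : ℝ → ℂ) (c : ℂ) (s M : ℝ) (hs : 0 < s)
    (hrel : ∀ t : ℝ, t ≤ s / 2 → f t = c / 2 * f (2 * t))
    (hbd : ∀ t : ℝ, 0 ≤ t → ‖f t‖ ≤ M * t)
    (hc : 1 < ‖c‖) :
    ∀ t : ℝ, 0 < t → t ≤ s → f t = 0 := by
  have hiter : ∀ n : ℕ, ∀ t : ℝ, 2 ^ n * t ≤ s → f t = (c / 2) ^ n * f (2 ^ n * t) := by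
    intro n
    induction n with
    | zero => intro t _; simp
    | succ n ih =>
      intro t ht
      have hpow : (2 : ℝ) ^ (n + 1) = 2 * 2 ^ n := by ring
      have h2t : 2 ^ n * (2 * t) ≤ s := by
        rw [show (2:ℝ) ^ n * (2 * t) = 2 ^ (n + 1) * t by ring]; exact ht
      have hts : t ≤ s / 2 := by
        rcases le_or_gt t 0 with h | h
        · linarith
        · have h1 : (2 : ℝ) ≤ 2 ^ (n + 1) := by
            calc (2:ℝ) = 2^1 := by norm_num
            _ ≤ 2^(n+1) := by
              apply pow_le_pow_right₀ (by norm_num) (by omega)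
          have h2 : 2 * t ≤ 2 ^ (n + 1) * t := mul_le_mul_of_nonneg_right h1 h.le
          linarith
      rw [hrel t hts, ih (2 * t) h2t, pow_succ]
      rw [show (2:ℝ) ^ (n+1) * t = 2 ^ n * (2 * t) by ring]
      ring
  have hhalf : ∀ y : ℝ, s / 2 < y → y ≤ s → f y = 0 := by
    intro y hy1 hy2
    have hy0 : 0 < y := lt_trans (by linarith) hy1
    apply eq_zero_of_forall_pow_mul_le (f y) (M * y) ‖c‖ hc
    intro n
    have h2n : (0:ℝ) < 2 ^ n := by positivity
    have h1 : f (y / 2 ^ n) = (c / 2) ^ n * f y := by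
      have := hiter n (y / 2 ^ n) (by rw [mul_div_cancel₀ _ h2n.ne']; exact hy2)
      rwa [mul_div_cancel₀ _ h2n.ne'] at this
    have hn : (‖c‖ / 2) ^ n * ‖f y‖ ≤ M * (y / 2 ^ n) := by
      calc (‖c‖ / 2) ^ n * ‖f y‖ = ‖(c / 2) ^ n * f y‖ := by
            rw [norm_mul, norm_pow, norm_div]; norm_num
      _ = ‖f (y / 2 ^ n)‖ := by rw [← h1]
      _ ≤ M * (y / 2 ^ n) := hbd _ (by positivity)
    rw [div_pow] at hn
    calc ‖c‖ ^ n * ‖f y‖ = (‖c‖ ^ n / 2 ^ n * ‖f y‖) * 2 ^ n := by field_simp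
    _ ≤ (M * (y / 2 ^ n)) * 2 ^ n := by
        exact mul_le_mul_of_nonneg_right hn h2n.le
    _ = M * y := by field_simp
  intro t ht0 hts
  have hex : ∃ n : ℕ, s / 2 < 2 ^ n * t := by
    obtain ⟨n, hn⟩ := pow_unbounded_of_one_lt (s / 2 / t) one_lt_two
    exact ⟨n, by rw [div_lt_iff₀ ht0] at hn; linarith⟩
  classical
  set n := Nat.find hex with hn_def
  have h0 : s / 2 < 2 ^ n * t := Nat.find_spec hex
  have hle : 2 ^ n * t ≤ s := by
    rcases Nat.eq_zero_or_pos n with h | h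
    · rw [h]; simpa using hts
    · have hmin := Nat.find_min hex (m := n - 1) (by omega)
      push_neg at hmin
      have heq2 : n - 1 + 1 = n := by omega
      have hpow : (2:ℝ) ^ n = 2 * 2 ^ (n - 1) := by
        conv_lhs => rw [← heq2]
        rw [pow_succ]; ring
      calc 2 ^ n * t = 2 * (2 ^ (n - 1) * t) := by rw [hpow]; ring
      _ ≤ 2 * (s / 2) := by linarith
      _ = s := by ring
  rw [hiter n t hle, hhalf _ h0 hle, mul_zero]

end TwoScaleAux

/-- If a bounded, compactly supported, integrable `φ`, not a.e. zero, satisfies the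
two-term two-scale difference equation with `λ = 2`, then `c₀ = 1` and `c₁ = 1`. -/
theorem two_term_two_scale_coeffs_eq_one_of_lam_eq_two
    (β₀ β₁ : ℝ) (hβ : β₀ < β₁) (c₀ c₁ : ℂ)
    (φ : ℝ → ℂ) (hint : Integrable φ)
    (hsupp : ∃ R : ℝ, ∀ᵐ x : ℝ, R < |x| → φ x = 0)
    (hbdd : MemLp φ ⊤ volume)
    (hne : ¬ φ =ᵐ[volume] 0)
    (heq : ∀ᵐ x : ℝ, φ x = c₀ * φ (2 * x - β₀) + c₁ * φ (2 * x - β₁)) :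
    c₀ = 1 ∧ c₁ = 1 := by
  classical
  obtain ⟨R, hR⟩ := hsupp
  set s : ℝ := β₁ - β₀ with hs_def
  have hs : 0 < s := by simp [hs_def]; linarith
  set m : ℝ := (β₀ + β₁) / 2 with hm_def
  -- Step 1 : φ vanishes a.e. outside [β₀, β₁]
  set D : ℝ := |R| + |β₀| + |β₁| + 1 with hD_def
  have hD0 : 0 < D := by positivity
  have base : ∀ᵐ x : ℝ, (x < β₀ - D ∨ β₁ + D < x) → φ x = 0 := by
    filter_upwards [hR] with x hx h
    apply hx
    rcases h with h | h
    · have h1 : x < -|R| := by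
        have := le_abs_self β₀
        have := abs_nonneg β₁
        simp only [hD_def] at h
        linarith
      have : R ≤ |R| := le_abs_self R
      have : -x ≤ |x| := neg_le_abs x
      linarith
    · have h1 : |R| < x := by
        have := neg_abs_le β₁
        have := abs_nonneg β₀
        simp only [hD_def] at h
        linarith
      have : R ≤ |R| := le_abs_self R
      have : x ≤ |x| := le_abs_self x
      linarith
  have step : ∀ n : ℕ, ∀ᵐ x : ℝ, (x < β₀ - D / 2 ^ n ∨ β₁ + D / 2 ^ n < x) → φ x = 0 := by
    intro n
    induction n with
    | zero => simpa using base
    | succ n ih =>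
      have h0 := (TwoScaleAux.qmp β₀).ae ih
      have h1 := (TwoScaleAux.qmp β₁).ae ih
      filter_upwards [heq, h0, h1] with x hx h0x h1x h
      have hpow : D / 2 ^ (n + 1) * 2 = D / 2 ^ n := by
        rw [pow_succ]; field_simp
      have e0 : φ (2 * x - β₀) = 0 := by
        apply h0x
        rcases h with h | h
        · left; linarith
        · right; linarith
      have e1 : φ (2 * x - β₁) = 0 := by
        apply h1x
        rcases h with h | h
        · left; linarith
        · right; linarith
      rw [hx, e0, e1]; ring
  have hsupp2 : ∀ᵐ x : ℝ, x ∉ Icc β₀ β₁ → φ x = 0 := by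
    have hall := (ae_all_iff).2 step
    filter_upwards [hall] with x hx hmem
    rw [mem_Icc, not_and_or, not_le, not_le] at hmem
    rcases hmem with h | h
    · obtain ⟨n, hn⟩ := pow_unbounded_of_one_lt (D / (β₀ - x)) one_lt_two
      have hxp : 0 < β₀ - x := by linarith
      have h2n : (0:ℝ) < 2 ^ n := by positivity
      rw [div_lt_iff₀ hxp] at hn
      have : D / 2 ^ n < β₀ - x := by rw [div_lt_iff₀ h2n]; linarith
      exact hx n (Or.inl (by linarith))
    · obtain ⟨n, hn⟩ := pow_unbounded_of_one_lt (D / (x - β₁)) one_lt_two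
      have hxp : 0 < x - β₁ := by linarith
      have h2n : (0:ℝ) < 2 ^ n := by positivity
      rw [div_lt_iff₀ hxp] at hn
      have : D / 2 ^ n < x - β₁ := by rw [div_lt_iff₀ h2n]; linarith
      exact hx n (Or.inr (by linarith))
  -- Step 2 : the primitive Φ
  set Φ : ℝ → ℂ := fun x => ∫ t in Iic x, φ t with hΦ_def
  set I : ℂ := ∫ t : ℝ, φ t with hI_def
  have hΦ0 : ∀ y : ℝ, y ≤ β₀ → Φ y = 0 := by
    intro y hy
    have hz : ∀ᵐ x ∂(volume.restrict (Iic y)), φ x = 0 := by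
      have h1 := ae_restrict_of_ae (s := Iic y) hsupp2
      have h2 := ae_restrict_mem (μ := volume) (measurableSet_Iic (a := y))
      have h3 : ∀ᵐ x ∂(volume.restrict (Iic y)), x ≠ β₀ :=
        ae_restrict_of_ae (by
          have : volume ({β₀} : Set ℝ) = 0 := measure_singleton β₀
          exact ae_iff.2 (by simpa using this))
      filter_upwards [h1, h2, h3] with x hx1 hx2 hx3
      apply hx1
      intro hmem
      rcases hmem with ⟨ha, _⟩
      have : x ≤ β₀ := le_trans hx2 hy
      exact hx3 (le_antisymm this ha)
    simpa [hΦ_def] using integral_eq_zero_of_ae hz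
  have hIoi_zero : ∀ y : ℝ, β₁ ≤ y → ∫ t in Ioi y, φ t = 0 := by
    intro y hy
    have hz : ∀ᵐ x ∂(volume.restrict (Ioi y)), φ x = 0 := by
      have h1 := ae_restrict_of_ae (s := Ioi y) hsupp2
      have h2 := ae_restrict_mem (μ := volume) (measurableSet_Ioi (a := y))
      filter_upwards [h1, h2] with x hx1 hx2
      apply hx1
      intro hmem
      have : x ≤ β₁ := hmem.2
      have : β₁ < x := lt_of_le_of_lt hy hx2
      linarith
    exact integral_eq_zero_of_ae hz
  have hΦI : ∀ y : ℝ, β₁ ≤ y → Φ y = I := by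
    intro y hy
    have := intervalIntegral.integral_Iic_add_Ioi (b := y) hint.integrableOn hint.integrableOn (μ := volume)
    rw [hIoi_zero y hy] at this
    simpa [hΦ_def, hI_def] using this
  -- integrability of dilated functions
  have hi : ∀ β : ℝ, Integrable (fun t : ℝ => φ (2 * t - β)) := by
    intro β
    have h1 : Integrable (fun u : ℝ => φ (u - β)) := hint.comp_sub_right β
    simpa using h1.comp_mul_left' (two_ne_zero)
  -- the key functional equation for Φ
  have key : ∀ x : ℝ, Φ x = c₀ / 2 * Φ (2 * x - β₀) + c₁ / 2 * Φ (2 * x - β₁) := by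
    intro x
    have h1 : Φ x = ∫ t in Iic x, (c₀ * φ (2 * t - β₀) + c₁ * φ (2 * t - β₁)) :=
      integral_congr_ae (ae_restrict_of_ae heq)
    rw [h1, integral_add (((hi β₀).const_mul c₀).integrableOn)
        (((hi β₁).const_mul c₁).integrableOn),
      integral_const_mul, integral_const_mul, TwoScaleAux.cov φ β₀ x, TwoScaleAux.cov φ β₁ x]
    ring
  -- essential bound
  have hMfin : eLpNormEssSup φ volume ≠ ⊤ := by
    have h := hbdd.2
    rw [eLpNorm_exponent_top] at h
    exact h.ne
  set M : ℝ := (eLpNormEssSup φ volume).toReal with hM_def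
  have hM : ∀ᵐ x : ℝ, ‖φ x‖ ≤ M := by
    filter_upwards [ae_le_eLpNormEssSup (f := φ) (μ := volume)] with x hx
    have h2 := ENNReal.toReal_mono hMfin hx
    simpa [hM_def] using h2
  have hM0 : 0 ≤ M := ENNReal.toReal_nonneg
  -- edge bounds
  have bIoc : ∀ a b : ℝ, a ≤ b → ‖∫ t in Ioc a b, φ t‖ ≤ M * (b - a) := by
    intro a b hab
    have hvol : volume (Ioc a b) < ⊤ := by
      rw [Real.volume_Ioc]; exact ENNReal.ofReal_lt_top
    have hb := norm_setIntegral_le_of_norm_le_const_ae (C := M) hvol (ae_restrict_of_ae hM)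
    rw [Real.volume_real_Ioc, max_eq_left (by linarith)] at hb
    exact hb
  have hsplit : ∀ a b : ℝ, a ≤ b → Φ b = Φ a + ∫ t in Ioc a b, φ t := by
    intro a b hab
    have hu : Iic a ∪ Ioc a b = Iic b := Iic_union_Ioc_eq_Iic hab
    have := setIntegral_union (s := Iic a) (t := Ioc a b) (f := φ) (μ := volume)
      (Iic_disjoint_Ioc (le_refl a)) measurableSet_Ioc hint.integrableOn hint.integrableOn
    rw [hu] at this
    simpa [hΦ_def] using this
  have b1 : ∀ t : ℝ, 0 ≤ t → ‖Φ (β₀ + t)‖ ≤ M * t := by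
    intro t ht
    have h := hsplit β₀ (β₀ + t) (by linarith)
    rw [hΦ0 β₀ le_rfl, zero_add] at h
    rw [h]
    have := bIoc β₀ (β₀ + t) (by linarith)
    simpa using this
  have b2 : ∀ t : ℝ, 0 ≤ t → ‖Φ (β₁ - t) - I‖ ≤ M * t := by
    intro t ht
    have h := hsplit (β₁ - t) β₁ (by linarith)
    rw [hΦI β₁ le_rfl] at h
    have h2 : Φ (β₁ - t) - I = -∫ t in Ioc (β₁ - t) β₁, φ t := by
      rw [h]; ring
    rw [h2, norm_neg]
    have := bIoc (β₁ - t) β₁ (by linarith)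
    simpa using this
  -- global bound
  set L : ℝ := ∫ t : ℝ, ‖φ t‖ with hL_def
  have hL0 : 0 ≤ L := integral_nonneg (fun t => norm_nonneg _)
  have hb : ∀ x : ℝ, ‖Φ x‖ ≤ L := by
    intro x
    calc ‖Φ x‖ ≤ ∫ t in Iic x, ‖φ t‖ := norm_integral_le_integral_norm φ
    _ ≤ L := setIntegral_le_integral hint.norm (Eventually.of_forall (fun t => norm_nonneg _))
  -- Φ ≡ 0 implies φ = 0 a.e.
  have Φzero : (∀ x : ℝ, Φ x = 0) → False := by
    intro hΦall
    have hI0 : I = 0 := by rw [← hΦI β₁ le_rfl, hΦall β₁]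
    have hsets : ∀ ⦃t : Set ℝ⦄, MeasurableSet t → ∫ x in t, φ x = 0 := by
      refine MeasurableSpace.induction_on_inter (borel_eq_generateFrom_Iic ℝ)
        isPiSystem_Iic ?_ ?_ ?_ ?_
      · simp
      · rintro t ⟨b, rfl⟩
        exact hΦall b
      · intro t htm ht0
        have := integral_add_compl htm hint (f := φ)
        rw [ht0, zero_add] at this
        rw [this, ← hI_def, hI0]
      · intro g hdisj hgm hg0
        rw [integral_iUnion hgm hdisj hint.integrableOn]
        simp [hg0]
    exact hne (hint.ae_eq_zero_of_forall_setIntegral_eq_zero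
      (fun t ht _ => hsets ht))
  -- left and right relations
  have leftrel : ∀ x : ℝ, x ≤ m → Φ x = c₀ / 2 * Φ (2 * x - β₀) := by
    intro x hx
    have h := key x
    rw [hΦ0 (2 * x - β₁) (by simp only [hm_def] at hx; linarith)] at h
    rw [h]; ring
  have hI2 : I = c₀ / 2 * I + c₁ / 2 * I := by
    have h := key β₁
    rw [hΦI β₁ le_rfl, hΦI (2 * β₁ - β₀) (by linarith), hΦI (2 * β₁ - β₁) (by linarith)] at h
    exact h
  have rightrel : ∀ x : ℝ, m ≤ x → Φ x - I = c₁ / 2 * (Φ (2 * x - β₁) - I) := by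
    intro x hx
    have h := key x
    rw [hΦI (2 * x - β₀) (by simp only [hm_def] at hx; linarith)] at h
    linear_combination h - hI2
  -- |c₀| ≤ 1
  have hc0 : ‖c₀‖ ≤ 1 := by
    by_contra hcon
    push_neg at hcon
    have hf0 := TwoScaleAux.contract (fun t => Φ (β₀ + t)) c₀ s M hs
      (fun t ht => by
        have := leftrel (β₀ + t) (by simp only [hm_def, hs_def] at *; linarith)
        simpa [show 2 * (β₀ + t) - β₀ = β₀ + 2 * t by ring] using this)
      (fun t ht => b1 t ht) hcon
    apply Φzero
    intro x
    rcases le_or_gt x β₀ with hx | hx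
    · exact hΦ0 x hx
    rcases le_or_gt x β₁ with hx2 | hx2
    · have := hf0 (x - β₀) (by linarith) (by simp only [hs_def]; linarith)
      simpa using this
    · rw [hΦI x hx2.le, ← hΦI β₁ le_rfl]
      have := hf0 s hs le_rfl
      simpa [hs_def, show β₀ + (β₁ - β₀) = β₁ by ring] using this
  -- |c₁| ≤ 1
  have hc1 : ‖c₁‖ ≤ 1 := by
    by_contra hcon
    push_neg at hcon
    have hg0 := TwoScaleAux.contract (fun t => Φ (β₁ - t) - I) c₁ s M hs
      (fun t ht => by
        have := rightrel (β₁ - t) (by simp only [hm_def, hs_def] at *; linarith)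
        simpa [show 2 * (β₁ - t) - β₁ = β₁ - 2 * t by ring] using this)
      (fun t ht => b2 t ht) hcon
    have hI0 : I = 0 := by
      have := hg0 s hs le_rfl
      have h2 : Φ (β₁ - s) = 0 := hΦ0 (β₁ - s) (by simp only [hs_def]; linarith)
      simp only [h2, zero_sub, neg_eq_zero] at this
      exact this
    apply Φzero
    intro x
    rcases le_or_gt x β₀ with hx | hx
    · exact hΦ0 x hx
    rcases lt_or_ge x β₁ with hx2 | hx2
    · have := hg0 (β₁ - x) (by linarith) (by simp only [hs_def]; linarith)
      have h3 : Φ (β₁ - (β₁ - x)) - I = 0 := this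
      rw [hI0, sub_zero] at h3
      simpa using h3
    · rw [hΦI x hx2, hI0]
  -- I ≠ 0
  have hIne : I ≠ 0 := by
    intro hI0
    have right0 : ∀ x : ℝ, m ≤ x → Φ x = c₁ / 2 * Φ (2 * x - β₁) := by
      intro x hx
      have := rightrel x hx
      rw [hI0, sub_zero, sub_zero] at this
      exact this
    have hLn : ∀ n : ℕ, ∀ x : ℝ, β₀ ≤ x → x ≤ β₁ → ‖Φ x‖ ≤ L / 2 ^ n := by
      intro n
      induction n with
      | zero => intro x _ _; simpa using hb x
      | succ n ih =>
        intro x hx1 hx2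
        have hhalf : (0:ℝ) < 2 ^ n := by positivity
        rcases le_or_gt x m with hxm | hxm
        · rw [leftrel x hxm]
          have h1 : ‖Φ (2 * x - β₀)‖ ≤ L / 2 ^ n :=
            ih _ (by linarith) (by simp only [hm_def] at hxm; linarith)
          calc ‖c₀ / 2 * Φ (2 * x - β₀)‖ = ‖c₀‖ / 2 * ‖Φ (2 * x - β₀)‖ := by
                rw [norm_mul, norm_div]; norm_num
          _ ≤ 1 / 2 * (L / 2 ^ n) := by
              apply mul_le_mul (by linarith) h1 (norm_nonneg _) (by norm_num)
          _ = L / 2 ^ (n + 1) := by rw [pow_succ]; ring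
        · rw [right0 x hxm.le]
          have h1 : ‖Φ (2 * x - β₁)‖ ≤ L / 2 ^ n :=
            ih _ (by simp only [hm_def] at hxm; linarith) (by linarith)
          calc ‖c₁ / 2 * Φ (2 * x - β₁)‖ = ‖c₁‖ / 2 * ‖Φ (2 * x - β₁)‖ := by
                rw [norm_mul, norm_div]; norm_num
          _ ≤ 1 / 2 * (L / 2 ^ n) := by
              apply mul_le_mul (by linarith) h1 (norm_nonneg _) (by norm_num)
          _ = L / 2 ^ (n + 1) := by rw [pow_succ]; ring
    have hzero : ∀ x : ℝ, β₀ ≤ x → x ≤ β₁ → Φ x = 0 := by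
      intro x hx1 hx2
      apply TwoScaleAux.eq_zero_of_forall_pow_mul_le (Φ x) L 2 one_lt_two
      intro n
      have h2n : (0:ℝ) < 2 ^ n := by positivity
      have := hLn n x hx1 hx2
      rw [le_div_iff₀ h2n] at this
      linarith
    apply Φzero
    intro x
    rcases le_or_gt x β₀ with hx | hx
    · exact hΦ0 x hx
    rcases le_or_gt x β₁ with hx2 | hx2
    · exact hzero x hx.le hx2
    · rw [hΦI x hx2.le]; exact hI0
  -- conclude c₀ + c₁ = 2
  have hsum : c₀ + c₁ = 2 := by
    have h : (2 - c₀ - c₁) * I = 0 := by linear_combination (2:ℂ) * hI2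
    rcases mul_eq_zero.1 h with h | h
    · linear_combination -h
    · exact absurd h hIne
  -- finish
  have hre0 : c₀.re ≤ 1 := le_trans (Complex.re_le_norm c₀) hc0
  have hre1 : c₁.re ≤ 1 := le_trans (Complex.re_le_norm c₁) hc1
  have hsumre : c₀.re + c₁.re = 2 := by
    have := congrArg Complex.re hsum
    simpa using this
  have hsumim : c₀.im + c₁.im = 0 := by
    have := congrArg Complex.im hsum
    simpa using this
  have hre0' : c₀.re = 1 := by linarith
  have hre1' : c₁.re = 1 := by linarith
  have him0 : c₀.im = 0 := by
    have h1 : Complex.normSq c₀ ≤ 1 := by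
      rw [← Complex.sq_norm]
      nlinarith [norm_nonneg c₀]
    have h2 : Complex.normSq c₀ = 1 + c₀.im ^ 2 := by
      rw [Complex.normSq_apply, hre0']; ring
    nlinarith [sq_nonneg c₀.im]
  have him1 : c₁.im = 0 := by linarith
  constructor
  · apply Complex.ext <;> simp [hre0', him0]
  · apply Complex.ext <;> simp [hre1', him1]
end

section
/- Let 1 < λ < 2 be a real number, β_0 < β_1 real numbers, and c_0, c_1 ∈ ℂ. If φ : ℝ → ℂ is a continuous, compactly supported, not identically zero solution of φ(x) = c_0 φ(λx − β_0) + c_1 φ(λx − β_1) (a.e.), and φ is Hölder continuous with exponent μ > 0, then μ ≤ 1/log₂λ − 1, i.e., (μ + 1)·ln λ ≤ ln 2. -/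
open MeasureTheory Filter

private lemma aux_pow_le_one {q C : ℝ} (h : ∀ n : ℕ, q ^ n ≤ C) : q ≤ 1 := by
  by_contra hlt
  push_neg at hlt
  obtain ⟨n, hn⟩ := pow_unbounded_of_one_lt C hlt
  exact absurd (h n) (not_le.mpr hn)

private lemma aux_edge {lam μ M t₀ t₁ : ℝ} {c : ℂ} {F : ℝ → ℂ}
    (hlam : 1 < lam)
    (hrec : ∀ t : ℝ, 0 < t → t ≤ t₀ → F t = c * F (lam * t))
    (hHol : ∀ t : ℝ, 0 ≤ t → ‖F t‖ ≤ M * t ^ μ)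
    (ht₁ : 0 < t₁) (ht₁' : t₁ ≤ t₀) (hF : F t₁ ≠ 0) :
    ‖c‖ * lam ^ μ ≤ 1 := by
  have hlam0 : (0:ℝ) < lam := lt_trans one_pos hlam
  have key : ∀ n : ℕ, F (t₁ / lam ^ n) = c ^ n * F t₁ := by
    intro n
    induction n with
    | zero => simp
    | succ n ih =>
      have hpow : (0:ℝ) < lam ^ (n+1) := pow_pos hlam0 _
      have h1 : 0 < t₁ / lam ^ (n+1) := div_pos ht₁ hpow
      have hone : (1:ℝ) ≤ lam ^ (n+1) := one_le_pow₀ hlam.le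
      have h2 : t₁ / lam ^ (n+1) ≤ t₀ := le_trans (div_le_self ht₁.le hone) ht₁'
      have h3 : lam * (t₁ / lam ^ (n+1)) = t₁ / lam ^ n := by
        field_simp
        ring
      rw [hrec _ h1 h2, h3, ih, pow_succ]
      ring
  have hFpos : 0 < ‖F t₁‖ := norm_pos_iff.mpr hF
  refine aux_pow_le_one (C := M * t₁ ^ μ / ‖F t₁‖) ?_
  intro n
  have hstep := hHol (t₁ / lam ^ n) (div_pos ht₁ (pow_pos hlam0 n)).le
  rw [key n, norm_mul, norm_pow] at hstep
  have hrpow : (t₁ / lam ^ n) ^ μ = t₁ ^ μ / (lam ^ μ) ^ n := by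
    rw [Real.div_rpow ht₁.le (pow_pos hlam0 n).le, ← Real.rpow_natCast lam n,
      ← Real.rpow_natCast (lam ^ μ) n, ← Real.rpow_mul hlam0.le, ← Real.rpow_mul hlam0.le,
      mul_comm]
  rw [hrpow] at hstep
  have hp : (0:ℝ) < (lam ^ μ) ^ n := pow_pos (Real.rpow_pos_of_pos hlam0 μ) n
  rw [le_div_iff₀ hFpos]
  calc (‖c‖ * lam ^ μ) ^ n * ‖F t₁‖
      = ‖c‖ ^ n * ‖F t₁‖ * (lam ^ μ) ^ n := by rw [mul_pow]; ring
    _ ≤ M * (t₁ ^ μ / (lam ^ μ) ^ n) * (lam ^ μ) ^ n := by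
        exact mul_le_mul_of_nonneg_right hstep hp.le
    _ = M * t₁ ^ μ := by field_simp

/-- If `1 < λ < 2` and `φ` is a continuous, compactly supported, not identically zero
solution of the two-term two-scale difference equation which is Hölder continuous with
exponent `μ > 0`, then `μ ≤ 1/log₂ λ - 1`, i.e. `(μ + 1) * ln λ ≤ ln 2`. -/
theorem two_term_two_scale_holder_bound (lam : ℝ) (hlam₁ : 1 < lam) (hlam₂ : lam < 2)
    (β₀ β₁ : ℝ) (hβ : β₀ < β₁) (c₀ c₁ : ℂ)
    (φ : ℝ → ℂ) (hcont : Continuous φ) (hsupp : HasCompactSupport φ)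
    (hne : φ ≠ 0)
    (heq : ∀ᵐ x : ℝ, φ x = c₀ * φ (lam * x - β₀) + c₁ * φ (lam * x - β₁))
    (μ : ℝ) (hμ : 0 < μ)
    (hHolder : ∃ M > (0 : ℝ), ∀ x y : ℝ, ‖φ x - φ y‖ ≤ M * |x - y| ^ μ) :
    (μ + 1) * Real.log lam ≤ Real.log 2 := by
  obtain ⟨M, hM, hHol⟩ := hHolder
  have hlam0 : (0:ℝ) < lam := lt_trans one_pos hlam₁
  have hlamm1 : (0:ℝ) < lam - 1 := sub_pos.mpr hlam₁
  -- the equation holds everywhere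
  have heq' : ∀ x : ℝ, φ x = c₀ * φ (lam * x - β₀) + c₁ * φ (lam * x - β₁) := by
    have hgcont : Continuous (fun x => c₀ * φ (lam * x - β₀) + c₁ * φ (lam * x - β₁)) := by
      fun_prop
    have := (Continuous.ae_eq_iff_eq volume hcont hgcont).mp heq
    exact fun x => congrFun this x
  -- the support
  set K := tsupport φ with hK
  have hKne : K.Nonempty := by
    rcases Function.ne_iff.mp hne with ⟨x, hx⟩
    exact ⟨x, subset_tsupport φ hx⟩
  have hKcl : IsClosed K := isClosed_tsupport φ
  have hKc : IsCompact K := hsupp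
  have hbddB : BddBelow K := hKc.bddBelow
  have hbddA : BddAbove K := hKc.bddAbove
  set a := sInf K with ha
  set b := sSup K with hb
  have haK : a ∈ K := hKcl.csInf_mem hKne hbddB
  have hbK : b ∈ K := hKcl.csSup_mem hKne hbddA
  have hmema : ∀ x ∈ K, a ≤ x := fun x hx => csInf_le hbddB hx
  have hmemb : ∀ x ∈ K, x ≤ b := fun x hx => le_csSup hbddA hx
  have hzero : ∀ x : ℝ, x ∉ K → φ x = 0 := fun x hx => image_eq_zero_of_notMem_tsupport hx
  -- φ vanishes on (-∞, a] and [b, ∞)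
  have hza : ∀ x : ℝ, x ≤ a → φ x = 0 := by
    have h1 : Set.EqOn φ 0 (Set.Iio a) := fun x hx =>
      hzero x (fun hxK => absurd (hmema x hxK) (not_le.mpr hx))
    have h2 : Set.EqOn φ 0 (closure (Set.Iio a)) := h1.closure hcont continuous_const
    intro x hx
    exact h2 (by rw [closure_Iio]; exact hx)
  have hzb : ∀ x : ℝ, b ≤ x → φ x = 0 := by
    have h1 : Set.EqOn φ 0 (Set.Ioi b) := fun x hx =>
      hzero x (fun hxK => absurd (hmemb x hxK) (not_le.mpr hx))
    have h2 : Set.EqOn φ 0 (closure (Set.Ioi b)) := h1.closure hcont continuous_const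
    intro x hx
    exact h2 (by rw [closure_Ioi]; exact hx)
  -- if φ vanishes beyond c, then b ≤ c (resp. c ≤ a)
  have hKsub : ∀ c : ℝ, (∀ x, c < x → φ x = 0) → b ≤ c := by
    intro c hc
    have hsub : K ⊆ Set.Iic c := by
      rw [hK, tsupport]
      refine closure_minimal ?_ isClosed_Iic
      intro x hx
      by_contra hxc
      exact (Function.mem_support.mp hx) (hc x (not_le.mp hxc))
    exact hsub hbK
  have hKsub' : ∀ c : ℝ, (∀ x, x < c → φ x = 0) → c ≤ a := by
    intro c hc
    have hsub : K ⊆ Set.Ici c := by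
      rw [hK, tsupport]
      refine closure_minimal ?_ isClosed_Ici
      intro x hx
      by_contra hxc
      exact (Function.mem_support.mp hx) (hc x (not_le.mp hxc))
    exact hsub haK
  -- a < b
  have hab : a < b := by
    by_contra hcon
    push_neg at hcon  -- b ≤ a
    refine hne (funext fun x => ?_)
    rcases le_or_gt x a with h | h
    · exact hza x h
    · exact hzb x (le_trans hcon h.le)
  -- (lam-1)*b ≤ β₁
  have hbp1 : (lam - 1) * b ≤ β₁ := by
    have hz : ∀ x, (b + β₁)/lam < x → φ x = 0 := by
      intro x hx
      have h1 : b ≤ lam * x - β₁ := by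
        rw [div_lt_iff₀ hlam0] at hx
        linarith
      have h2 : b ≤ lam * x - β₀ := by linarith
      rw [heq' x, hzb _ h1, hzb _ h2, mul_zero, mul_zero, add_zero]
    have := hKsub _ hz
    rw [le_div_iff₀ hlam0] at this
    linarith
  -- β₀ ≤ (lam-1)*a
  have hap0 : β₀ ≤ (lam - 1) * a := by
    have hz : ∀ x, x < (a + β₀)/lam → φ x = 0 := by
      intro x hx
      have h1 : lam * x - β₀ ≤ a := by
        rw [lt_div_iff₀ hlam0] at hx
        linarith
      have h2 : lam * x - β₁ ≤ a := by linarith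
      rw [heq' x, hza _ h1, hza _ h2, mul_zero, mul_zero, add_zero]
    have := hKsub' _ hz
    rw [div_le_iff₀ hlam0] at this
    linarith
  -- c₀ ≠ 0
  have hc₀ : c₀ ≠ 0 := by
    intro hc
    have hz : ∀ x, x < (a + β₁)/lam → φ x = 0 := by
      intro x hx
      have h1 : lam * x - β₁ ≤ a := by
        rw [lt_div_iff₀ hlam0] at hx
        linarith
      rw [heq' x, hc, hza _ h1, zero_mul, mul_zero, zero_add]
    have := hKsub' _ hz
    rw [div_le_iff₀ hlam0] at this
    nlinarith
  -- c₁ ≠ 0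
  have hc₁ : c₁ ≠ 0 := by
    intro hc
    have hz : ∀ x, (b + β₀)/lam < x → φ x = 0 := by
      intro x hx
      have h1 : b ≤ lam * x - β₀ := by
        rw [div_lt_iff₀ hlam0] at hx
        linarith
      rw [heq' x, hc, hzb _ h1, zero_mul, mul_zero, add_zero]
    have := hKsub _ hz
    rw [le_div_iff₀ hlam0] at this
    nlinarith
  -- lam * a - β₀ = a
  have haeq : lam * a - β₀ = a := by
    have hle : a ≤ lam * a - β₀ := by linarith [hap0]
    have hz : ∀ y, y < lam * a - β₀ → φ y = 0 := by
      intro y hy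
      have hxa : (y + β₀)/lam ≤ a := by
        rw [div_le_iff₀ hlam0]
        linarith
      have h2 : lam * ((y + β₀)/lam) - β₁ ≤ a := by
        have : lam * ((y + β₀)/lam) = y + β₀ := by field_simp
        rw [this]
        nlinarith [hbp1, hab]
      have := heq' ((y + β₀)/lam)
      rw [hza _ hxa, hza _ h2, mul_zero, add_zero] at this
      have hφy : φ (lam * ((y + β₀)/lam) - β₀) = 0 := by
        rcases mul_eq_zero.mp this.symm with h | h
        · exact absurd h hc₀
        · exact h
      have harg : lam * ((y + β₀)/lam) - β₀ = y := by field_simp; ring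
      rwa [harg] at hφy
    have := hKsub' _ hz
    linarith
  -- lam * b - β₁ = b
  have hbeq : lam * b - β₁ = b := by
    have hle : lam * b - β₁ ≤ b := by linarith [hbp1]
    have hz : ∀ y, lam * b - β₁ < y → φ y = 0 := by
      intro y hy
      have hxb : b ≤ (y + β₁)/lam := by
        rw [le_div_iff₀ hlam0]
        linarith
      have h2 : b ≤ lam * ((y + β₁)/lam) - β₀ := by
        have : lam * ((y + β₁)/lam) = y + β₁ := by field_simp
        rw [this]
        nlinarith [hap0, hab]
      have := heq' ((y + β₁)/lam)
      rw [hzb _ hxb, hzb _ h2, mul_zero, zero_add] at this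
      have hφy : φ (lam * ((y + β₁)/lam) - β₁) = 0 := by
        rcases mul_eq_zero.mp this.symm with h | h
        · exact absurd h hc₁
        · exact h
      have harg : lam * ((y + β₁)/lam) - β₁ = y := by field_simp; ring
      rwa [harg] at hφy
    have := hKsub _ hz
    linarith
  -- edge estimates
  set Δ := β₁ - β₀ with hΔ
  have hΔpos : 0 < Δ := sub_pos.mpr hβ
  set t₀ := Δ / lam with ht₀
  have ht₀pos : 0 < t₀ := div_pos hΔpos hlam0
  -- |c₀| * lam^μ ≤ 1
  have hedge₀ : ‖c₀‖ * lam ^ μ ≤ 1 := by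
    have hrec : ∀ t : ℝ, 0 < t → t ≤ t₀ → φ (a + t) = c₀ * φ (lam * t + a) := by
      intro t ht ht'
      have harg1 : lam * (a + t) - β₀ = lam * t + a := by linarith [haeq]
      have harg2 : lam * (a + t) - β₁ ≤ a := by
        have : lam * t ≤ Δ := by
          rw [ht₀, le_div_iff₀ hlam0] at ht'
          linarith
        linarith [haeq]
      rw [heq' (a + t), harg1, hza _ harg2, mul_zero, add_zero]
    obtain ⟨y, hy, hyd⟩ : ∃ y, φ y ≠ 0 ∧ dist a y < t₀ := by
      have haK' : a ∈ closure (Function.support φ) := haK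
      rcases Metric.mem_closure_iff.mp haK' t₀ ht₀pos with ⟨y, hy, hyd⟩
      exact ⟨y, hy, hyd⟩
    have hya : a < y := by
      by_contra hcon
      exact hy (hza y (not_lt.mp hcon))
    refine aux_edge (M := M) (F := fun t => φ (a + t)) (t₀ := t₀) (t₁ := y - a) hlam₁ ?_ ?_
      (sub_pos.mpr hya) ?_ ?_
    · intro t ht ht'
      rw [hrec t ht ht', add_comm (lam * t) a]
    · intro t ht
      have := hHol (a + t) a
      rw [hza a le_rfl, sub_zero] at this
      simpa [abs_of_nonneg ht] using this
    · rw [Real.dist_eq, abs_sub_comm, abs_of_pos (sub_pos.mpr hya)] at hyd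
      linarith
    · simpa using hy
  -- |c₁| * lam^μ ≤ 1
  have hedge₁ : ‖c₁‖ * lam ^ μ ≤ 1 := by
    have hrec : ∀ t : ℝ, 0 < t → t ≤ t₀ → φ (b - t) = c₁ * φ (b - lam * t) := by
      intro t ht ht'
      have harg1 : lam * (b - t) - β₁ = b - lam * t := by linarith [hbeq]
      have harg2 : b ≤ lam * (b - t) - β₀ := by
        have : lam * t ≤ Δ := by
          rw [ht₀, le_div_iff₀ hlam0] at ht'
          linarith
        linarith [hbeq]
      rw [heq' (b - t), harg1, hzb _ harg2, mul_zero, zero_add]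
    obtain ⟨y, hy, hyd⟩ : ∃ y, φ y ≠ 0 ∧ dist b y < t₀ := by
      have hbK' : b ∈ closure (Function.support φ) := hbK
      rcases Metric.mem_closure_iff.mp hbK' t₀ ht₀pos with ⟨y, hy, hyd⟩
      exact ⟨y, hy, hyd⟩
    have hyb : y < b := by
      by_contra hcon
      exact hy (hzb y (not_lt.mp hcon))
    refine aux_edge (M := M) (F := fun t => φ (b - t)) (t₀ := t₀) (t₁ := b - y) hlam₁ ?_ ?_
      (sub_pos.mpr hyb) ?_ ?_
    · intro t ht ht'
      rw [hrec t ht ht']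
    · intro t ht
      have := hHol (b - t) b
      rw [hzb b le_rfl, sub_zero] at this
      simpa [abs_of_nonneg ht] using this
    · rw [Real.dist_eq, abs_of_pos (sub_pos.mpr hyb)] at hyd
      linarith
    · simpa using hy
  -- L¹ estimate: lam ≤ |c₀| + |c₁|
  set A : ℝ → ℝ := fun x => ‖φ x‖ with hA
  have hAcont : Continuous A := continuous_norm.comp hcont
  have hAsupp : HasCompactSupport A := hsupp.comp_left (g := norm) norm_zero
  have hAint : Integrable A := hAcont.integrable_of_hasCompactSupport hAsupp
  set I := ∫ x, A x with hI
  have hIpos : 0 < I := by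
    rw [hI, integral_pos_iff_support_of_nonneg_ae (Eventually.of_forall fun x =>
      norm_nonneg _) hAint]
    have hsuppeq : Function.support A = Function.support φ := by
      ext x
      simp [hA, Function.mem_support, map_ne_zero]
    rw [hsuppeq]
    have hopen : IsOpen (Function.support φ) := by
      have heqset : Function.support φ = φ ⁻¹' ({0}ᶜ) := by
        ext x
        simp [Function.mem_support]
      rw [heqset]
      exact isOpen_compl_singleton.preimage hcont
    rcases Function.ne_iff.mp hne with ⟨x, hx⟩
    exact hopen.measure_pos volume ⟨x, hx⟩
  -- integrability of the rescaled functions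
  have hint : ∀ β : ℝ, Integrable (fun x => A (lam * x - β)) := by
    intro β
    have hc : Continuous (fun x : ℝ => lam * x - β) := (continuous_const.mul continuous_id).sub continuous_const
    have hcs : HasCompactSupport (fun x => A (lam * x - β)) := by
      have := hAsupp.comp_homeomorph
        ((Homeomorph.mulLeft₀ lam hlam0.ne').trans (Homeomorph.subRight β))
      exact this
    exact (hAcont.comp hc).integrable_of_hasCompactSupport hcs
  have hcomp : ∀ β : ℝ, (∫ x, A (lam * x - β)) = lam⁻¹ * I := by
    intro β
    have h1 : (∫ x, A (lam * x - β)) = ∫ x, (fun y => A (y - β)) (lam * x) := rfl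
    rw [h1, MeasureTheory.Measure.integral_comp_mul_left (fun y => A (y - β)) lam,
      integral_sub_right_eq_self A β, smul_eq_mul, abs_of_pos (inv_pos.mpr hlam0), hI]
  have hmono : I ≤ ‖c₀‖ * (lam⁻¹ * I) + ‖c₁‖ * (lam⁻¹ * I) := by
    have hbnd : ∀ x, A x ≤ ‖c₀‖ * A (lam * x - β₀) + ‖c₁‖ * A (lam * x - β₁) := by
      intro x
      simp only [hA]
      rw [heq' x]
      exact (norm_add_le _ _).trans (by rw [norm_mul, norm_mul])
    calc I = ∫ x, A x := hI
      _ ≤ ∫ x, (‖c₀‖ * A (lam * x - β₀) + ‖c₁‖ * A (lam * x - β₁)) :=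
          integral_mono hAint (((hint β₀).const_mul _).add ((hint β₁).const_mul _)) hbnd
      _ = ‖c₀‖ * (lam⁻¹ * I) + ‖c₁‖ * (lam⁻¹ * I) := by
          rw [integral_add ((hint β₀).const_mul _) ((hint β₁).const_mul _),
            MeasureTheory.integral_const_mul, MeasureTheory.integral_const_mul, hcomp β₀, hcomp β₁]
  have hsum : lam ≤ ‖c₀‖ + ‖c₁‖ := by
    have h1 : lam * I ≤ (‖c₀‖ + ‖c₁‖) * I := by
      have h2 : lam * I ≤ lam * (‖c₀‖ * (lam⁻¹ * I) + ‖c₁‖ * (lam⁻¹ * I)) :=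
        mul_le_mul_of_nonneg_left hmono hlam0.le
      calc lam * I ≤ lam * (‖c₀‖ * (lam⁻¹ * I) + ‖c₁‖ * (lam⁻¹ * I)) := h2
        _ = (‖c₀‖ + ‖c₁‖) * I := by field_simp
    exact le_of_mul_le_mul_right (by linarith [h1]) hIpos
  -- combine
  have hrpos : (0:ℝ) < lam ^ μ := Real.rpow_pos_of_pos hlam0 μ
  have hfin : lam ^ (μ + 1) ≤ 2 := by
    rw [Real.rpow_add hlam0, Real.rpow_one]
    have h1 : lam * lam ^ μ ≤ (‖c₀‖ + ‖c₁‖) * lam ^ μ :=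
      mul_le_mul_of_nonneg_right hsum hrpos.le
    nlinarith [hedge₀, hedge₁]
  calc (μ + 1) * Real.log lam = Real.log (lam ^ (μ + 1)) := (Real.log_rpow hlam0 _).symm
    _ ≤ Real.log 2 := Real.log_le_log (Real.rpow_pos_of_pos hlam0 _) hfin
end

section
/- Let n be a nonnegative integer and let λ be a real number with λ^{n+1} > 2 (equivalently, α = 1/λ < 2^{−1/(n+1)}). If φ : ℝ → ℂ is n-times continuously differentiable with compact support and satisfies φ(x) = (λ/2)(φ(λx − 1) + φ(λx + 1)) for all x ∈ ℝ, then φ is identically zero. In other words, the Bernoulli two-scale equation has no solution in C_c^n(ℝ) \ {0} when α < 2^{−1/(n+1)}. -/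
open MeasureTheory Filter

private lemma bern_aux_zero (lam mu : ℝ) (hlam : 1 < lam) (hmu : 2 < mu)
    (ψ : ℝ → ℂ) (M R : ℝ) (hM : ∀ x, ‖ψ x‖ ≤ M) (hR : ∀ x, R ≤ x → ψ x = 0)
    (heq : ∀ x, ψ x = ((mu : ℂ)/2) * (ψ (lam*x - 1) + ψ (lam*x + 1))) :
    ∀ x, ψ x = 0 := by
  have hlam0 : (0:ℝ) < lam - 1 := by linarith
  have hlamp : (0:ℝ) < lam := by linarith
  set a : ℝ := 1/(lam - 1) with ha
  have haa : lam * a - 1 = a := by rw [ha]; field_simp; ring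
  have hM0 : 0 ≤ M := le_trans (norm_nonneg _) (hM 0)
  have hmup : (0:ℝ) < mu := by linarith
  have hmuC : (mu : ℂ) ≠ 0 := by exact_mod_cast hmup.ne'
  -- Step A: vanishing to the right of a
  have hstepA : ∀ k : ℕ, ∀ x : ℝ, a < x → R - a ≤ lam^k * (x - a) → ψ x = 0 := by
    intro k
    induction k with
    | zero =>
      intro x hx hxx
      apply hR; simp only [pow_zero, one_mul] at hxx; linarith
    | succ k IH =>
      intro x hx hxx
      have h1 : lam * x - 1 - a = lam * (x - a) := by linear_combination haa
      have h2 : lam * x + 1 - a = lam * (x - a) + 2 := by linear_combination haa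
      have hpos : 0 < lam * (x - a) := mul_pos hlamp (by linarith)
      have hy1 : ψ (lam*x - 1) = 0 := by
        apply IH
        · linarith
        · have e : lam^k * (lam*x - 1 - a) = lam^(k+1) * (x - a) := by
            rw [h1, pow_succ]; ring
          linarith [e, hxx]
      have hy2 : ψ (lam*x + 1) = 0 := by
        apply IH
        · linarith
        · have e : lam^k * (lam*x + 1 - a) = lam^(k+1) * (x - a) + 2 * lam^k := by
            rw [h2, pow_succ]; ring
          have : (0:ℝ) ≤ lam^k := by positivity
          linarith [e, hxx]
      rw [heq x, hy1, hy2]; simp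
  have hA : ∀ x, a < x → ψ x = 0 := by
    intro x hx
    obtain ⟨k, hk⟩ := pow_unbounded_of_one_lt ((R - a)/(x - a)) hlam
    refine hstepA k x hx ?_
    rw [div_lt_iff₀ (by linarith : (0:ℝ) < x - a)] at hk
    linarith
  -- Step B
  have hstepB : ∀ m : ℕ, ∀ x, a - 2*m < x → ψ x = 0 := by
    intro m
    induction m with
    | zero => intro x hx; exact hA x (by push_cast at hx; linarith)
    | succ m IH =>
      have key : ∀ k : ℕ, ∀ x, a - 2*m - 2 < x → x ≤ a - 2*m → ‖ψ x‖ ≤ (2/mu)^k * M := by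
        intro k
        induction k with
        | zero => intro x _ _; simpa using hM x
        | succ k IH2 =>
          intro x hx1 hx2
          have hx2a : x ≤ a := by
            have : (0:ℝ) ≤ 2*(m:ℝ) := by positivity
            linarith
          have hg : ψ ((x+1)/lam) = ((mu:ℂ)/2) * (ψ x + ψ (x+2)) := by
            have e1 : lam * ((x+1)/lam) - 1 = x := by field_simp; ring
            have e2 : lam * ((x+1)/lam) + 1 = x + 2 := by field_simp; ring
            rw [heq ((x+1)/lam), e1, e2]
          have h2 : ψ (x+2) = 0 := IH (x+2) (by linarith)
          rw [h2, add_zero] at hg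
          have hψx : ψ x = ((2:ℂ)/(mu:ℂ)) * ψ ((x+1)/lam) := by
            rw [hg]; field_simp
          have hnorm : ‖ψ x‖ = (2/mu) * ‖ψ ((x+1)/lam)‖ := by
            rw [hψx, norm_mul]
            congr 1
            have : ((2:ℂ)/(mu:ℂ)) = (((2/mu : ℝ)) : ℂ) := by push_cast; ring
            rw [this, Complex.norm_real, Real.norm_eq_abs, abs_of_pos (by positivity)]
          have hgge : x ≤ (x+1)/lam := by
            rw [le_div_iff₀ hlamp]
            have h1a : (lam - 1) * a = 1 := by rw [ha]; field_simp
            have := mul_le_mul_of_nonneg_left hx2a hlam0.le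
            nlinarith
          by_cases hcase : a - 2*m < (x+1)/lam
          · rw [hnorm, IH _ hcase]
            simp only [norm_zero, mul_zero]
            positivity
          · push_neg at hcase
            have hb := IH2 ((x+1)/lam) (by linarith) hcase
            rw [hnorm]
            calc (2/mu) * ‖ψ ((x+1)/lam)‖ ≤ (2/mu) * ((2/mu)^k * M) := by
                  apply mul_le_mul_of_nonneg_left hb (by positivity)
              _ = (2/mu)^(k+1) * M := by rw [pow_succ]; ring
      intro x hx
      push_cast at hx
      by_cases hxt : a - 2*m < x
      · exact IH x hxt
      · push_neg at hxt
        have hb : ∀ k:ℕ, ‖ψ x‖ ≤ (2/mu)^k * M := fun k => key k x (by linarith) hxt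
        have h0 : Tendsto (fun k : ℕ => (2/mu)^k * M) atTop (nhds 0) := by
          have ht := tendsto_pow_atTop_nhds_zero_of_lt_one
            (by positivity : (0:ℝ) ≤ 2/mu) (by rw [div_lt_one hmup]; linarith)
          simpa using ht.mul_const M
        have hle : ‖ψ x‖ ≤ 0 := ge_of_tendsto' h0 hb
        simpa using norm_le_zero_iff.mp hle
  intro x
  obtain ⟨m, hm⟩ := exists_nat_gt ((a - x)/2)
  refine hstepB m x ?_
  rw [div_lt_iff₀ (by norm_num : (0:ℝ) < 2)] at hm
  linarith

private lemma bern_down : ∀ (k : ℕ) (f : ℝ → ℂ), ContDiff ℝ k f → HasCompactSupport f →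
    iteratedDeriv k f = 0 → f = 0 := by
  intro k
  induction k with
  | zero => intro f _ _ h; rwa [iteratedDeriv_zero] at h
  | succ k IH =>
    intro f hf hsupp h
    have hf' : ContDiff ℝ ((k:WithTop ℕ∞) + 1) f := by exact_mod_cast hf
    have hd : Differentiable ℝ f := (contDiff_succ_iff_deriv.mp hf').1
    have hder : deriv f = 0 := by
      refine IH (deriv f) (contDiff_succ_iff_deriv.mp hf').2.2 hsupp.deriv ?_
      rw [← iteratedDeriv_succ']; exact h
    obtain ⟨y, hy⟩ := Set.ne_univ_iff_exists_notMem _ |>.mp (IsCompact.ne_univ hsupp)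
    funext x
    have hconst := is_const_of_deriv_eq_zero hd (fun z => by rw [hder]; rfl) x y
    rw [hconst]
    simpa using image_eq_zero_of_notMem_tsupport hy

/-- The Bernoulli two-scale equation `φ(x) = (λ/2)(φ(λx - 1) + φ(λx + 1))` has no nonzero
solution in `C_c^n(ℝ)` when `λ^(n+1) > 2` (i.e. `α = 1/λ < 2^(-1/(n+1))`). -/
theorem bernoulli_two_scale_no_Cn_solution (n : ℕ) (lam : ℝ) (hlam : 1 < lam)
    (hpow : 2 < lam ^ (n + 1))
    (φ : ℝ → ℂ) (hreg : ContDiff ℝ n φ) (hsupp : HasCompactSupport φ)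
    (heq : ∀ x : ℝ, φ x = ((lam : ℂ) / 2) * (φ (lam * x - 1) + φ (lam * x + 1))) :
    φ = 0 := by
  set ψ := iteratedDeriv n φ with hψdef
  -- n-th derivative of x ↦ φ (lam * x + c)
  have hkey : ∀ c : ℝ, iteratedDeriv n (fun x : ℝ => φ (lam * x + c))
      = fun x => (lam ^ n : ℝ) • iteratedDeriv n φ (lam * x + c) := by
    intro c
    have hg : ContDiff ℝ n (fun z : ℝ => φ (z + c)) :=
      hreg.comp (contDiff_id.add contDiff_const)
    have h1 : iteratedDeriv n (fun x : ℝ => (fun z : ℝ => φ (z + c)) (lam * x))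
        = fun x => lam ^ n • iteratedDeriv n (fun z : ℝ => φ (z + c)) (lam * x) :=
      iteratedDeriv_comp_const_smul hg lam
    funext x
    have h2 := congrFun h1 x
    simp only [] at h2
    rw [show (fun x : ℝ => φ (lam * x + c)) = (fun x : ℝ => (fun z : ℝ => φ (z + c)) (lam * x))
      from rfl, h2, iteratedDeriv_comp_add_const]
  have hcd : ∀ c : ℝ, ContDiff ℝ n (fun x : ℝ => φ (lam * x + c)) := by
    intro c
    exact hreg.comp ((contDiff_const.mul contDiff_id).add contDiff_const)
  have hψeq : ∀ x : ℝ, ψ x = ((lam^(n+1) : ℝ) : ℂ)/2 * (ψ (lam*x - 1) + ψ (lam*x + 1)) := by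
    intro x
    have hφfun : φ = ((lam:ℂ)/2) • ((fun x : ℝ => φ (lam * x + (-1))) + (fun x : ℝ => φ (lam * x + 1))) := by
      funext y
      simp only [Pi.smul_apply, Pi.add_apply, smul_eq_mul]
      rw [heq y]
      norm_num [sub_eq_add_neg]
    have step1 : ψ x = ((lam:ℂ)/2) • (iteratedDeriv n ((fun x : ℝ => φ (lam * x + (-1))) + (fun x : ℝ => φ (lam * x + 1))) x) := by
      rw [hψdef]
      conv_lhs => rw [hφfun]
      rw [← iteratedDerivWithin_univ, ← iteratedDerivWithin_univ]
      exact iteratedDerivWithin_const_smul (Set.mem_univ x) uniqueDiffOn_univ _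
        (((hcd (-1)).add (hcd 1)).contDiffWithinAt)
    have step2 : iteratedDeriv n ((fun x : ℝ => φ (lam * x + (-1))) + (fun x : ℝ => φ (lam * x + 1))) x
        = iteratedDeriv n (fun x : ℝ => φ (lam * x + (-1))) x + iteratedDeriv n (fun x : ℝ => φ (lam * x + 1)) x := by
      rw [← iteratedDerivWithin_univ, ← iteratedDerivWithin_univ, ← iteratedDerivWithin_univ]
      exact iteratedDerivWithin_add (Set.mem_univ x) uniqueDiffOn_univ
        (hcd (-1)).contDiffWithinAt (hcd 1).contDiffWithinAt
    rw [step1, step2, hkey (-1), hkey 1]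
    simp only [Complex.real_smul, smul_eq_mul, hψdef]
    rw [show lam * x + (-1) = lam * x - 1 by ring]
    push_cast
    ring
  -- ψ is continuous, compactly supported, bounded
  have hψcont : Continuous ψ := hreg.continuous_iteratedDeriv n le_rfl
  have hψsupp : HasCompactSupport ψ := by
    have h1 := (hsupp.iteratedFDeriv (𝕜 := ℝ) n).comp_left
      (g := fun L : ContinuousMultilinearMap ℝ (fun _ : Fin n => ℝ) ℂ => L (fun _ => 1)) rfl
    have : ((fun L : ContinuousMultilinearMap ℝ (fun _ : Fin n => ℝ) ℂ => L (fun _ => 1)) ∘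
        (iteratedFDeriv ℝ n φ)) = ψ := by
      funext x
      simp only [Function.comp_apply, hψdef, iteratedDeriv_eq_iteratedFDeriv]
    rwa [this] at h1
  obtain ⟨M, hM⟩ := hψsupp.exists_bound_of_continuous hψcont
  obtain ⟨r, hr⟩ := hψsupp.isBounded.subset_closedBall 0
  have hR : ∀ x, r + 1 ≤ x → ψ x = 0 := by
    intro x hx
    apply image_eq_zero_of_notMem_tsupport
    intro hmem
    have h1 := hr hmem
    rw [Metric.mem_closedBall, Real.dist_eq, sub_zero] at h1
    have := le_abs_self x
    linarith
  have hψ0 : ∀ x, ψ x = 0 := by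
    refine bern_aux_zero lam (lam^(n+1)) hlam hpow ψ M (r+1) hM hR ?_
    intro x
    have := hψeq x
    push_cast at this ⊢
    exact this
  exact bern_down n φ hreg hsupp (funext hψ0)
end

section
/- If φ : ℝ → ℂ is integrable, compactly supported, not almost everywhere zero, satisfies the de Rham equation φ(x) = φ(3x) + (1/3)[φ(3x − 1) + φ(3x + 1)] + (2/3)[φ(3x − 2) + φ(3x + 2)] for almost every x ∈ ℝ, and φ is continuous and Hölder continuous with exponent μ > 0, then μ ≤ −ln(2/3)/ln 3, i.e., 3^μ · (2/3) ≤ 1. -/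
open MeasureTheory Filter

/-- Core lemma: pointwise de Rham solution with support in `[-b, b]`,
with `b` the exact supremum of the support, `b > 0`, and Hölder continuity
forces the exponent bound. -/
lemma deRham_aux (φ : ℝ → ℂ)
    (heq : ∀ x : ℝ, φ x = φ (3 * x)
      + (1 / 3 : ℂ) * (φ (3 * x - 1) + φ (3 * x + 1))
      + (2 / 3 : ℂ) * (φ (3 * x - 2) + φ (3 * x + 2)))
    (b : ℝ) (hb : IsLUB (Function.support φ) b) (hbpos : 0 < b)
    (hlow : ∀ x : ℝ, x < -b → φ x = 0)
    (μ M : ℝ) (hμ : 0 < μ) (hM : 0 < M)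
    (hH : ∀ x y : ℝ, ‖φ x - φ y‖ ≤ M * |x - y| ^ μ) :
    (3 : ℝ) ^ μ * (2 / 3) ≤ 1 := by
  have h0 : ∀ x : ℝ, b < x → φ x = 0 := by
    intro x hx
    by_contra hne
    exact absurd (hb.1 (Function.mem_support.2 hne)) (not_le.2 hx)
  have hex : ∀ c : ℝ, c < b → ∃ x, φ x ≠ 0 ∧ c < x ∧ x ≤ b := by
    intro c hc
    obtain ⟨x, hxS, hcx, hxb⟩ := hb.exists_between hc
    exact ⟨x, hxS, hcx, hxb⟩
  -- Step A: b ≥ 1/2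
  have hbhalf : (1 / 2 : ℝ) ≤ b := by
    by_contra hlt
    push_neg at hlt
    have key : ∀ y : ℝ, 3 * b - 1 < y → φ y = 0 := by
      intro y hy
      rcases lt_or_ge y (1 - b) with h1 | h1
      · have e := heq ((y + 1) / 3)
        have e0 : φ ((y + 1) / 3) = 0 := h0 _ (by linarith)
        have e1 : φ (3 * ((y + 1) / 3)) = 0 := h0 _ (by nlinarith)
        have e2 : φ (3 * ((y + 1) / 3) + 1) = 0 := h0 _ (by nlinarith)
        have e3 : φ (3 * ((y + 1) / 3) + 2) = 0 := h0 _ (by nlinarith)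
        have e4 : φ (3 * ((y + 1) / 3) - 2) = 0 := hlow _ (by nlinarith)
        rw [show (3 : ℝ) * ((y + 1) / 3) - 1 = y by ring] at e
        rw [e0, e1, e2, e3, e4] at e
        linear_combination -3 * e
      · exact h0 _ (by linarith)
    have : b ≤ 3 * b - 1 := by
      apply hb.2
      intro x hx
      by_contra hxc
      push_neg at hxc
      exact hx (key x hxc)
    linarith
  -- Step B: self-similarity near the right edge
  have hrel : ∀ x : ℝ, (b + 1) / 3 < x → φ x = (2 / 3 : ℂ) * φ (3 * x - 2) := by
    intro x hx
    have e := heq x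
    rw [h0 (3 * x) (by linarith), h0 (3 * x - 1) (by linarith),
      h0 (3 * x + 1) (by linarith), h0 (3 * x + 2) (by linarith)] at e
    linear_combination e
  -- Step: b ≥ 1
  have hb1 : (1 : ℝ) ≤ b := by
    have key : ∀ y : ℝ, 3 * b - 2 < y → φ y = 0 := by
      intro y hy
      have hx : b < (y + 2) / 3 := by linarith
      have e := hrel ((y + 2) / 3) (by linarith)
      rw [show (3 : ℝ) * ((y + 2) / 3) - 2 = y by ring, h0 _ hx] at e
      linear_combination (-3 / 2 : ℂ) * e
    have : b ≤ 3 * b - 2 := by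
      apply hb.2
      intro x hx
      by_contra hxc
      push_neg at hxc
      exact hx (key x hxc)
    linarith
  -- Step: b ≤ 1
  have hb2 : b ≤ 1 := by
    by_contra hgt
    push_neg at hgt
    obtain ⟨x0, hx0ne, hx0gt, hx0le⟩ := hex ((b + 2) / 3) (by linarith)
    have e := hrel x0 (by linarith)
    rw [h0 (3 * x0 - 2) (by linarith)] at e
    simp at e
    exact hx0ne e
  have hbe : b = 1 := le_antisymm hb2 hb1
  subst hbe
  -- φ 1 = 0
  have hφ1 : φ 1 = 0 := by
    have e := hrel 1 (by norm_num)
    rw [show (3 : ℝ) * 1 - 2 = 1 by norm_num] at e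
    linear_combination 3 * e
  -- pick a nonzero value close to the edge
  obtain ⟨x0, hx0ne, hx0gt, hx0le⟩ := hex (2 / 3) (by norm_num)
  have hx0lt : x0 < 1 := lt_of_le_of_ne hx0le (by rintro rfl; exact hx0ne hφ1)
  set t0 : ℝ := 1 - x0 with ht0def
  have ht0pos : 0 < t0 := by simp [ht0def]; linarith
  have ht0lt : t0 < 1 / 3 := by simp [ht0def]; linarith
  -- iteration
  have hiter : ∀ n : ℕ, φ (1 - t0 / 3 ^ n) = (2 / 3 : ℂ) ^ n * φ x0 := by
    intro n
    induction n with
    | zero => simp [ht0def]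
    | succ n ih =>
      have h3n : (3 : ℝ) ≤ 3 ^ (n + 1) := by
        calc (3 : ℝ) = 3 ^ 1 := (pow_one 3).symm
        _ ≤ 3 ^ (n + 1) := by
          apply pow_le_pow_right₀ (by norm_num) (by omega)
      have hfrac : t0 / 3 ^ (n + 1) ≤ t0 / 3 := by gcongr
      have e := hrel (1 - t0 / 3 ^ (n + 1)) (by norm_num; linarith)
      rw [show (3 : ℝ) * (1 - t0 / 3 ^ (n + 1)) - 2 = 1 - t0 / 3 ^ n by
        rw [pow_succ]; field_simp; ring] at e
      rw [ih] at e
      rw [e, pow_succ]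
      ring
  -- Hölder estimate
  set c : ℝ := ‖φ x0‖ with hcdef
  have hcpos : 0 < c := by
    simpa [hcdef] using (norm_pos_iff.mpr hx0ne)
  have h3μ : (0 : ℝ) < (3 : ℝ) ^ μ := Real.rpow_pos_of_pos (by norm_num) μ
  have hkey : ∀ n : ℕ, ((3 : ℝ) ^ μ * (2 / 3)) ^ n * c ≤ M * t0 ^ μ := by
    intro n
    have h3npos : (0 : ℝ) < 3 ^ n := by positivity
    have hHn := hH (1 - t0 / 3 ^ n) 1
    rw [hφ1, sub_zero] at hHn
    rw [hiter n] at hHn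
    have hlhs : ‖(2 / 3 : ℂ) ^ n * φ x0‖ = (2 / 3 : ℝ) ^ n * c := by
      rw [norm_mul, norm_pow, ← hcdef]
      congr 2
      rw [show (2 / 3 : ℂ) = ((2 / 3 : ℝ) : ℂ) by norm_num, Complex.norm_real]
      norm_num
    rw [hlhs] at hHn
    have habs : |1 - t0 / 3 ^ n - 1| = t0 / 3 ^ n := by
      rw [show (1 : ℝ) - t0 / 3 ^ n - 1 = -(t0 / 3 ^ n) by ring, abs_neg,
        abs_of_pos (by positivity)]
    rw [habs] at hHn
    have hrpow : (t0 / 3 ^ n) ^ μ = t0 ^ μ / ((3 : ℝ) ^ μ) ^ n := by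
      rw [Real.div_rpow (le_of_lt ht0pos) (le_of_lt h3npos)]
      congr 1
      rw [← Real.rpow_natCast (3 : ℝ) n, ← Real.rpow_natCast ((3 : ℝ) ^ μ) n,
        ← Real.rpow_mul (by norm_num), ← Real.rpow_mul (by norm_num)]
      ring_nf
    rw [hrpow] at hHn
    have h3μn : (0 : ℝ) < ((3 : ℝ) ^ μ) ^ n := pow_pos h3μ n
    calc ((3 : ℝ) ^ μ * (2 / 3)) ^ n * c
        = ((3 : ℝ) ^ μ) ^ n * ((2 / 3 : ℝ) ^ n * c) := by rw [mul_pow]; ring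
      _ ≤ ((3 : ℝ) ^ μ) ^ n * (M * (t0 ^ μ / ((3 : ℝ) ^ μ) ^ n)) := by
          apply mul_le_mul_of_nonneg_left hHn (le_of_lt h3μn)
      _ = M * t0 ^ μ := by field_simp
  by_contra hcon
  push_neg at hcon
  have htend := tendsto_pow_atTop_atTop_of_one_lt hcon
  obtain ⟨n, hn⟩ := (htend.eventually_ge_atTop (M * t0 ^ μ / c + 1)).exists
  have := hkey n
  have hc1 : (M * t0 ^ μ / c + 1) * c ≤ ((3 : ℝ) ^ μ * (2 / 3)) ^ n * c :=
    mul_le_mul_of_nonneg_right hn (le_of_lt hcpos)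
  have hc2 : (M * t0 ^ μ / c + 1) * c = M * t0 ^ μ + c := by field_simp
  nlinarith

/-- A continuous, compactly supported, integrable, not a.e. zero solution of the
de Rham equation which is Hölder continuous with exponent `μ > 0` satisfies
`3^μ * (2/3) ≤ 1`, i.e. `μ ≤ -ln(2/3)/ln 3`. -/
theorem deRham_holder_exponent_bound
    (φ : ℝ → ℂ) (hint : Integrable φ)
    (hsupp : ∃ R : ℝ, ∀ᵐ x : ℝ, R < |x| → φ x = 0)
    (hne : ¬ φ =ᵐ[volume] 0)
    (heq : ∀ᵐ x : ℝ, φ x = φ (3 * x)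
      + (1 / 3 : ℂ) * (φ (3 * x - 1) + φ (3 * x + 1))
      + (2 / 3 : ℂ) * (φ (3 * x - 2) + φ (3 * x + 2)))
    (hcont : Continuous φ) (μ : ℝ) (hμ : 0 < μ)
    (hHolder : ∃ M > (0 : ℝ), ∀ x y : ℝ, ‖φ x - φ y‖ ≤ M * |x - y| ^ μ) :
    (3 : ℝ) ^ μ * (2 / 3) ≤ 1 := by
  obtain ⟨M, hM, hH⟩ := hHolder
  obtain ⟨R, hR⟩ := hsupp
  -- upgrade the refinement equation to a pointwise statement
  set g : ℝ → ℂ := fun x => φ (3 * x)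
      + (1 / 3 : ℂ) * (φ (3 * x - 1) + φ (3 * x + 1))
      + (2 / 3 : ℂ) * (φ (3 * x - 2) + φ (3 * x + 2)) with hgdef
  have hgcont : Continuous g := by
    apply Continuous.add
    apply Continuous.add
    · exact hcont.comp (by continuity)
    · exact continuous_const.mul ((hcont.comp (by continuity)).add
        (hcont.comp (by continuity)))
    · exact continuous_const.mul ((hcont.comp (by continuity)).add
        (hcont.comp (by continuity)))
  have heq' : ∀ x : ℝ, φ x = g x := by
    have : φ =ᵐ[volume] g := heq
    rw [Continuous.ae_eq_iff_eq volume hcont hgcont] at this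
    exact fun x => congrFun this x
  -- upgrade the support condition to a pointwise statement
  have hsupp' : ∀ x : ℝ, R < |x| → φ x = 0 := by
    intro x hx
    by_contra hxne
    have hVopen : IsOpen ({y : ℝ | R < |y|} ∩ Function.support φ) := by
      apply IsOpen.inter
      · exact isOpen_lt continuous_const continuous_abs
      · exact isOpen_ne_fun hcont continuous_const
    have hVnull : volume ({y : ℝ | R < |y|} ∩ Function.support φ) = 0 := by
      rw [ae_iff] at hR
      apply measure_mono_null _ hR
      intro y hy
      exact fun h => hy.2 (h hy.1)
    have := hVopen.measure_pos volume ⟨x, hx, hxne⟩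
    rw [hVnull] at this
    exact lt_irrefl 0 this
  -- the support is nonempty and bounded
  have hSne : (Function.support φ).Nonempty := by
    by_contra h
    rw [Set.not_nonempty_iff_eq_empty, Function.support_eq_empty_iff] at h
    exact hne (Filter.Eventually.of_forall fun x => congrFun h x)
  have hbdd : ∀ x ∈ Function.support φ, |x| ≤ R := by
    intro x hx
    by_contra h
    exact hx (hsupp' x (not_le.1 h))
  have hbddAbove : BddAbove (Function.support φ) :=
    ⟨R, fun x hx => (abs_le.1 (hbdd x hx)).2⟩
  have hbddBelow : BddBelow (Function.support φ) :=
    ⟨-R, fun x hx => (abs_le.1 (hbdd x hx)).1⟩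
  set a : ℝ := sInf (Function.support φ) with hadef
  set b : ℝ := sSup (Function.support φ) with hbdef
  have hlub : IsLUB (Function.support φ) b := isLUB_csSup hSne hbddAbove
  have hglb : IsGLB (Function.support φ) a := isGLB_csInf hSne hbddBelow
  have hab : a < b := by
    rcases lt_or_ge a b with h | h
    · exact h
    · exfalso
      apply hne
      rw [Filter.EventuallyEq, ae_iff]
      refine measure_mono_null (t := {a}) ?_ Real.volume_singleton
      intro y hy
      simp only [Set.mem_setOf_eq, Pi.zero_apply] at hy
      have hyS : y ∈ Function.support φ := hy
      have h1 := hglb.1 hyS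
      have h2 := hlub.1 hyS
      simp only [Set.mem_singleton_iff]
      linarith
  rcases le_or_gt (-a) b with hcase | hcase
  · -- apply the core lemma directly
    have hbpos : 0 < b := by
      by_contra h
      push_neg at h
      linarith
    apply deRham_aux φ (fun x => heq' x) b hlub hbpos _ μ M hμ hM hH
    intro x hx
    by_contra hxne
    have := hglb.1 (Function.mem_support.2 hxne)
    linarith
  · -- apply the core lemma to the reflection ψ x = φ (-x)
    set ψ : ℝ → ℂ := fun x => φ (-x) with hψdef
    have heqψ : ∀ x : ℝ, ψ x = ψ (3 * x)
        + (1 / 3 : ℂ) * (ψ (3 * x - 1) + ψ (3 * x + 1))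
        + (2 / 3 : ℂ) * (ψ (3 * x - 2) + ψ (3 * x + 2)) := by
      intro x
      have e := heq' (-x)
      simp only [hψdef, hgdef] at *
      rw [show (3 : ℝ) * -x = -(3 * x) by ring,
        show -(3 * x) - 1 = -(3 * x + 1) by ring,
        show -(3 * x) + 1 = -(3 * x - 1) by ring,
        show -(3 * x) - 2 = -(3 * x + 2) by ring,
        show -(3 * x) + 2 = -(3 * x - 2) by ring] at e
      rw [e]
      ring
    have hlubψ : IsLUB (Function.support ψ) (-a) := by
      constructor
      · intro x hx
        have : -x ∈ Function.support φ := by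
          simpa [hψdef, Function.mem_support] using hx
        have := hglb.1 this
        linarith
      · intro u hu
        have : -u ∈ lowerBounds (Function.support φ) := by
          intro y hy
          have : -y ∈ Function.support ψ := by
            simpa [hψdef, Function.mem_support] using hy
          have := hu this
          linarith
        have := hglb.2 this
        linarith
    have hapos : 0 < -a := by
      by_contra h
      push_neg at h
      linarith
    have hHψ : ∀ x y : ℝ, ‖ψ x - ψ y‖ ≤ M * |x - y| ^ μ := by
      intro x y
      have := hH (-x) (-y)
      simpa [hψdef, show -x - -y = -(x - y) by ring, abs_neg, abs_sub_comm y x] using this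
    apply deRham_aux ψ heqψ (-a) hlubψ hapos _ μ M hμ hM hHψ
    intro x hx
    by_contra hxne
    have : -x ∈ Function.support φ := by
      simpa [hψdef, Function.mem_support] using hxne
    have := hlub.1 this
    linarith
end

section
/- Let φ : ℝ → ℂ be integrable and not almost everywhere zero. Suppose φ has faster than exponential decay, i.e., for every t > 0, e^{tx}φ(x) → 0 as x → ∞ and e^{−tx}φ(x) → 0 as x → −∞, and suppose the support of φ is not compact, i.e., for every R > 0 the restriction of φ to {x : |x| > R} is not almost everywhere zero. Then every finite wavelet system generated by φ is linearly independent. -/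
open MeasureTheory Filter Set


private noncomputable def fwsM (φ : ℝ → ℂ) (R : ℝ) : ℝ := ∫ x in Ioi R, ‖φ x‖

private lemma fwsM_nonneg (φ : ℝ → ℂ) (R : ℝ) : 0 ≤ fwsM φ R :=
  setIntegral_nonneg measurableSet_Ioi fun x _ => norm_nonneg _

private lemma fwsM_anti (φ : ℝ → ℂ) (hint : Integrable φ) {a b : ℝ} (hab : a ≤ b) :
    fwsM φ b ≤ fwsM φ a :=
  setIntegral_mono_set hint.norm.integrableOn
    (Filter.Eventually.of_forall fun x => norm_nonneg _)
    (HasSubset.Subset.eventuallyLE (Set.Ioi_subset_Ioi hab))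

private lemma fwsM_decay (φ : ℝ → ℂ) (hint : Integrable φ)
    (hdecay : ∀ t : ℝ, 0 < t →
      Tendsto (fun x : ℝ => Real.exp (t * x) * ‖φ x‖) atTop (nhds 0))
    (t : ℝ) (ht : 0 < t) :
    ∃ M : ℝ, ∀ R, M ≤ R → fwsM φ R ≤ Real.exp (-(t * R)) := by
  have ht' : (0:ℝ) < t + 1 := by linarith
  have hev := (hdecay (t + 1) ht').eventually_lt_const one_pos
  obtain ⟨M₁, hM₁⟩ := Filter.eventually_atTop.mp hev
  refine ⟨max M₁ 0, fun R hR => ?_⟩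
  have hRM : M₁ ≤ R := le_trans (le_max_left _ _) hR
  have hR0 : (0:ℝ) ≤ R := le_trans (le_max_right _ _) hR
  have step1 : fwsM φ R ≤ ∫ x in Ioi R, Real.exp (-((t+1) * x)) := by
    have h2 : IntegrableOn (fun x : ℝ => Real.exp (-((t+1) * x))) (Ioi R) volume := by
      have := exp_neg_integrableOn_Ioi R ht'
      convert this using 2 with x
      ring_nf
    refine setIntegral_mono_on hint.norm.integrableOn h2 measurableSet_Ioi ?_
    intro x hx
    have hx' : M₁ ≤ x := le_trans hRM (le_of_lt hx)
    have h1 : Real.exp ((t+1) * x) * ‖φ x‖ ≤ 1 := (hM₁ x hx').le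
    have key : ‖φ x‖ = (Real.exp ((t+1) * x) * ‖φ x‖) * Real.exp (-((t+1) * x)) := by
      rw [mul_comm (Real.exp _) _, mul_assoc, ← Real.exp_add, add_neg_cancel,
        Real.exp_zero, mul_one]
    rw [key]
    exact mul_le_of_le_one_left (Real.exp_nonneg _) h1
  have step2 : ∫ x in Ioi R, Real.exp (-((t+1) * x))
      = (t+1)⁻¹ * Real.exp (-((t+1) * R)) := by
    have h := integral_comp_mul_left_Ioi (fun y => Real.exp (-y)) R ht'
    simp only [smul_eq_mul] at h
    rw [h, integral_exp_neg_Ioi]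
  have step3 : (t+1)⁻¹ * Real.exp (-((t+1) * R)) ≤ Real.exp (-(t * R)) := by
    have h1 : (t+1)⁻¹ ≤ 1 := by
      rw [inv_le_one_iff₀]; right; linarith
    have h2 : Real.exp (-((t+1) * R)) ≤ Real.exp (-(t * R)) := by
      apply Real.exp_le_exp.mpr; nlinarith
    calc (t+1)⁻¹ * Real.exp (-((t+1) * R)) ≤ 1 * Real.exp (-((t+1) * R)) :=
          mul_le_mul_of_nonneg_right h1 (Real.exp_nonneg _)
      _ = Real.exp (-((t+1) * R)) := one_mul _
      _ ≤ Real.exp (-(t * R)) := h2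
  linarith


set_option maxHeartbeats 1000000 in
private lemma fws_shift (φ : ℝ → ℂ) (b A : ℝ) :
    ∫ x in Ioi A, ‖φ (x - b)‖ = ∫ x in Ioi (A - b), ‖φ x‖ := by
  rw [← integral_indicator measurableSet_Ioi, ← integral_indicator measurableSet_Ioi]
  rw [← integral_sub_right_eq_self (fun y => (Ioi (A - b)).indicator (fun u => ‖φ u‖) y) b]
  congr 1
  ext x
  by_cases hx : x ∈ Ioi A
  · rw [Set.indicator_of_mem hx, Set.indicator_of_mem
      (by simpa [Set.mem_Ioi, sub_lt_sub_iff_right] using hx)]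
  · rw [Set.indicator_of_notMem hx, Set.indicator_of_notMem
      (by simpa [Set.mem_Ioi, sub_lt_sub_iff_right] using hx)]

private lemma fws_cov (φ : ℝ → ℂ) (lam bet X : ℝ) (hlam : 0 < lam) :
    ∫ x in Ioi X, ‖φ (lam * x - bet)‖
      = lam⁻¹ * fwsM φ (lam * X - bet) := by
  show _ = lam⁻¹ * ∫ x in Ioi (lam * X - bet), ‖φ x‖
  have h := integral_comp_mul_left_Ioi (fun y => ‖φ (y - bet)‖) X hlam
  simp only [smul_eq_mul] at h
  rw [h, fws_shift]

private lemma fws_zero_tail (φ : ℝ → ℂ) (hint : Integrable φ) (R : ℝ)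
    (hR : ¬ (0 < fwsM φ R)) :
    ∀ᵐ x : ℝ, x ∈ Ioi R → φ x = 0 := by
  have h0 : ∫ x in Ioi R, ‖φ x‖ = 0 :=
    le_antisymm (not_lt.mp hR) (setIntegral_nonneg measurableSet_Ioi fun x _ => norm_nonneg _)
  have hnorm0 : (fun x => ‖φ x‖) =ᵐ[volume.restrict (Ioi R)] 0 :=
    (integral_eq_zero_iff_of_nonneg_ae
      (Filter.Eventually.of_forall fun x => norm_nonneg _)
      hint.norm.restrict).mp h0
  have := (ae_restrict_iff' measurableSet_Ioi).mp hnorm0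
  filter_upwards [this] with x hx hxR
  have := hx hxR
  simpa using this

set_option maxHeartbeats 1000000 in
/-- Main auxiliary lemma: the one-sided version, assuming the right tail of `φ`
is never a.e. zero. -/
private lemma fws_aux (φ : ℝ → ℂ) (hint : Integrable φ)
    (hdecay : ∀ t : ℝ, 0 < t →
      Tendsto (fun x : ℝ => Real.exp (t * x) * ‖φ x‖) atTop (nhds 0))
    (htail : ∀ R : ℝ, 0 < fwsM φ R)
    (N : ℕ) (Λ : Fin N → ℝ × ℝ)
    (hpos : ∀ k, 0 < (Λ k).1) (hdist : Function.Injective Λ)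
    (c : Fin N → ℂ)
    (hzero : ∀ᵐ x : ℝ, ∑ k : Fin N, c k * φ ((Λ k).1 * x - (Λ k).2) = 0) :
    ∀ k, c k = 0 := by
  by_contra hcon
  push_neg at hcon
  obtain ⟨j₀, hj₀⟩ := hcon
  -- the tail mass function
  have hm_pos : ∀ R, 0 < fwsM φ R := htail
  have hm_anti : ∀ {a b : ℝ}, a ≤ b → fwsM φ b ≤ fwsM φ a := fun h => fwsM_anti φ hint h
  have hm_decay := fwsM_decay φ hint hdecay
  -- integrability of the generators
  have hInt : ∀ (lam bet : ℝ), 0 < lam → Integrable (fun x => φ (lam * x - bet)) :=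
    fun lam bet h => (hint.comp_sub_right bet).comp_mul_left' h.ne'
  -- support of the coefficients
  set T : Finset (Fin N) := Finset.univ.filter (fun k => c k ≠ 0) with hT_def
  have hTne : T.Nonempty := ⟨j₀, Finset.mem_filter.mpr ⟨Finset.mem_univ _, hj₀⟩⟩
  obtain ⟨j₁, hj₁T, hj₁min⟩ := Finset.exists_min_image T (fun k => (Λ k).1) hTne
  set S : Finset (Fin N) := T.filter (fun k => (Λ k).1 = (Λ j₁).1) with hS_def
  have hSne : S.Nonempty := ⟨j₁, Finset.mem_filter.mpr ⟨hj₁T, rfl⟩⟩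
  obtain ⟨j, hjS, hjmax⟩ := Finset.exists_max_image S (fun k => (Λ k).2) hSne
  have hjT : j ∈ T := (Finset.mem_filter.mp hjS).1
  have hjl : (Λ j).1 = (Λ j₁).1 := (Finset.mem_filter.mp hjS).2
  have hcj : c j ≠ 0 := (Finset.mem_filter.mp hjT).2
  have hlj : 0 < (Λ j).1 := hpos j
  have hmin : ∀ k ∈ T, (Λ j).1 ≤ (Λ k).1 := by
    intro k hk; rw [hjl]; exact hj₁min k hk
  have hgap : ∀ k ∈ T, k ≠ j → (Λ j).1 < (Λ k).1 ∨ ((Λ k).1 = (Λ j).1 ∧ (Λ k).2 < (Λ j).2) := by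
    intro k hk hkj
    rcases lt_or_eq_of_le (hmin k hk) with h | h
    · exact Or.inl h
    · right
      refine ⟨h.symm, ?_⟩
      have hkS : k ∈ S := Finset.mem_filter.mpr ⟨hk, by rw [← h]; exact hjl⟩
      rcases lt_or_eq_of_le (hjmax k hkS) with h2 | h2
      · exact h2
      · exfalso
        apply hkj
        apply hdist
        exact Prod.ext (by rw [← h]) h2
  -- the gap δ
  set D : Finset (Fin N) := (T.erase j).filter (fun k => (Λ k).1 = (Λ j).1) with hD_def
  have hDlt : ∀ k ∈ D, (Λ k).2 < (Λ j).2 := by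
    intro k hk
    obtain ⟨hk1, hk2⟩ := Finset.mem_filter.mp hk
    obtain ⟨hkj, hkT⟩ := Finset.mem_erase.mp hk1
    rcases hgap k hkT hkj with h | h
    · exact absurd hk2 (ne_of_gt h)
    · exact h.2
  set δ : ℝ := if hD : D.Nonempty then min 1 (D.inf' hD (fun k => (Λ j).2 - (Λ k).2)) else 1
    with hδ_def
  have hδpos : 0 < δ := by
    rw [hδ_def]
    split_ifs with hD
    · refine lt_min one_pos ?_
      rw [Finset.lt_inf'_iff]
      intro k hk
      have := hDlt k hk
      linarith
    · exact one_pos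
  have hδk : ∀ k ∈ D, δ ≤ (Λ j).2 - (Λ k).2 := by
    intro k hk
    rw [hδ_def]
    rw [dif_pos ⟨k, hk⟩]
    exact le_trans (min_le_right _ _) (Finset.inf'_le _ hk)
  -- constants
  set K : ℝ := ∑ k ∈ Finset.univ.erase j, ‖c k‖ * (Λ k).1⁻¹ with hK_def
  have hK_nonneg : 0 ≤ K :=
    Finset.sum_nonneg fun k _ => mul_nonneg (norm_nonneg _) (inv_nonneg.mpr (hpos k).le)
  set q : ℝ := K * (Λ j).1 / ‖c j‖ with hq_def
  have hq_nonneg : 0 ≤ q := by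
    apply div_nonneg (mul_nonneg hK_nonneg hlj.le) (norm_nonneg _)
  set t : ℝ := δ⁻¹ * Real.log (max 2 (2 * q)) with ht_def
  have hMax_pos : (0:ℝ) < max 2 (2 * q) := lt_of_lt_of_le two_pos (le_max_left _ _)
  have htpos : 0 < t := by
    apply mul_pos (inv_pos.mpr hδpos)
    exact Real.log_pos (lt_of_lt_of_le one_lt_two (le_max_left _ _))
  have hexp_tδ : Real.exp (t * δ) = max 2 (2 * q) := by
    have h1 : t * δ = Real.log (max 2 (2 * q)) := by
      rw [ht_def]; field_simp
    rw [h1, Real.exp_log hMax_pos]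
  have hqt : q * Real.exp (-(t * δ)) ≤ 1 / 2 := by
    rw [Real.exp_neg, hexp_tδ]
    nlinarith [mul_le_mul_of_nonneg_right (le_max_right 2 (2 * q))
      (inv_nonneg.mpr hMax_pos.le), mul_inv_cancel₀ hMax_pos.ne']
  obtain ⟨M, hM⟩ := hm_decay t htpos
  -- choice of X₀
  have hev1 : ∀ᶠ X in atTop, ∀ k ∈ T.erase j,
      (Λ j).1 * X - (Λ j).2 + δ ≤ (Λ k).1 * X - (Λ k).2 := by
    rw [Filter.eventually_all_finset]
    intro k hk
    obtain ⟨hkj, hkT⟩ := Finset.mem_erase.mp hk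
    rcases hgap k hkT hkj with hlt | ⟨heq, hblt⟩
    · refine Filter.eventually_atTop.mpr
        ⟨(δ + (Λ k).2 - (Λ j).2) / ((Λ k).1 - (Λ j).1), fun X hX => ?_⟩
      rw [div_le_iff₀ (by linarith)] at hX
      nlinarith
    · apply Filter.Eventually.of_forall
      intro X
      have hkD : k ∈ D := Finset.mem_filter.mpr ⟨hk, heq⟩
      have := hδk k hkD
      rw [heq]
      linarith
  have hev2 : ∀ᶠ X in atTop, M ≤ (Λ j).1 * X - (Λ j).2 := by
    refine Filter.eventually_atTop.mpr ⟨(M + (Λ j).2) / (Λ j).1, fun X hX => ?_⟩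
    rw [div_le_iff₀ hlj] at hX
    nlinarith
  obtain ⟨X₀, hX₀⟩ := Filter.eventually_atTop.mp (hev1.and hev2)
  set R₀ : ℝ := (Λ j).1 * X₀ - (Λ j).2 with hR₀_def
  have hMR₀ : M ≤ R₀ := (hX₀ X₀ le_rfl).2
  -- the key iteration inequality
  have hkey : ∀ R : ℝ, R₀ ≤ R → fwsM φ R ≤ q * fwsM φ (R + δ) := by
    intro R hR
    set X : ℝ := (R + (Λ j).2) / (Λ j).1 with hX_def
    have hXR : (Λ j).1 * X - (Λ j).2 = R := by
      rw [hX_def]; field_simp; ring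
    have hXX₀ : X₀ ≤ X := by
      rw [hX_def, le_div_iff₀ hlj]
      rw [hR₀_def] at hR
      nlinarith
    obtain ⟨hgapX, -⟩ := hX₀ X hXX₀
    -- pointwise a.e. inequality
    have haept : ∀ᵐ x : ℝ, ‖c j‖ * ‖φ ((Λ j).1 * x - (Λ j).2)‖ ≤
        ∑ k ∈ Finset.univ.erase j, ‖c k‖ * ‖φ ((Λ k).1 * x - (Λ k).2)‖ := by
      filter_upwards [hzero] with x hx
      have hsplit : c j * φ ((Λ j).1 * x - (Λ j).2)
          + ∑ k ∈ Finset.univ.erase j, c k * φ ((Λ k).1 * x - (Λ k).2) = 0 := by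
        have h := Finset.add_sum_erase Finset.univ
          (fun k => c k * φ ((Λ k).1 * x - (Λ k).2)) (Finset.mem_univ j)
        rw [hx] at h
        exact h
      have heq2 : c j * φ ((Λ j).1 * x - (Λ j).2)
          = -∑ k ∈ Finset.univ.erase j, c k * φ ((Λ k).1 * x - (Λ k).2) := by
        linear_combination hsplit
      calc ‖c j‖ * ‖φ ((Λ j).1 * x - (Λ j).2)‖ = ‖c j * φ ((Λ j).1 * x - (Λ j).2)‖ := (norm_mul _ _).symm
        _ = ‖∑ k ∈ Finset.univ.erase j, c k * φ ((Λ k).1 * x - (Λ k).2)‖ := by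
            rw [heq2, norm_neg]
        _ ≤ ∑ k ∈ Finset.univ.erase j, ‖c k * φ ((Λ k).1 * x - (Λ k).2)‖ :=
            norm_sum_le _ _
        _ = ∑ k ∈ Finset.univ.erase j, ‖c k‖ * ‖φ ((Λ k).1 * x - (Λ k).2)‖ := by
            exact Finset.sum_congr rfl fun k _ => norm_mul _ _
    -- integrate over (X, ∞)
    have hle : ∫ x in Ioi X, ‖c j‖ * ‖φ ((Λ j).1 * x - (Λ j).2)‖ ≤
        ∫ x in Ioi X, ∑ k ∈ Finset.univ.erase j, ‖c k‖ * ‖φ ((Λ k).1 * x - (Λ k).2)‖ := by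
      refine integral_mono_ae (((hInt (Λ j).1 (Λ j).2 hlj).norm.const_mul _).restrict)
        (integrable_finset_sum _ fun k _ =>
          (((hInt (Λ k).1 (Λ k).2 (hpos k)).norm.const_mul _).restrict)) ?_
      exact ae_restrict_of_ae haept
    have hlhs : ∫ x in Ioi X, ‖c j‖ * ‖φ ((Λ j).1 * x - (Λ j).2)‖ = ‖c j‖ * ((Λ j).1⁻¹ * fwsM φ R) := by
      rw [integral_const_mul, fws_cov φ (Λ j).1 (Λ j).2 X hlj, hXR]
    have hrhs : ∫ x in Ioi X, ∑ k ∈ Finset.univ.erase j,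
        ‖c k‖ * ‖φ ((Λ k).1 * x - (Λ k).2)‖
        = ∑ k ∈ Finset.univ.erase j,
            ‖c k‖ * ((Λ k).1⁻¹ * fwsM φ ((Λ k).1 * X - (Λ k).2)) := by
      rw [integral_finset_sum _ fun k _ =>
        (((hInt (Λ k).1 (Λ k).2 (hpos k)).norm.const_mul _).restrict)]
      refine Finset.sum_congr rfl fun k _ => ?_
      rw [integral_const_mul, fws_cov φ (Λ k).1 (Λ k).2 X (hpos k)]
    have hterm : ∑ k ∈ Finset.univ.erase j,
        ‖c k‖ * ((Λ k).1⁻¹ * fwsM φ ((Λ k).1 * X - (Λ k).2))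
        ≤ ∑ k ∈ Finset.univ.erase j, ‖c k‖ * ((Λ k).1⁻¹ * fwsM φ (R + δ)) := by
      refine Finset.sum_le_sum fun k hk => ?_
      by_cases hck : c k = 0
      · simp [hck]
      · have hkT : k ∈ T.erase j := Finset.mem_erase.mpr
          ⟨(Finset.mem_erase.mp hk).1, Finset.mem_filter.mpr ⟨Finset.mem_univ _, hck⟩⟩
        have hgapk := hgapX k hkT
        rw [hXR] at hgapk
        have := hm_anti hgapk
        gcongr
        exact inv_nonneg.mpr (hpos k).le
    have hsum : ∑ k ∈ Finset.univ.erase j, ‖c k‖ * ((Λ k).1⁻¹ * fwsM φ (R + δ))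
        = K * fwsM φ (R + δ) := by
      rw [hK_def, Finset.sum_mul]
      exact Finset.sum_congr rfl fun k _ => by ring
    have hfinal : ‖c j‖ * ((Λ j).1⁻¹ * fwsM φ R) ≤ K * fwsM φ (R + δ) := by
      rw [← hlhs, ← hsum]
      exact le_trans hle (le_of_le_of_eq (le_of_eq hrhs) rfl |>.trans hterm)
    -- rearrange
    have hcj' : (0:ℝ) < ‖c j‖ := norm_pos_iff.mpr hcj
    have h2 : ‖c j‖ * ((Λ j).1⁻¹ * fwsM φ R) * ((Λ j).1 / ‖c j‖) ≤ K * fwsM φ (R + δ) * ((Λ j).1 / ‖c j‖) :=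
      mul_le_mul_of_nonneg_right hfinal (by positivity)
    have h3 : ‖c j‖ * ((Λ j).1⁻¹ * fwsM φ R) * ((Λ j).1 / ‖c j‖) = fwsM φ R := by
      field_simp
    have h4 : K * fwsM φ (R + δ) * ((Λ j).1 / ‖c j‖) = q * fwsM φ (R + δ) := by
      rw [hq_def]; ring
    rw [h3, h4] at h2
    exact h2
  -- iterate
  have hmain : ∀ n : ℕ, fwsM φ R₀ ≤ q ^ n * fwsM φ (R₀ + n * δ) := by
    intro n
    induction n with
    | zero => simp
    | succ n ih =>
      have hstep : fwsM φ (R₀ + n * δ) ≤ q * fwsM φ (R₀ + n * δ + δ) :=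
        hkey (R₀ + n * δ) (by nlinarith [hδpos.le, Nat.cast_nonneg (α := ℝ) n])
      calc fwsM φ R₀ ≤ q ^ n * fwsM φ (R₀ + n * δ) := ih
        _ ≤ q ^ n * (q * fwsM φ (R₀ + n * δ + δ)) :=
            mul_le_mul_of_nonneg_left hstep (pow_nonneg hq_nonneg n)
        _ = q ^ (n + 1) * fwsM φ (R₀ + (n + 1 : ℕ) * δ) := by
            push_cast; ring_nf
  -- decay bound
  have hbound : ∀ n : ℕ, fwsM φ R₀ ≤ Real.exp (-(t * R₀)) * (1 / 2) ^ n := by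
    intro n
    have h1 : fwsM φ (R₀ + n * δ) ≤ Real.exp (-(t * (R₀ + n * δ))) :=
      hM _ (by nlinarith [hδpos.le, Nat.cast_nonneg (α := ℝ) n])
    have h2 : q ^ n * fwsM φ (R₀ + n * δ) ≤ q ^ n * Real.exp (-(t * (R₀ + n * δ))) :=
      mul_le_mul_of_nonneg_left h1 (pow_nonneg hq_nonneg n)
    have h3 : q ^ n * Real.exp (-(t * (R₀ + n * δ)))
        = Real.exp (-(t * R₀)) * (q * Real.exp (-(t * δ))) ^ n := by
      rw [show -(t * (R₀ + n * δ)) = -(t * R₀) + n * (-(t * δ)) by ring,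
        Real.exp_add, Real.exp_nat_mul, mul_pow]
      ring
    have h4 : (q * Real.exp (-(t * δ))) ^ n ≤ (1 / 2 : ℝ) ^ n :=
      pow_le_pow_left₀ (mul_nonneg hq_nonneg (Real.exp_nonneg _)) hqt n
    calc fwsM φ R₀ ≤ q ^ n * fwsM φ (R₀ + n * δ) := hmain n
      _ ≤ q ^ n * Real.exp (-(t * (R₀ + n * δ))) := h2
      _ = Real.exp (-(t * R₀)) * (q * Real.exp (-(t * δ))) ^ n := h3
      _ ≤ Real.exp (-(t * R₀)) * (1 / 2) ^ n :=
          mul_le_mul_of_nonneg_left h4 (Real.exp_nonneg _)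
  -- contradiction
  obtain ⟨n, hn⟩ := exists_pow_lt_of_lt_one
    (mul_pos (hm_pos R₀) (Real.exp_pos (t * R₀))) (show (1:ℝ)/2 < 1 by norm_num)
  have hlt : Real.exp (-(t * R₀)) * (1 / 2) ^ n < fwsM φ R₀ := by
    calc Real.exp (-(t * R₀)) * (1 / 2) ^ n
        < Real.exp (-(t * R₀)) * (fwsM φ R₀ * Real.exp (t * R₀)) :=
          mul_lt_mul_of_pos_left hn (Real.exp_pos _)
      _ = fwsM φ R₀ * (Real.exp (-(t * R₀)) * Real.exp (t * R₀)) := by ring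
      _ = fwsM φ R₀ := by rw [← Real.exp_add, neg_add_cancel, Real.exp_zero, mul_one]
  exact absurd (lt_of_le_of_lt (hbound n) hlt) (lt_irrefl _)

open MeasureTheory Filter

/-- A finite wavelet system generated by an integrable, not a.e. zero function with faster
than exponential decay and non-compact support is linearly independent. -/
theorem fws_linearIndependent_of_superexponential_decay
    (φ : ℝ → ℂ) (hint : Integrable φ) (hne : ¬ φ =ᵐ[volume] 0)
    (hdecay : ∀ t : ℝ, 0 < t →
      Tendsto (fun x : ℝ => Real.exp (t * x) * ‖φ x‖) atTop (nhds 0) ∧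
      Tendsto (fun x : ℝ => Real.exp (-t * x) * ‖φ x‖) atBot (nhds 0))
    (hsupp : ∀ R : ℝ, 0 < R → ¬ (∀ᵐ x : ℝ, R < |x| → φ x = 0))
    (N : ℕ) (hN : 1 ≤ N) (Λ : Fin N → ℝ × ℝ)
    (hpos : ∀ k, 0 < (Λ k).1) (hdist : Function.Injective Λ)
    (c : Fin N → ℂ)
    (hzero : ∀ᵐ x : ℝ, ∑ k : Fin N, c k * φ ((Λ k).1 * x - (Λ k).2) = 0) :
    ∀ k, c k = 0 := by
  by_cases hR : ∀ R : ℝ, 0 < fwsM φ R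
  · exact fws_aux φ hint
      (fun t ht => (hdecay t ht).1)
      hR N Λ hpos hdist c hzero
  · push_neg at hR
    obtain ⟨R₁, hR₁⟩ := hR
    have hz₁ : ∀ᵐ x : ℝ, x ∈ Set.Ioi R₁ → φ x = 0 :=
      fws_zero_tail φ hint R₁ (not_lt.mpr hR₁)
    -- use the reflected function
    set ψ : ℝ → ℂ := fun x => φ (-x) with hψ_def
    have hψint : Integrable ψ := hint.comp_neg
    have hψdecay : ∀ t : ℝ, 0 < t →
        Tendsto (fun x : ℝ => Real.exp (t * x) * ‖ψ x‖) atTop (nhds 0) := by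
      intro t ht
      have h := ((hdecay t ht).2).comp tendsto_neg_atTop_atBot
      simp only [Function.comp_def, neg_mul, neg_neg] at h ⊢
      convert h using 2 with x
      ring_nf
      rfl
    have hae_neg : ∀ {p : ℝ → Prop}, (∀ᵐ x : ℝ, p x) → ∀ᵐ x : ℝ, p (-x) :=
      fun h => (Measure.measurePreserving_neg (volume : Measure ℝ)).quasiMeasurePreserving.ae h
    have hψtail : ∀ R : ℝ, 0 < fwsM ψ R := by
      intro R
      by_contra h0
      have hz₂ : ∀ᵐ x : ℝ, x ∈ Set.Ioi R → φ (-x) = 0 :=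
        fws_zero_tail ψ hψint R h0
      -- transfer to the left tail of φ
      have hz₃ : ∀ᵐ y : ℝ, y ∈ Set.Iio (-R) → φ y = 0 := by
        have := hae_neg hz₂
        filter_upwards [this] with y hy hyR
        have h1 : -y ∈ Set.Ioi R := by
          simp only [Set.mem_Iio] at hyR
          simp only [Set.mem_Ioi]
          linarith
        simpa using hy h1
      set R' : ℝ := max R₁ |R| + 1 with hR'_def
      have hR'pos : 0 < R' := by
        have : (0:ℝ) ≤ max R₁ |R| := le_trans (abs_nonneg R) (le_max_right _ _)
        linarith
      refine hsupp R' hR'pos ?_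
      filter_upwards [hz₁, hz₃] with x h1 h3 habs
      rcases lt_or_ge 0 x with hx | hx
      · have : x ∈ Set.Ioi R₁ := by
          simp only [Set.mem_Ioi]
          have h4 : R₁ ≤ max R₁ |R| := le_max_left _ _
          have hxR' : R' < |x| := habs
          rw [abs_of_pos hx] at hxR'
          rw [hR'_def] at hxR'
          linarith
        exact h1 this
      · have hxneg : x < -R := by
          have hxR' : R' < |x| := habs
          rw [abs_of_nonpos hx] at hxR'
          have h4 : |R| ≤ max R₁ |R| := le_max_right _ _
          have h5 : R ≤ |R| := le_abs_self R
          rw [hR'_def] at hxR'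
          linarith
        exact h3 (Set.mem_Iio.mpr hxneg)
    exact fws_aux ψ hψint hψdecay hψtail N (fun k => ((Λ k).1, -(Λ k).2)) hpos
      (fun a b hab => by
        have h1 : ((Λ a).1, -(Λ a).2) = ((Λ b).1, -(Λ b).2) := hab
        rw [Prod.mk.injEq] at h1
        exact hdist (Prod.ext h1.1 (neg_injective h1.2)))
      c
      (by
        filter_upwards [hae_neg hzero] with x hx
        rw [← hx]
        refine Finset.sum_congr rfl fun k _ => ?_
        congr 1
        show φ (-((Λ k).1 * x - -(Λ k).2)) = φ ((Λ k).1 * -x - (Λ k).2)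
        congr 1
        ring)
end

section
/- Let φ : ℝ → ℂ be the Gaussian φ(x) = e^{−x²}. Then every finite wavelet system generated by φ is linearly independent: for any pairwise distinct pairs (λ_1, β_1), …, (λ_N, β_N) ∈ (0, ∞) × ℝ and any c_1, …, c_N ∈ ℂ, if Σ_{k=1}^N c_k e^{−(λ_k x − β_k)²} = 0 for all x ∈ ℝ, then c_1 = ⋯ = c_N = 0. -/
open Filter

lemma gauss_key {ι : Type*} [DecidableEq ι] (P : ι → ℝ × ℝ) (c : ι → ℂ) (s : Finset ι) :
    Set.InjOn P s →
    (∀ x : ℝ, ∑ k ∈ s, c k * (Real.exp ((P k).1 * x ^ 2 + (P k).2 * x) : ℂ) = 0) →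
    ∀ k ∈ s, c k = 0 := by
  induction s using Finset.strongInduction with
  | _ s ih =>
    intro hinj h k hk
    have hne : s.Nonempty := ⟨k, hk⟩
    -- max of first coordinates
    obtain ⟨k1, hk1s, hk1max⟩ := s.exists_max_image (fun j => (P j).1) hne
    set a : ℝ := (P k1).1 with ha
    set t : Finset ι := s.filter (fun j => (P j).1 = a) with ht
    have htne : t.Nonempty := ⟨k1, Finset.mem_filter.mpr ⟨hk1s, ha.symm⟩⟩
    obtain ⟨k0, hk0t, hk0max⟩ := t.exists_max_image (fun j => (P j).2) htne
    have hk0s : k0 ∈ s := (Finset.mem_filter.mp hk0t).1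
    have hk0a : (P k0).1 = a := (Finset.mem_filter.mp hk0t).2
    -- key dichotomy
    have hlt : ∀ j ∈ s, j ≠ k0 →
        (P j).1 - (P k0).1 < 0 ∨ ((P j).1 = (P k0).1 ∧ (P j).2 - (P k0).2 < 0) := by
      intro j hjs hjne
      rcases lt_or_eq_of_le (hk1max j hjs) with h1 | h1
      · left; rw [hk0a]; linarith
      · right
        have hjt : j ∈ t := Finset.mem_filter.mpr ⟨hjs, h1⟩
        refine ⟨by rw [hk0a, ← h1], ?_⟩
        rcases lt_or_eq_of_le (hk0max j hjt) with h2 | h2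
        · linarith
        · exfalso
          exact hjne (hinj hjs hk0s (Prod.ext (by rw [hk0a, ← h1]) h2))
    -- the renormalized sum
    set F : ℝ → ℂ := fun x => ∑ j ∈ s, c j *
      (Real.exp (((P j).1 - (P k0).1) * x ^ 2 + ((P j).2 - (P k0).2) * x) : ℂ) with hF
    have hF0 : ∀ x, F x = 0 := by
      intro x
      have := h x
      have expand : ∀ j, ((P j).1 - (P k0).1) * x ^ 2 + ((P j).2 - (P k0).2) * x
          = ((P j).1 * x ^ 2 + (P j).2 * x) + (-((P k0).1 * x ^ 2 + (P k0).2 * x)) := by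
        intro j; ring
      calc F x = (∑ j ∈ s, c j * (Real.exp ((P j).1 * x ^ 2 + (P j).2 * x) : ℂ)) *
            (Real.exp (-((P k0).1 * x ^ 2 + (P k0).2 * x)) : ℂ) := by
            rw [Finset.sum_mul]
            refine Finset.sum_congr rfl fun j _ => ?_
            rw [expand j, Real.exp_add]
            push_cast
            ring
        _ = 0 := by rw [h x, zero_mul]
    -- limits
    have hlim : Tendsto F atTop (nhds (c k0)) := by
      have : Tendsto F atTop (nhds (∑ j ∈ s, if j = k0 then c k0 else 0)) := by
        apply tendsto_finset_sum
        intro j hjs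
        by_cases hj : j = k0
        · subst hj
          simp only [if_pos rfl, sub_self, zero_mul, add_zero, Real.exp_zero]
          simpa using tendsto_const_nhds
        · simp only [if_neg hj]
          have hexp : Tendsto (fun x : ℝ => ((P j).1 - (P k0).1) * x ^ 2 +
              ((P j).2 - (P k0).2) * x) atTop atBot := by
            rcases hlt j hjs hj with hA | ⟨hA, hB⟩
            · have h1 : Tendsto (fun x : ℝ => ((P j).1 - (P k0).1) * x +
                  ((P j).2 - (P k0).2)) atTop atBot := by
                apply tendsto_atBot_add_const_right
                exact tendsto_id.const_mul_atTop_of_neg hA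
              have h2 : Tendsto (fun x : ℝ => x * (((P j).1 - (P k0).1) * x +
                  ((P j).2 - (P k0).2))) atTop atBot :=
                tendsto_id.atTop_mul_atBot₀ h1
              refine h2.congr fun x => by ring
            · rw [hA]
              have h1 : Tendsto (fun x : ℝ => ((P j).2 - (P k0).2) * x) atTop atBot :=
                tendsto_id.const_mul_atTop_of_neg hB
              refine h1.congr fun x => by ring
          have h3 : Tendsto (fun x : ℝ => (Real.exp (((P j).1 - (P k0).1) * x ^ 2 +
              ((P j).2 - (P k0).2) * x) : ℂ)) atTop (nhds 0) := by
            have := (Complex.continuous_ofReal.tendsto 0).comp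
              (Real.tendsto_exp_atBot.comp hexp)
            simpa only [Function.comp_def, Complex.ofReal_zero] using this
          simpa using h3.const_mul (c j)
      simpa [Finset.sum_ite_eq' s k0 (fun _ => c k0), hk0s] using this
    have hck0 : c k0 = 0 := by
      have h0 : Tendsto F atTop (nhds 0) := by
        simp only [funext hF0]; exact tendsto_const_nhds
      exact tendsto_nhds_unique hlim h0
    -- induction step
    by_cases hkk : k = k0
    · rw [hkk]; exact hck0
    · have hss : s.erase k0 ⊂ s := Finset.erase_ssubset hk0s
      refine ih _ hss (hinj.mono (Finset.coe_subset.mpr (Finset.erase_subset _ _))) ?_ k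
        (Finset.mem_erase.mpr ⟨hkk, hk⟩)
      intro x
      have hx := h x
      rw [← Finset.add_sum_erase s
        (fun j => c j * (Real.exp ((P j).1 * x ^ 2 + (P j).2 * x) : ℂ)) hk0s] at hx
      simpa [hck0] using hx

/-- Every finite wavelet system generated by the Gaussian `φ(x) = exp(-x²)` is linearly
independent. -/
theorem fws_linearIndependent_gaussian
    (N : ℕ) (hN : 1 ≤ N) (Λ : Fin N → ℝ × ℝ)
    (hpos : ∀ k, 0 < (Λ k).1) (hdist : Function.Injective Λ)
    (c : Fin N → ℂ)
    (hzero : ∀ x : ℝ,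
      ∑ k : Fin N, c k * (Real.exp (-((Λ k).1 * x - (Λ k).2) ^ 2) : ℂ) = 0) :
    ∀ k, c k = 0 := by
  set P : Fin N → ℝ × ℝ := fun k => (-(Λ k).1 ^ 2, 2 * (Λ k).1 * (Λ k).2) with hP
  set d : Fin N → ℂ := fun k => c k * (Real.exp (-(Λ k).2 ^ 2) : ℂ) with hd
  have hinj : Set.InjOn P (Finset.univ : Finset (Fin N)) := by
    intro i _ j _ hij
    have h1 : -(Λ i).1 ^ 2 = -(Λ j).1 ^ 2 := congrArg Prod.fst hij
    have h2 : 2 * (Λ i).1 * (Λ i).2 = 2 * (Λ j).1 * (Λ j).2 := congrArg Prod.snd hij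
    have hl : (Λ i).1 = (Λ j).1 := by
      nlinarith [hpos i, hpos j]
    have hb : (Λ i).2 = (Λ j).2 := by
      rw [hl] at h2
      have hj := hpos j
      nlinarith [h2]
    exact hdist (Prod.ext hl hb)
  have hsum : ∀ x : ℝ, ∑ k ∈ (Finset.univ : Finset (Fin N)), d k *
      (Real.exp ((P k).1 * x ^ 2 + (P k).2 * x) : ℂ) = 0 := by
    intro x
    rw [← hzero x]
    refine Finset.sum_congr rfl fun k _ => ?_
    have : -((Λ k).1 * x - (Λ k).2) ^ 2 =
        (-(Λ k).2 ^ 2) + ((-(Λ k).1 ^ 2) * x ^ 2 + (2 * (Λ k).1 * (Λ k).2) * x) := by ring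
    rw [hd, hP]
    simp only [this, Real.exp_add]
    push_cast
    ring
  intro k
  have := gauss_key P d Finset.univ hinj hsum k (Finset.mem_univ k)
  rw [hd] at this
  have hexp : (Real.exp (-(Λ k).2 ^ 2) : ℂ) ≠ 0 := by
    simp [Real.exp_ne_zero]
  exact (mul_eq_zero.mp this).resolve_right hexp
end

section
/- Let p and q be real polynomials with p ≠ 0, q(x) ≠ 0 for every x ∈ ℝ, and deg p < deg q, and let φ : ℝ → ℂ be the (square integrable) rational function φ(x) = p(x)/q(x). Then every finite wavelet system generated by φ is linearly independent: for any pairwise distinct pairs (λ_1, β_1), …, (λ_N, β_N) ∈ (0, ∞) × ℝ and any c_1, …, c_N ∈ ℂ, if Σ_{k=1}^N c_k φ(λ_k x − β_k) = 0 for all x ∈ ℝ, then c_1 = ⋯ = c_N = 0. -/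
open MeasureTheory Filter Polynomial

lemma fws_core (P Q : Polynomial ℂ) (hcop : IsCoprime P Q)
    (hQR : ∀ x : ℝ, Q.eval (x : ℂ) ≠ 0) (hQdeg : 0 < Q.degree)
    (hconj : ∀ z : ℂ, Q.eval z = 0 → Q.eval ((starRingEnd ℂ) z) = 0)
    (N : ℕ) (Λ : Fin N → ℝ × ℝ) (hpos : ∀ k, 0 < (Λ k).1)
    (hdist : Function.Injective Λ) (c : Fin N → ℂ)
    (hz : ∀ x : ℝ, ∑ k : Fin N,
      c k * (P.eval (((Λ k).1 : ℂ) * x - ((Λ k).2 : ℂ)) /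
             Q.eval (((Λ k).1 : ℂ) * x - ((Λ k).2 : ℂ))) = 0) :
    ∀ k, c k = 0 := by
  by_contra hcon
  push_neg at hcon
  obtain ⟨k₀, hk₀⟩ := hcon
  -- the support
  set S : Finset (Fin N) := Finset.univ.filter (fun k => c k ≠ 0) with hSdef
  have hS : S.Nonempty := ⟨k₀, by simp [hSdef, hk₀]⟩
  -- minimal dilation
  set L : ℝ := S.inf' hS (fun k => (Λ k).1) with hLdef
  have hLle : ∀ k ∈ S, L ≤ (Λ k).1 := fun k hk => Finset.inf'_le _ hk
  obtain ⟨kL, hkLS, hkL⟩ := Finset.exists_mem_eq_inf' hS (fun k => (Λ k).1)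
  have hLpos : 0 < L := by rw [hLdef, hkL]; exact hpos kL
  have hLne : (L : ℂ) ≠ 0 := by exact_mod_cast hLpos.ne'
  -- indices with minimal dilation
  set K : Finset (Fin N) := S.filter (fun k => (Λ k).1 = L) with hKdef
  have hKne : K.Nonempty := ⟨kL, by simp [hKdef, hkLS, hkL.symm, hLdef]⟩
  obtain ⟨ks, hksK, hks⟩ := Finset.exists_mem_eq_sup' hKne (fun k => (Λ k).2)
  have hksS : ks ∈ S := (Finset.mem_filter.mp hksK).1
  have hksL : (Λ ks).1 = L := (Finset.mem_filter.mp hksK).2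
  have hble : ∀ k ∈ K, (Λ k).2 ≤ (Λ ks).2 := fun k hk => by
    rw [← hks]; exact Finset.le_sup' (fun k => (Λ k).2) hk
  -- roots of Q
  have hQ0 : Q ≠ 0 := fun h => by simp [h] at hQdeg
  set Rts : Finset ℂ := Q.roots.toFinset with hRdef
  have hmem : ∀ z : ℂ, z ∈ Rts ↔ Q.eval z = 0 := by
    intro z
    simp [hRdef, Multiset.mem_toFinset, mem_roots, hQ0, IsRoot]
  obtain ⟨z₀, hz₀⟩ := Complex.exists_root hQdeg
  have hRne : Rts.Nonempty := ⟨z₀, (hmem z₀).mpr hz₀⟩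
  set μ : ℝ := Rts.sup' hRne Complex.im with hμdef
  have hμle : ∀ z ∈ Rts, z.im ≤ μ := fun z hz => Finset.le_sup' _ hz
  -- μ > 0
  have hnotreal : ∀ z ∈ Rts, z.im ≠ 0 := by
    intro z hz h0
    have hzre : z = (z.re : ℂ) := by
      apply Complex.ext <;> simp [h0]
    exact hQR z.re (hzre ▸ (hmem z).mp hz)
  have hμpos : 0 < μ := by
    have h1 : z₀ ∈ Rts := (hmem z₀).mpr hz₀
    have h2 : (starRingEnd ℂ) z₀ ∈ Rts := (hmem _).mpr (hconj z₀ hz₀)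
    have h3 := hμle _ h1
    have h4 := hμle _ h2
    have h5 := hnotreal _ h1
    simp only [Complex.conj_im] at h4
    rcases lt_or_gt_of_ne h5 with h | h
    · linarith
    · linarith
  -- roots of maximal imaginary part
  set R' : Finset ℂ := Rts.filter (fun z => z.im = μ) with hR'def
  obtain ⟨zμ, hzμR, hzμ⟩ := Finset.exists_mem_eq_sup' hRne Complex.im
  have hR'ne : R'.Nonempty := ⟨zμ, by simp [hR'def, hzμR, hzμ.symm, hμdef]⟩
  obtain ⟨ρ, hρR', hρ⟩ := Finset.exists_mem_eq_sup' hR'ne Complex.re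
  have hρRts : ρ ∈ Rts := (Finset.mem_filter.mp hρR').1
  have hρim : ρ.im = μ := (Finset.mem_filter.mp hρR').2
  have hρre : ∀ z ∈ R', z.re ≤ ρ.re := fun z hz => by
    rw [← hρ]; exact Finset.le_sup' Complex.re hz
  -- the distinguished point
  set zs : ℂ := (ρ + ((Λ ks).2 : ℂ)) / (L : ℂ) with hzsdef
  have hzs : (L : ℂ) * zs - ((Λ ks).2 : ℂ) = ρ := by
    rw [hzsdef, mul_comm, div_mul_cancel₀ _ hLne]; ring
  have hzsim : zs.im = μ / L := by
    rw [hzsdef]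
    rw [Complex.div_im]
    simp [hρim, Complex.normSq_ofReal]
    field_simp
  have hzsre : zs.re = (ρ.re + (Λ ks).2) / L := by
    rw [hzsdef, Complex.div_re]
    simp [Complex.normSq_ofReal]
    field_simp
  -- Claim A : no other pole at zs
  have claimA : ∀ l ∈ S, l ≠ ks →
      Q.eval (((Λ l).1 : ℂ) * zs - ((Λ l).2 : ℂ)) ≠ 0 := by
    intro l hlS hlne hcontra
    set w : ℂ := ((Λ l).1 : ℂ) * zs - ((Λ l).2 : ℂ) with hwdef
    have hwR : w ∈ Rts := (hmem w).mpr hcontra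
    have hwim : w.im = (Λ l).1 * zs.im := by
      simp [hwdef, Complex.sub_im, Complex.mul_im]
    have hle1 : w.im ≤ μ := hμle _ hwR
    have hge : L ≤ (Λ l).1 := hLle _ hlS
    have heq1 : (Λ l).1 = L := by
      by_contra hne1
      have hlt : L < (Λ l).1 := lt_of_le_of_ne hge (Ne.symm hne1)
      have hdiv : 0 < μ / L := div_pos hμpos hLpos
      have : μ < w.im := by
        rw [hwim, hzsim]
        calc μ = L * (μ / L) := by field_simp
          _ < (Λ l).1 * (μ / L) := mul_lt_mul_of_pos_right hlt hdiv
      linarith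
    have hwim2 : w.im = μ := by
      rw [hwim, hzsim, heq1]
      field_simp
    have hwR' : w ∈ R' := by simp [hR'def, hwR, hwim2]
    have hwre : w.re = ρ.re + (Λ ks).2 - (Λ l).2 := by
      rw [hwdef]
      simp [Complex.sub_re, Complex.mul_re, hzsre, heq1]
      field_simp
    have hlK : l ∈ K := by simp [hKdef, hlS, heq1]
    have hble' := hble l hlK
    have hrele := hρre w hwR'
    have hbeq : (Λ l).2 = (Λ ks).2 := by
      rw [hwre] at hrele
      linarith
    exact hlne (hdist (Prod.ext (heq1.trans hksL.symm) hbeq))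
  -- the polynomial identity
  set G : Polynomial ℂ := ∑ k ∈ S, Polynomial.C (c k) *
      (P.comp (Polynomial.C (((Λ k).1 : ℝ) : ℂ) * Polynomial.X - Polynomial.C (((Λ k).2 : ℝ) : ℂ))) *
      ∏ l ∈ S.erase k,
        Q.comp (Polynomial.C (((Λ l).1 : ℝ) : ℂ) * Polynomial.X - Polynomial.C (((Λ l).2 : ℝ) : ℂ))
      with hGdef
  have hGeval : ∀ z : ℂ, G.eval z = ∑ k ∈ S, c k *
      P.eval (((Λ k).1 : ℂ) * z - ((Λ k).2 : ℂ)) *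
      ∏ l ∈ S.erase k, Q.eval (((Λ l).1 : ℂ) * z - ((Λ l).2 : ℂ)) := by
    intro z
    rw [hGdef, Polynomial.eval_finset_sum]
    refine Finset.sum_congr rfl fun k hk => ?_
    rw [Polynomial.eval_mul, Polynomial.eval_mul, Polynomial.eval_C,
      Polynomial.eval_comp, Polynomial.eval_prod]
    simp [Polynomial.eval_comp]
  have hGR : ∀ x : ℝ, G.eval (x : ℂ) = 0 := by
    intro x
    rw [hGeval]
    have key : ∀ k ∈ S, c k * P.eval (((Λ k).1 : ℂ) * x - ((Λ k).2 : ℂ)) *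
        ∏ l ∈ S.erase k, Q.eval (((Λ l).1 : ℂ) * x - ((Λ l).2 : ℂ)) =
        (c k * (P.eval (((Λ k).1 : ℂ) * x - ((Λ k).2 : ℂ)) /
          Q.eval (((Λ k).1 : ℂ) * x - ((Λ k).2 : ℂ)))) *
        ∏ l ∈ S, Q.eval (((Λ l).1 : ℂ) * x - ((Λ l).2 : ℂ)) := by
      intro k hk
      rw [← Finset.mul_prod_erase S _ hk]
      have hQne : Q.eval (((Λ k).1 : ℂ) * x - ((Λ k).2 : ℂ)) ≠ 0 := by
        have : (((Λ k).1 : ℂ) * x - ((Λ k).2 : ℂ)) = (((Λ k).1 * x - (Λ k).2 : ℝ) : ℂ) := by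
          push_cast; ring
        rw [this]; exact hQR _
      field_simp
    rw [Finset.sum_congr rfl key, ← Finset.sum_mul]
    have hsum : ∑ k ∈ S, c k * (P.eval (((Λ k).1 : ℂ) * x - ((Λ k).2 : ℂ)) /
        Q.eval (((Λ k).1 : ℂ) * x - ((Λ k).2 : ℂ))) = 0 := by
      rw [← hz x]
      rw [hSdef]
      rw [Finset.sum_filter]
      refine Finset.sum_congr rfl fun k _ => ?_
      by_cases h : c k = 0 <;> simp [h]
    rw [hsum, zero_mul]
  have hG0 : G = 0 := by
    apply Polynomial.eq_zero_of_infinite_isRoot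
    apply Set.Infinite.mono (s := Set.range ((↑) : ℝ → ℂ))
    · rintro _ ⟨x, rfl⟩; exact hGR x
    · exact Set.infinite_range_of_injective Complex.ofReal_injective
  -- evaluate at zs
  have hGzs : G.eval zs = 0 := by rw [hG0]; simp
  rw [hGeval] at hGzs
  have hQzs : Q.eval (((Λ ks).1 : ℂ) * zs - ((Λ ks).2 : ℂ)) = 0 := by
    rw [hksL]
    rw [hzs]
    exact (hmem ρ).mp hρRts
  have honly : ∀ k ∈ S, k ≠ ks → c k *
      P.eval (((Λ k).1 : ℂ) * zs - ((Λ k).2 : ℂ)) *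
      ∏ l ∈ S.erase k, Q.eval (((Λ l).1 : ℂ) * zs - ((Λ l).2 : ℂ)) = 0 := by
    intro k hk hkne
    have hksmem : ks ∈ S.erase k := Finset.mem_erase.mpr ⟨Ne.symm hkne, hksS⟩
    rw [Finset.prod_eq_zero hksmem hQzs, mul_zero]
  rw [Finset.sum_eq_single_of_mem ks hksS (fun k hk hkne => honly k hk hkne)] at hGzs
  have hPρ : P.eval ρ ≠ 0 := by
    intro hPz
    obtain ⟨a, b, hab⟩ := hcop
    have := congrArg (Polynomial.eval ρ) hab
    simp only [Polynomial.eval_add, Polynomial.eval_mul, Polynomial.eval_one] at this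
    rw [hPz, (hmem ρ).mp hρRts] at this
    simp at this
  have hprodne : ∏ l ∈ S.erase ks, Q.eval (((Λ l).1 : ℂ) * zs - ((Λ l).2 : ℂ)) ≠ 0 := by
    rw [Finset.prod_ne_zero_iff]
    intro l hl
    exact claimA l (Finset.mem_of_mem_erase hl) (Finset.ne_of_mem_erase hl)
  rw [hksL, hzs] at hGzs
  have hcks : c ks ≠ 0 := by
    have := Finset.mem_filter.mp hksS
    exact this.2
  exact hcks (by
    have := mul_ne_zero (mul_ne_zero hcks hPρ) hprodne
    exact absurd hGzs this)

/-- Every finite wavelet system generated by a nonzero square integrable real rational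
function `p/q` (with `q` nowhere vanishing and `deg p < deg q`) is linearly independent. -/
theorem fws_linearIndependent_rational
    (p q : Polynomial ℝ) (hp : p ≠ 0) (hq : ∀ x : ℝ, q.eval x ≠ 0)
    (hdeg : p.degree < q.degree)
    (φ : ℝ → ℂ) (hφ : ∀ x : ℝ, φ x = ((p.eval x / q.eval x : ℝ) : ℂ))
    (N : ℕ) (hN : 1 ≤ N) (Λ : Fin N → ℝ × ℝ)
    (hpos : ∀ k, 0 < (Λ k).1) (hdist : Function.Injective Λ)
    (c : Fin N → ℂ)
    (hzero : ∀ x : ℝ, ∑ k : Fin N, c k * φ ((Λ k).1 * x - (Λ k).2) = 0) :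
    ∀ k, c k = 0 := by
  classical
  have hq0 : q ≠ 0 := fun h => hq 0 (by simp [h])
  set g : Polynomial ℝ := GCDMonoid.gcd p q with hgdef
  have hg0 : g ≠ 0 := gcd_ne_zero_of_right hq0
  set p₁ : Polynomial ℝ := p / g with hp₁def
  set q₁ : Polynomial ℝ := q / g with hq₁def
  have hpp : g * p₁ = p := EuclideanDomain.mul_div_cancel' hg0 (gcd_dvd_left p q)
  have hqq : g * q₁ = q := EuclideanDomain.mul_div_cancel' hg0 (gcd_dvd_right p q)
  have hp₁ : p₁ ≠ 0 := left_div_gcd_ne_zero hp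
  have hq₁ : q₁ ≠ 0 := right_div_gcd_ne_zero hq0
  have hcop : IsCoprime p₁ q₁ := isCoprime_div_gcd_div_gcd hq0
  have hgx : ∀ x : ℝ, g.eval x ≠ 0 ∧ q₁.eval x ≠ 0 := fun x =>
    mul_ne_zero_iff.mp (by rw [← Polynomial.eval_mul, hqq]; exact hq x)
  have hdeg₁ : p₁.degree < q₁.degree := by
    have h1 : g.degree + p₁.degree < g.degree + q₁.degree := by
      rw [← Polynomial.degree_mul, ← Polynomial.degree_mul, hpp, hqq]; exact hdeg
    have hgb : g.degree ≠ ⊥ := by simpa [Polynomial.degree_eq_bot] using hg0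
    exact (WithBot.add_lt_add_iff_left hgb).mp h1
  set P : Polynomial ℂ := p₁.map (algebraMap ℝ ℂ) with hPdef
  set Q : Polynomial ℂ := q₁.map (algebraMap ℝ ℂ) with hQdef'
  have hcopC : IsCoprime P Q := by
    have := hcop.map (Polynomial.mapRingHom (algebraMap ℝ ℂ))
    simpa using this
  have hPev : ∀ x : ℝ, P.eval (x : ℂ) = ((p₁.eval x : ℝ) : ℂ) := by
    intro x
    rw [show ((x : ℝ) : ℂ) = algebraMap ℝ ℂ x from rfl, hPdef,
      Polynomial.eval_map, Polynomial.eval₂_at_apply]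
    rfl
  have hQev : ∀ x : ℝ, Q.eval (x : ℂ) = ((q₁.eval x : ℝ) : ℂ) := by
    intro x
    rw [show ((x : ℝ) : ℂ) = algebraMap ℝ ℂ x from rfl, hQdef',
      Polynomial.eval_map, Polynomial.eval₂_at_apply]
    rfl
  have hQR : ∀ x : ℝ, Q.eval (x : ℂ) ≠ 0 := by
    intro x h
    rw [hQev] at h
    exact (hgx x).2 (by exact_mod_cast h)
  have hQdeg : 0 < Q.degree := by
    rw [hQdef', Polynomial.degree_map]
    calc (0 : WithBot ℕ) ≤ p₁.degree := Polynomial.zero_le_degree_iff.mpr hp₁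
      _ < q₁.degree := hdeg₁
  have haev : ∀ z : ℂ, Q.eval z = aeval z q₁ := by
    intro z
    rw [hQdef', Polynomial.eval_map, Polynomial.aeval_def]
  have hconj : ∀ z : ℂ, Q.eval z = 0 → Q.eval ((starRingEnd ℂ) z) = 0 := by
    intro z hz
    rw [haev] at hz ⊢
    rw [Polynomial.aeval_conj, hz, map_zero]
  refine fws_core P Q hcopC hQR hQdeg hconj N Λ hpos hdist c ?_
  intro x
  rw [← hzero x]
  refine Finset.sum_congr rfl fun k _ => ?_
  congr 1
  rw [hφ]
  have hu : ((Λ k).1 : ℂ) * (x : ℂ) - ((Λ k).2 : ℂ)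
      = (((Λ k).1 * x - (Λ k).2 : ℝ) : ℂ) := by push_cast; ring
  rw [hu]
  set u : ℝ := (Λ k).1 * x - (Λ k).2 with hudef
  rw [hPev, hQev, ← Complex.ofReal_div]
  congr 1
  rw [← hpp, ← hqq, Polynomial.eval_mul, Polynomial.eval_mul,
    mul_div_mul_left _ _ (hgx u).1]
end
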